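/- arXiv:2306.15867 — 2 statements merged into one kernel-verified Lean document; each statement's English description precedes it below -/
import Mathlib

section
/- Suppose u ∈ C⁴(Ω̄) satisfies u = 0 and ∇u·𝐧 = 0 on ∂Ω, set f = ε²Δ²u − Δu, and suppose u_N = (u₀, u_b, 𝐮_g) ∈ V_N⁰ satisfies a(u_N, v) = (f, v₀)_Ω for all v ∈ V_N⁰. Set e_N = Q_N u − u_N. Then for every v = (v₀, v_b, 𝐯_g) ∈ V_N⁰: a(e_N, v) = l₁(u,v) − l₂(u,v) + l₃(u,v) + s(Q_N u, v), where l₁(u,v) = Σ_{T∈𝒯_N} ε² ⟨Δu − Q₀Δu, (∇v₀ − 𝐯_g)·𝐧⟩_{∂T}, l₂(u,v) = Σ_{T∈𝒯_N} ε² ⟨∇(Δu − Q₀Δu)·𝐧, v₀ − v_b⟩_{∂T}, l₃(u,v) = Σ_{T∈𝒯_N} ⟨(∇u − 𝐐_N∇u)·𝐧, v₀ − v_b⟩_{∂T}, and 𝐐_N is the componentwise elementwise L²(T)-orthogonal projection onto Q_k(T)². -/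
open MeasureTheory Real

noncomputable section

/-- `Q_k`: real polynomials in two variables of degree at most `k` in each variable. -/
def IsQk (k : ℕ) (v : ℝ → ℝ → ℝ) : Prop :=
  ∃ p : MvPolynomial (Fin 2) ℝ, (∀ i, p.degreeOf i ≤ k) ∧
    ∀ x y : ℝ, v x y = MvPolynomial.eval ![x, y] p

/-- `P_k`: real polynomials in one variable of degree at most `k`. -/
def IsPk (k : ℕ) (f : ℝ → ℝ) : Prop :=
  ∃ p : Polynomial ℝ, p.natDegree ≤ k ∧ ∀ x : ℝ, f x = p.eval x

/-- Partial derivative in the first variable. -/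
def pd1 (w : ℝ → ℝ → ℝ) : ℝ → ℝ → ℝ := fun x y => deriv (fun t => w t y) x

/-- Partial derivative in the second variable. -/
def pd2 (w : ℝ → ℝ → ℝ) : ℝ → ℝ → ℝ := fun x y => deriv (fun t => w x t) y

/-- Laplacian. -/
def lapl (w : ℝ → ℝ → ℝ) : ℝ → ℝ → ℝ :=
  fun x y => pd1 (pd1 w) x y + pd2 (pd2 w) x y

/-- L² inner product over the rectangle `[x0,x1] × [y0,y1]`. -/
def ipT (x0 x1 y0 y1 : ℝ) (f g : ℝ → ℝ → ℝ) : ℝ :=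
  ∫ x in x0..x1, ∫ y in y0..y1, f x y * g x y

/-- Squared L² norm over the rectangle `[x0,x1] × [y0,y1]`. -/
def normSqT (x0 x1 y0 y1 : ℝ) (w : ℝ → ℝ → ℝ) : ℝ := ipT x0 x1 y0 y1 w w

/-- Squared L² norm over the two edges parallel to the x-axis (`∂T₁`). -/
def normSqE1 (x0 x1 y0 y1 : ℝ) (w : ℝ → ℝ → ℝ) : ℝ :=
  ∫ x in x0..x1, ((w x y0) ^ 2 + (w x y1) ^ 2)

/-- Squared L² norm over the two edges parallel to the y-axis (`∂T₂`). -/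
def normSqE2 (x0 x1 y0 y1 : ℝ) (w : ℝ → ℝ → ℝ) : ℝ :=
  ∫ y in y0..y1, ((w x0 y) ^ 2 + (w x1 y) ^ 2)

/-- `P` is the L²(T)-orthogonal projection of `φ` onto `Q_k(T)`. -/
def IsProjT (k : ℕ) (x0 x1 y0 y1 : ℝ) (φ P : ℝ → ℝ → ℝ) : Prop :=
  IsQk k P ∧ ∀ q : ℝ → ℝ → ℝ, IsQk k q →
    ipT x0 x1 y0 y1 (fun x y => φ x y - P x y) q = 0

/-- `g` is the L²(e)-orthogonal projection of `f` onto `P_k(e)`, for an edge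
parametrized by `[a,b]`. -/
def IsProjE (k : ℕ) (a b : ℝ) (f g : ℝ → ℝ) : Prop :=
  IsPk k g ∧ ∀ q : ℝ → ℝ, IsPk k q → (∫ x in a..b, (f x - g x) * q x) = 0

/-- Mixed partial derivative `∂₁^i ∂₂^j`. -/
def pdM (i j : ℕ) (w : ℝ → ℝ → ℝ) : ℝ → ℝ → ℝ := pd1^[i] (pd2^[j] w)

/-- The 1D Shishkin mesh points on `[0,1]` with transition parameter `lam`:
`[0,lam]` is divided into `N/4` equal subintervals, `[lam, 1-lam]` into `N/2`,
and `[1-lam, 1]` into `N/4`. -/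
def meshPt (N : ℕ) (lam : ℝ) (i : ℕ) : ℝ :=
  if i ≤ N / 4 then (i : ℝ) * (4 * lam / N)
  else if i ≤ 3 * (N / 4) then lam + ((i : ℝ) - (↑(N / 4) : ℝ)) * (2 * (1 - 2 * lam) / N)
  else 1 - lam + ((i : ℝ) - (↑(3 * (N / 4)) : ℝ)) * (4 * lam / N)

/-- The Shishkin transition parameter `λ = α ε ln N` with `α = k + 1`. -/
def shLam (k N : ℕ) (ε : ℝ) : ℝ := ((k : ℝ) + 1) * ε * Real.log N

/-- The Shishkin mesh points for the parameters `k`, `N`, `ε`. -/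
def shPt (k N : ℕ) (ε : ℝ) (i : ℕ) : ℝ := meshPt N (shLam k N ε) i

/-- The fine mesh width `h = 4λ/N`. -/
def shH (k N : ℕ) (ε : ℝ) : ℝ := 4 * shLam k N ε / N

/-- The coarse mesh width `H = 2(1-2λ)/N`. -/
def shHc (k N : ℕ) (ε : ℝ) : ℝ := 2 * (1 - 2 * shLam k N ε) / N

/-- `w` is `C^{k+1}` (as a function of two variables). -/
def SmoothC (k : ℕ) (w : ℝ → ℝ → ℝ) : Prop :=
  ContDiff ℝ (k + 1) (fun p : ℝ × ℝ => w p.1 p.2)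

/-- The layer decomposition `u = S + E₁ + E₂ + E₃ + E₄ + E₁₂ + E₂₃ + E₃₄ + E₄₁`
on `Ω̄ = [0,1]²`, together with the derivative bounds of Assumption 2.1. -/
structure ShishkinDecomp (k : ℕ) (C₀ ε : ℝ)
    (u S E1 E2 E3 E4 E12 E23 E34 E41 : ℝ → ℝ → ℝ) : Prop where
  smooth_u : SmoothC k u
  smooth_S : SmoothC k S
  smooth_E1 : SmoothC k E1
  smooth_E2 : SmoothC k E2
  smooth_E3 : SmoothC k E3
  smooth_E4 : SmoothC k E4
  smooth_E12 : SmoothC k E12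
  smooth_E23 : SmoothC k E23
  smooth_E34 : SmoothC k E34
  smooth_E41 : SmoothC k E41
  sum_eq : ∀ x ∈ Set.Icc (0:ℝ) 1, ∀ y ∈ Set.Icc (0:ℝ) 1,
    u x y = S x y + E1 x y + E2 x y + E3 x y + E4 x y
      + E12 x y + E23 x y + E34 x y + E41 x y
  bound_S : ∀ i j : ℕ, i + j ≤ k + 1 → ∀ x ∈ Set.Icc (0:ℝ) 1, ∀ y ∈ Set.Icc (0:ℝ) 1,
    |pdM i j S x y| ≤ C₀
  bound_E1 : ∀ i j : ℕ, i + j ≤ k + 1 → ∀ x ∈ Set.Icc (0:ℝ) 1, ∀ y ∈ Set.Icc (0:ℝ) 1,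
    |pdM i j E1 x y| ≤ C₀ * ε ^ ((1 : ℝ) - j) * Real.exp (-y / ε)
  bound_E2 : ∀ i j : ℕ, i + j ≤ k + 1 → ∀ x ∈ Set.Icc (0:ℝ) 1, ∀ y ∈ Set.Icc (0:ℝ) 1,
    |pdM i j E2 x y| ≤ C₀ * ε ^ ((1 : ℝ) - i) * Real.exp (-(1 - x) / ε)
  bound_E3 : ∀ i j : ℕ, i + j ≤ k + 1 → ∀ x ∈ Set.Icc (0:ℝ) 1, ∀ y ∈ Set.Icc (0:ℝ) 1,
    |pdM i j E3 x y| ≤ C₀ * ε ^ ((1 : ℝ) - j) * Real.exp (-(1 - y) / ε)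
  bound_E4 : ∀ i j : ℕ, i + j ≤ k + 1 → ∀ x ∈ Set.Icc (0:ℝ) 1, ∀ y ∈ Set.Icc (0:ℝ) 1,
    |pdM i j E4 x y| ≤ C₀ * ε ^ ((1 : ℝ) - i) * Real.exp (-x / ε)
  bound_E12 : ∀ i j : ℕ, i + j ≤ k + 1 → ∀ x ∈ Set.Icc (0:ℝ) 1, ∀ y ∈ Set.Icc (0:ℝ) 1,
    |pdM i j E12 x y| ≤ C₀ * ε ^ ((1 : ℝ) - i - j) * Real.exp (-(1 - x) / ε) * Real.exp (-y / ε)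
  bound_E23 : ∀ i j : ℕ, i + j ≤ k + 1 → ∀ x ∈ Set.Icc (0:ℝ) 1, ∀ y ∈ Set.Icc (0:ℝ) 1,
    |pdM i j E23 x y| ≤ C₀ * ε ^ ((1 : ℝ) - i - j) * Real.exp (-(1 - x) / ε) * Real.exp (-(1 - y) / ε)
  bound_E34 : ∀ i j : ℕ, i + j ≤ k + 1 → ∀ x ∈ Set.Icc (0:ℝ) 1, ∀ y ∈ Set.Icc (0:ℝ) 1,
    |pdM i j E34 x y| ≤ C₀ * ε ^ ((1 : ℝ) - i - j) * Real.exp (-x / ε) * Real.exp (-(1 - y) / ε)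
  bound_E41 : ∀ i j : ℕ, i + j ≤ k + 1 → ∀ x ∈ Set.Icc (0:ℝ) 1, ∀ y ∈ Set.Icc (0:ℝ) 1,
    |pdM i j E41 x y| ≤ C₀ * ε ^ ((1 : ℝ) - i - j) * Real.exp (-x / ε) * Real.exp (-y / ε)

/-- A discrete weak function on the `N × N` tensor-product mesh with 1D mesh
points `X`. `v0 i j` is the interior value on the element
`[X i, X (i+1)] × [X j, X (j+1)]` (for `i, j < N`); `vbH i j` (resp. `vbV i j`)
is the boundary value on the horizontal edge `[X i, X (i+1)] × {X j}` (for
`i < N`, `j ≤ N`) (resp. the vertical edge `{X i} × [X j, X (j+1)]`, for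
`i ≤ N`, `j < N`), as a function of the running coordinate; `vgH1, vgH2`
(resp. `vgV1, vgV2`) are the two components of the gradient value `𝐯_g`
on horizontal (resp. vertical) edges. -/
structure WGFun where
  v0 : ℕ → ℕ → ℝ → ℝ → ℝ
  vbH : ℕ → ℕ → ℝ → ℝ
  vbV : ℕ → ℕ → ℝ → ℝ
  vgH1 : ℕ → ℕ → ℝ → ℝ
  vgH2 : ℕ → ℕ → ℝ → ℝ
  vgV1 : ℕ → ℕ → ℝ → ℝ
  vgV2 : ℕ → ℕ → ℝ → ℝ

/-- Componentwise difference of discrete weak functions. -/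
def WGFun.sub (u v : WGFun) : WGFun where
  v0 := fun i j x y => u.v0 i j x y - v.v0 i j x y
  vbH := fun i j x => u.vbH i j x - v.vbH i j x
  vbV := fun i j y => u.vbV i j y - v.vbV i j y
  vgH1 := fun i j x => u.vgH1 i j x - v.vgH1 i j x
  vgH2 := fun i j x => u.vgH2 i j x - v.vgH2 i j x
  vgV1 := fun i j y => u.vgV1 i j y - v.vgV1 i j y
  vgV2 := fun i j y => u.vgV2 i j y - v.vgV2 i j y

/-- Membership in the weak Galerkin space `V_N`. -/
def MemVN (k N : ℕ) (v : WGFun) : Prop :=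
  (∀ i < N, ∀ j < N, IsQk k (v.v0 i j)) ∧
  (∀ i < N, ∀ j ≤ N, IsPk k (v.vbH i j) ∧ IsPk k (v.vgH1 i j) ∧ IsPk k (v.vgH2 i j)) ∧
  (∀ i ≤ N, ∀ j < N, IsPk k (v.vbV i j) ∧ IsPk k (v.vgV1 i j) ∧ IsPk k (v.vgV2 i j))

/-- Membership in `V_N⁰`: elements of `V_N` with `v_b = 0` and `𝐯_g·𝐧 = 0` on
all edges contained in `∂Ω`. -/
def MemVN0 (k N : ℕ) (v : WGFun) : Prop :=
  MemVN k N v ∧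
  (∀ i < N, (∀ x : ℝ, v.vbH i 0 x = 0) ∧ (∀ x : ℝ, v.vbH i N x = 0) ∧
            (∀ x : ℝ, v.vgH2 i 0 x = 0) ∧ (∀ x : ℝ, v.vgH2 i N x = 0)) ∧
  (∀ j < N, (∀ y : ℝ, v.vbV 0 j y = 0) ∧ (∀ y : ℝ, v.vbV N j y = 0) ∧
            (∀ y : ℝ, v.vgV1 0 j y = 0) ∧ (∀ y : ℝ, v.vgV1 N j y = 0))

/-- `D i j` is the discrete weak Laplacian `Δ_w v` of `v` on the element
`[X i, X (i+1)] × [X j, X (j+1)]`, for all `i, j < N`, characterized by the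
defining identity (outward normals: bottom `(0,-1)`, top `(0,1)`, left `(-1,0)`,
right `(1,0)`). -/
def IsWeakLap (k N : ℕ) (X : ℕ → ℝ) (v : WGFun) (D : ℕ → ℕ → ℝ → ℝ → ℝ) : Prop :=
  ∀ i < N, ∀ j < N, IsQk k (D i j) ∧
    ∀ φ : ℝ → ℝ → ℝ, IsQk k φ →
      ipT (X i) (X (i+1)) (X j) (X (j+1)) (D i j) φ =
        ipT (X i) (X (i+1)) (X j) (X (j+1)) (v.v0 i j) (lapl φ)
          - ((∫ x in (X i)..(X (i+1)), v.vbH i j x * (-(pd2 φ x (X j))))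
            + (∫ x in (X i)..(X (i+1)), v.vbH i (j+1) x * pd2 φ x (X (j+1)))
            + (∫ y in (X j)..(X (j+1)), v.vbV i j y * (-(pd1 φ (X i) y)))
            + (∫ y in (X j)..(X (j+1)), v.vbV (i+1) j y * pd1 φ (X (i+1)) y))
          + ((∫ x in (X i)..(X (i+1)), (-(v.vgH2 i j x)) * φ x (X j))
            + (∫ x in (X i)..(X (i+1)), v.vgH2 i (j+1) x * φ x (X (j+1)))
            + (∫ y in (X j)..(X (j+1)), (-(v.vgV1 i j y)) * φ (X i) y)
            + (∫ y in (X j)..(X (j+1)), v.vgV1 (i+1) j y * φ (X (i+1)) y))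

/-- `(G1 i j, G2 i j)` is the discrete weak gradient `∇_w v` of `v` on the
element `[X i, X (i+1)] × [X j, X (j+1)]`, for all `i, j < N`, characterized by
the defining identity. -/
def IsWeakGrad (k N : ℕ) (X : ℕ → ℝ) (v : WGFun) (G1 G2 : ℕ → ℕ → ℝ → ℝ → ℝ) : Prop :=
  ∀ i < N, ∀ j < N, IsQk k (G1 i j) ∧ IsQk k (G2 i j) ∧
    ∀ q1 q2 : ℝ → ℝ → ℝ, IsQk k q1 → IsQk k q2 →
      ipT (X i) (X (i+1)) (X j) (X (j+1)) (G1 i j) q1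
        + ipT (X i) (X (i+1)) (X j) (X (j+1)) (G2 i j) q2 =
        -(ipT (X i) (X (i+1)) (X j) (X (j+1)) (v.v0 i j)
            (fun x y => pd1 q1 x y + pd2 q2 x y))
          + ((∫ x in (X i)..(X (i+1)), v.vbH i j x * (-(q2 x (X j))))
            + (∫ x in (X i)..(X (i+1)), v.vbH i (j+1) x * q2 x (X (j+1)))
            + (∫ y in (X j)..(X (j+1)), v.vbV i j y * (-(q1 (X i) y)))
            + (∫ y in (X j)..(X (j+1)), v.vbV (i+1) j y * q1 (X (i+1)) y))

/-- The boundary pairing `⟨u₀ − u_b, v₀ − v_b⟩_{∂T}` on the element `(i,j)`. -/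
def sPair (X : ℕ → ℝ) (u v : WGFun) (i j : ℕ) : ℝ :=
  (∫ x in (X i)..(X (i+1)),
    (u.v0 i j x (X j) - u.vbH i j x) * (v.v0 i j x (X j) - v.vbH i j x))
  + (∫ x in (X i)..(X (i+1)),
    (u.v0 i j x (X (j+1)) - u.vbH i (j+1) x) * (v.v0 i j x (X (j+1)) - v.vbH i (j+1) x))
  + (∫ y in (X j)..(X (j+1)),
    (u.v0 i j (X i) y - u.vbV i j y) * (v.v0 i j (X i) y - v.vbV i j y))
  + (∫ y in (X j)..(X (j+1)),
    (u.v0 i j (X (i+1)) y - u.vbV (i+1) j y) * (v.v0 i j (X (i+1)) y - v.vbV (i+1) j y))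

/-- The boundary pairing `⟨∇u₀ − 𝐮_g, ∇v₀ − 𝐯_g⟩_{∂T}` on the element `(i,j)`. -/
def sPairG (X : ℕ → ℝ) (u v : WGFun) (i j : ℕ) : ℝ :=
  (∫ x in (X i)..(X (i+1)),
    ((pd1 (u.v0 i j) x (X j) - u.vgH1 i j x) * (pd1 (v.v0 i j) x (X j) - v.vgH1 i j x)
      + (pd2 (u.v0 i j) x (X j) - u.vgH2 i j x) * (pd2 (v.v0 i j) x (X j) - v.vgH2 i j x)))
  + (∫ x in (X i)..(X (i+1)),
    ((pd1 (u.v0 i j) x (X (j+1)) - u.vgH1 i (j+1) x) * (pd1 (v.v0 i j) x (X (j+1)) - v.vgH1 i (j+1) x)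
      + (pd2 (u.v0 i j) x (X (j+1)) - u.vgH2 i (j+1) x) * (pd2 (v.v0 i j) x (X (j+1)) - v.vgH2 i (j+1) x)))
  + (∫ y in (X j)..(X (j+1)),
    ((pd1 (u.v0 i j) (X i) y - u.vgV1 i j y) * (pd1 (v.v0 i j) (X i) y - v.vgV1 i j y)
      + (pd2 (u.v0 i j) (X i) y - u.vgV2 i j y) * (pd2 (v.v0 i j) (X i) y - v.vgV2 i j y)))
  + (∫ y in (X j)..(X (j+1)),
    ((pd1 (u.v0 i j) (X (i+1)) y - u.vgV1 (i+1) j y) * (pd1 (v.v0 i j) (X (i+1)) y - v.vgV1 (i+1) j y)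
      + (pd2 (u.v0 i j) (X (i+1)) y - u.vgV2 (i+1) j y) * (pd2 (v.v0 i j) (X (i+1)) y - v.vgV2 (i+1) j y)))

/-- The stabilizer `s(u,v)` with fine mesh width `h` and coarse mesh width `H`. -/
def stab (N : ℕ) (X : ℕ → ℝ) (ε h H : ℝ) (u v : WGFun) : ℝ :=
  ∑ i ∈ Finset.range N, ∑ j ∈ Finset.range N,
    (ε ^ 2 * h⁻¹ * sPairG X u v i j
      + (ε ^ 2 * (h ^ 2)⁻¹ * H⁻¹ + H⁻¹) * sPair X u v i j)

/-- The bilinear form `a(u,v)`, expressed in terms of the discrete weak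
Laplacians `Du, Dv` and weak gradients `(Gu1,Gu2), (Gv1,Gv2)` of `u` and `v`. -/
def aForm (N : ℕ) (X : ℕ → ℝ) (ε h H : ℝ) (u v : WGFun)
    (Du Dv Gu1 Gu2 Gv1 Gv2 : ℕ → ℕ → ℝ → ℝ → ℝ) : ℝ :=
  (∑ i ∈ Finset.range N, ∑ j ∈ Finset.range N,
    (ε ^ 2 * ipT (X i) (X (i+1)) (X j) (X (j+1)) (Du i j) (Dv i j)
      + ipT (X i) (X (i+1)) (X j) (X (j+1)) (Gu1 i j) (Gv1 i j)
      + ipT (X i) (X (i+1)) (X j) (X (j+1)) (Gu2 i j) (Gv2 i j)))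
  + stab N X ε h H u v

/-- `Qu = Q_N u = (Q₀u, Q_b u, 𝐐_g(∇u))`: all components are the corresponding
elementwise / edgewise L²-orthogonal projections of `u`, `u|_e` and `∇u|_e`. -/
def IsQNProj (k N : ℕ) (X : ℕ → ℝ) (u : ℝ → ℝ → ℝ) (Qu : WGFun) : Prop :=
  (∀ i < N, ∀ j < N,
    IsProjT k (X i) (X (i+1)) (X j) (X (j+1)) u (Qu.v0 i j)) ∧
  (∀ i < N, ∀ j ≤ N,
    IsProjE k (X i) (X (i+1)) (fun x => u x (X j)) (Qu.vbH i j) ∧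
    IsProjE k (X i) (X (i+1)) (fun x => pd1 u x (X j)) (Qu.vgH1 i j) ∧
    IsProjE k (X i) (X (i+1)) (fun x => pd2 u x (X j)) (Qu.vgH2 i j)) ∧
  (∀ i ≤ N, ∀ j < N,
    IsProjE k (X j) (X (j+1)) (fun y => u (X i) y) (Qu.vbV i j) ∧
    IsProjE k (X j) (X (j+1)) (fun y => pd1 u (X i) y) (Qu.vgV1 i j) ∧
    IsProjE k (X j) (X (j+1)) (fun y => pd2 u (X i) y) (Qu.vgV2 i j))

/-- `l₁(u,v) = Σ_T ε² ⟨Δu − Q₀Δu, (∇v₀ − 𝐯_g)·𝐧⟩_{∂T}`, where `P i j = Q₀Δu` on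
the element `(i,j)`. -/
def lForm1 (N : ℕ) (X : ℕ → ℝ) (ε : ℝ) (u : ℝ → ℝ → ℝ)
    (P : ℕ → ℕ → ℝ → ℝ → ℝ) (v : WGFun) : ℝ :=
  ∑ i ∈ Finset.range N, ∑ j ∈ Finset.range N, ε ^ 2 *
    ((∫ x in (X i)..(X (i+1)),
        (lapl u x (X j) - P i j x (X j)) * (-(pd2 (v.v0 i j) x (X j) - v.vgH2 i j x)))
      + (∫ x in (X i)..(X (i+1)),
        (lapl u x (X (j+1)) - P i j x (X (j+1)))
          * (pd2 (v.v0 i j) x (X (j+1)) - v.vgH2 i (j+1) x))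
      + (∫ y in (X j)..(X (j+1)),
        (lapl u (X i) y - P i j (X i) y) * (-(pd1 (v.v0 i j) (X i) y - v.vgV1 i j y)))
      + (∫ y in (X j)..(X (j+1)),
        (lapl u (X (i+1)) y - P i j (X (i+1)) y)
          * (pd1 (v.v0 i j) (X (i+1)) y - v.vgV1 (i+1) j y)))

/-- `l₂(u,v) = Σ_T ε² ⟨∇(Δu − Q₀Δu)·𝐧, v₀ − v_b⟩_{∂T}`, where `P i j = Q₀Δu` on
the element `(i,j)`. -/
def lForm2 (N : ℕ) (X : ℕ → ℝ) (ε : ℝ) (u : ℝ → ℝ → ℝ)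
    (P : ℕ → ℕ → ℝ → ℝ → ℝ) (v : WGFun) : ℝ :=
  ∑ i ∈ Finset.range N, ∑ j ∈ Finset.range N, ε ^ 2 *
    ((∫ x in (X i)..(X (i+1)),
        (-(pd2 (fun a b => lapl u a b - P i j a b) x (X j)))
          * (v.v0 i j x (X j) - v.vbH i j x))
      + (∫ x in (X i)..(X (i+1)),
        (pd2 (fun a b => lapl u a b - P i j a b) x (X (j+1)))
          * (v.v0 i j x (X (j+1)) - v.vbH i (j+1) x))
      + (∫ y in (X j)..(X (j+1)),
        (-(pd1 (fun a b => lapl u a b - P i j a b) (X i) y))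
          * (v.v0 i j (X i) y - v.vbV i j y))
      + (∫ y in (X j)..(X (j+1)),
        (pd1 (fun a b => lapl u a b - P i j a b) (X (i+1)) y)
          * (v.v0 i j (X (i+1)) y - v.vbV (i+1) j y)))

/-- `l₃(u,v) = Σ_T ⟨(∇u − 𝐐_N∇u)·𝐧, v₀ − v_b⟩_{∂T}`, where `(P1 i j, P2 i j) =
𝐐_N(∇u)` on the element `(i,j)`. -/
def lForm3 (N : ℕ) (X : ℕ → ℝ) (u : ℝ → ℝ → ℝ)
    (P1 P2 : ℕ → ℕ → ℝ → ℝ → ℝ) (v : WGFun) : ℝ :=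
  ∑ i ∈ Finset.range N, ∑ j ∈ Finset.range N,
    ((∫ x in (X i)..(X (i+1)),
        (-(pd2 u x (X j) - P2 i j x (X j))) * (v.v0 i j x (X j) - v.vbH i j x))
      + (∫ x in (X i)..(X (i+1)),
        (pd2 u x (X (j+1)) - P2 i j x (X (j+1))) * (v.v0 i j x (X (j+1)) - v.vbH i (j+1) x))
      + (∫ y in (X j)..(X (j+1)),
        (-(pd1 u (X i) y - P1 i j (X i) y)) * (v.v0 i j (X i) y - v.vbV i j y))
      + (∫ y in (X j)..(X (j+1)),
        (pd1 u (X (i+1)) y - P1 i j (X (i+1)) y) * (v.v0 i j (X (i+1)) y - v.vbV (i+1) j y)))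

namespace WGaux

open Finset

/-- coefficient representation of a Q_k function -/
def QkRep (k : ℕ) (v : ℝ → ℝ → ℝ) : Prop :=
  ∃ c : ℕ → ℕ → ℝ, ∀ x y : ℝ, v x y =
    ∑ i ∈ Finset.range (k+1), ∑ j ∈ Finset.range (k+1), c i j * x ^ i * y ^ j

def e2 (i j : ℕ) : Fin 2 →₀ ℕ := Finsupp.single 0 i + Finsupp.single 1 j

lemma e2_apply0 (i j : ℕ) : e2 i j 0 = i := by simp [e2]
lemma e2_apply1 (i j : ℕ) : e2 i j 1 = j := by simp [e2]

lemma isQk_rep {k : ℕ} {v : ℝ → ℝ → ℝ} (h : IsQk k v) : QkRep k v := by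
  obtain ⟨p, hdeg, hval⟩ := h
  refine ⟨fun i j => p.coeff (e2 i j), fun x y => ?_⟩
  rw [hval x y, MvPolynomial.eval_eq']
  have key : p.support ⊆ (Finset.range (k+1) ×ˢ Finset.range (k+1)).image
      (fun q : ℕ × ℕ => e2 q.1 q.2) := by
    intro d hd
    refine Finset.mem_image.2 ⟨(d 0, d 1), ?_, ?_⟩
    · have h0 : d 0 ≤ p.degreeOf 0 := by
        rw [MvPolynomial.degreeOf_eq_sup]; exact Finset.le_sup (f := fun m => m 0) hd
      have h1 : d 1 ≤ p.degreeOf 1 := by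
        rw [MvPolynomial.degreeOf_eq_sup]; exact Finset.le_sup (f := fun m => m 1) hd
      exact Finset.mem_product.2 ⟨Finset.mem_range.2 (Nat.lt_succ_of_le (h0.trans (hdeg 0))),
        Finset.mem_range.2 (Nat.lt_succ_of_le (h1.trans (hdeg 1)))⟩
    · ext a
      fin_cases a <;> simp [e2]
  calc ∑ d ∈ p.support, p.coeff d * ∏ i, ![x,y] i ^ d i
      = ∑ d ∈ (Finset.range (k+1) ×ˢ Finset.range (k+1)).image
          (fun q : ℕ × ℕ => e2 q.1 q.2), p.coeff d * ∏ i, ![x,y] i ^ d i := by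
        refine Finset.sum_subset key ?_
        intro d _ hd
        rw [MvPolynomial.notMem_support_iff.1 hd, zero_mul]
    _ = ∑ q ∈ Finset.range (k+1) ×ˢ Finset.range (k+1),
          p.coeff (e2 q.1 q.2) * ∏ i, ![x,y] i ^ (e2 q.1 q.2) i := by
        refine Finset.sum_image ?_
        intro a _ b _ hab
        have h0 := congrArg (fun f : Fin 2 →₀ ℕ => f 0) hab
        have h1 := congrArg (fun f : Fin 2 →₀ ℕ => f 1) hab
        simp only [e2_apply0, e2_apply1] at h0 h1
        exact Prod.ext h0 h1
    _ = ∑ i ∈ Finset.range (k+1), ∑ j ∈ Finset.range (k+1),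
          p.coeff (e2 i j) * x ^ i * y ^ j := by
        rw [Finset.sum_product]
        refine Finset.sum_congr rfl fun i _ => Finset.sum_congr rfl fun j _ => ?_
        rw [Fin.prod_univ_two, e2_apply0, e2_apply1]
        simp [mul_assoc]

lemma rep_isQk {k : ℕ} {v : ℝ → ℝ → ℝ} (h : QkRep k v) : IsQk k v := by
  obtain ⟨c, hc⟩ := h
  refine ⟨∑ i ∈ Finset.range (k+1), ∑ j ∈ Finset.range (k+1),
    MvPolynomial.monomial (e2 i j) (c i j), ?_, ?_⟩
  · intro a
    refine le_trans (MvPolynomial.degreeOf_sum_le _ _ _) (Finset.sup_le fun i hi => ?_)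
    refine le_trans (MvPolynomial.degreeOf_sum_le _ _ _) (Finset.sup_le fun j hj => ?_)
    have hmon : (MvPolynomial.monomial (e2 i j) (c i j)).degreeOf a ≤ e2 i j a := by
      rw [MvPolynomial.degreeOf_le_iff]
      intro m hm
      rw [MvPolynomial.support_monomial] at hm
      by_cases hc0 : c i j = 0
      · simp [hc0] at hm
      · simp [hc0] at hm; subst hm; exact le_rfl
    have hik := Nat.lt_succ_iff.1 (Finset.mem_range.1 hi)
    have hjk := Nat.lt_succ_iff.1 (Finset.mem_range.1 hj)
    refine hmon.trans ?_
    fin_cases a <;> simp [e2] <;> omega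
  · intro x y
    rw [hc x y]
    rw [map_sum]
    refine Finset.sum_congr rfl fun i _ => ?_
    rw [map_sum]
    refine Finset.sum_congr rfl fun j _ => ?_
    rw [MvPolynomial.eval_monomial, Finsupp.prod_fintype _ _ (fun a => pow_zero _),
      Fin.prod_univ_two, e2_apply0, e2_apply1]
    simp [mul_assoc]

end WGaux
namespace WGaux

lemma rep_zero (k : ℕ) : QkRep k (fun _ _ => 0) := ⟨fun _ _ => 0, by simp⟩

lemma rep_add {k : ℕ} {v w : ℝ → ℝ → ℝ} (hv : QkRep k v) (hw : QkRep k w) :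
    QkRep k (fun x y => v x y + w x y) := by
  obtain ⟨c, hc⟩ := hv; obtain ⟨c', hc'⟩ := hw
  refine ⟨fun i j => c i j + c' i j, fun x y => ?_⟩
  simp only []
  rw [hc, hc', ← Finset.sum_add_distrib]
  refine Finset.sum_congr rfl fun i _ => ?_
  rw [← Finset.sum_add_distrib]
  exact Finset.sum_congr rfl fun j _ => by ring

lemma rep_hasDerivAt1 {k : ℕ} {c : ℕ → ℕ → ℝ} {v : ℝ → ℝ → ℝ}
    (h : ∀ x y : ℝ, v x y = ∑ i ∈ Finset.range (k+1), ∑ j ∈ Finset.range (k+1),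
      c i j * x ^ i * y ^ j) (x y : ℝ) :
    HasDerivAt (fun t => v t y)
      (∑ i ∈ Finset.range (k+1), ∑ j ∈ Finset.range (k+1),
        c i j * ((i : ℝ) * x ^ (i - 1)) * y ^ j) x := by
  have hfun : (fun t => v t y) = fun t => ∑ i ∈ Finset.range (k+1), ∑ j ∈ Finset.range (k+1),
      c i j * t ^ i * y ^ j := funext fun t => h t y
  rw [hfun]
  refine HasDerivAt.fun_sum fun i _ => HasDerivAt.fun_sum fun j _ => ?_
  exact ((hasDerivAt_pow i x).const_mul (c i j)).mul_const (y ^ j)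

lemma rep_hasDerivAt2 {k : ℕ} {c : ℕ → ℕ → ℝ} {v : ℝ → ℝ → ℝ}
    (h : ∀ x y : ℝ, v x y = ∑ i ∈ Finset.range (k+1), ∑ j ∈ Finset.range (k+1),
      c i j * x ^ i * y ^ j) (x y : ℝ) :
    HasDerivAt (fun t => v x t)
      (∑ i ∈ Finset.range (k+1), ∑ j ∈ Finset.range (k+1),
        (c i j * x ^ i) * ((j : ℝ) * y ^ (j - 1))) y := by
  have hfun : (fun t => v x t) = fun t => ∑ i ∈ Finset.range (k+1), ∑ j ∈ Finset.range (k+1),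
      c i j * x ^ i * t ^ j := funext fun t => h x t
  rw [hfun]
  refine HasDerivAt.fun_sum fun i _ => HasDerivAt.fun_sum fun j _ => ?_
  exact (hasDerivAt_pow j y).const_mul (c i j * x ^ i)

lemma rep_pd1_eq {k : ℕ} {c : ℕ → ℕ → ℝ} {v : ℝ → ℝ → ℝ}
    (h : ∀ x y : ℝ, v x y = ∑ i ∈ Finset.range (k+1), ∑ j ∈ Finset.range (k+1),
      c i j * x ^ i * y ^ j) (x y : ℝ) :
    pd1 v x y = ∑ i ∈ Finset.range (k+1), ∑ j ∈ Finset.range (k+1),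
        c i j * ((i : ℝ) * x ^ (i - 1)) * y ^ j :=
  (rep_hasDerivAt1 h x y).deriv

lemma rep_pd2_eq {k : ℕ} {c : ℕ → ℕ → ℝ} {v : ℝ → ℝ → ℝ}
    (h : ∀ x y : ℝ, v x y = ∑ i ∈ Finset.range (k+1), ∑ j ∈ Finset.range (k+1),
      c i j * x ^ i * y ^ j) (x y : ℝ) :
    pd2 v x y = ∑ i ∈ Finset.range (k+1), ∑ j ∈ Finset.range (k+1),
        (c i j * x ^ i) * ((j : ℝ) * y ^ (j - 1)) :=
  (rep_hasDerivAt2 h x y).deriv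

lemma rep_pd1 {k : ℕ} {v : ℝ → ℝ → ℝ} (hv : QkRep k v) : QkRep k (pd1 v) := by
  obtain ⟨c, hc⟩ := hv
  refine ⟨fun i j => if i + 1 ≤ k then ((i : ℝ) + 1) * c (i+1) j else 0, fun x y => ?_⟩
  simp only []
  rw [rep_pd1_eq hc x y]
  calc ∑ i ∈ Finset.range (k+1), ∑ j ∈ Finset.range (k+1),
        c i j * ((i : ℝ) * x ^ (i - 1)) * y ^ j
      = ∑ i ∈ Finset.range k, ∑ j ∈ Finset.range (k+1),
          c (i+1) j * (((i+1 : ℕ) : ℝ) * x ^ (i + 1 - 1)) * y ^ j := by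
        rw [Finset.sum_range_succ']
        simp
    _ = ∑ i ∈ Finset.range k, ∑ j ∈ Finset.range (k+1),
          (if i + 1 ≤ k then ((i : ℝ) + 1) * c (i+1) j else 0) * x ^ i * y ^ j := by
        refine Finset.sum_congr rfl fun i hi => Finset.sum_congr rfl fun j _ => ?_
        rw [if_pos (Nat.succ_le_of_lt (Finset.mem_range.1 hi)), Nat.add_sub_cancel]
        push_cast
        ring
    _ = ∑ i ∈ Finset.range (k+1), ∑ j ∈ Finset.range (k+1),
          (if i + 1 ≤ k then ((i : ℝ) + 1) * c (i+1) j else 0) * x ^ i * y ^ j := by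
        rw [Finset.sum_range_succ]
        have hz : ∑ j ∈ Finset.range (k+1),
            (if k + 1 ≤ k then ((k : ℝ) + 1) * c (k+1) j else 0) * x ^ k * y ^ j = 0 := by
          refine Finset.sum_eq_zero fun j _ => ?_
          rw [if_neg (by omega), zero_mul, zero_mul]
        rw [hz, add_zero]

lemma rep_pd2 {k : ℕ} {v : ℝ → ℝ → ℝ} (hv : QkRep k v) : QkRep k (pd2 v) := by
  obtain ⟨c, hc⟩ := hv
  refine ⟨fun i j => if j + 1 ≤ k then ((j : ℝ) + 1) * c i (j+1) else 0, fun x y => ?_⟩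
  simp only []
  rw [rep_pd2_eq hc x y]
  refine Finset.sum_congr rfl fun i _ => ?_
  calc ∑ j ∈ Finset.range (k+1), (c i j * x ^ i) * ((j : ℝ) * y ^ (j - 1))
      = ∑ j ∈ Finset.range k,
          (c i (j+1) * x ^ i) * (((j+1 : ℕ) : ℝ) * y ^ (j + 1 - 1)) := by
        rw [Finset.sum_range_succ']
        simp
    _ = ∑ j ∈ Finset.range k,
          (if j + 1 ≤ k then ((j : ℝ) + 1) * c i (j+1) else 0) * x ^ i * y ^ j := by
        refine Finset.sum_congr rfl fun j hj => ?_
        rw [if_pos (Nat.succ_le_of_lt (Finset.mem_range.1 hj)), Nat.add_sub_cancel]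
        push_cast
        ring
    _ = ∑ j ∈ Finset.range (k+1),
          (if j + 1 ≤ k then ((j : ℝ) + 1) * c i (j+1) else 0) * x ^ i * y ^ j := by
        rw [Finset.sum_range_succ]
        rw [if_neg (by omega : ¬ (k + 1 ≤ k)), zero_mul, zero_mul, add_zero]

lemma isPk_of_rep {k : ℕ} {f : ℝ → ℝ} {a : ℕ → ℝ}
    (h : ∀ x, f x = ∑ i ∈ Finset.range (k+1), a i * x ^ i) : IsPk k f := by
  refine ⟨∑ i ∈ Finset.range (k+1), Polynomial.C (a i) * Polynomial.X ^ i, ?_, ?_⟩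
  · refine Polynomial.natDegree_sum_le_of_forall_le _ _ fun i hi => ?_
    refine le_trans (Polynomial.natDegree_mul_le) ?_
    rw [Polynomial.natDegree_C, Polynomial.natDegree_X_pow]
    have := Finset.mem_range.1 hi
    omega
  · intro x
    rw [h x]
    simp [Polynomial.eval_finset_sum]

lemma rep_trace1 {k : ℕ} {v : ℝ → ℝ → ℝ} (hv : QkRep k v) (y0 : ℝ) :
    IsPk k (fun x => v x y0) := by
  obtain ⟨c, hc⟩ := hv
  refine isPk_of_rep (a := fun i => ∑ j ∈ Finset.range (k+1), c i j * y0 ^ j) fun x => ?_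
  rw [hc x y0]
  refine Finset.sum_congr rfl fun i _ => ?_
  rw [Finset.sum_mul]
  exact Finset.sum_congr rfl fun j _ => by ring

lemma rep_trace2 {k : ℕ} {v : ℝ → ℝ → ℝ} (hv : QkRep k v) (x0 : ℝ) :
    IsPk k (fun y => v x0 y) := by
  obtain ⟨c, hc⟩ := hv
  refine isPk_of_rep (a := fun j => ∑ i ∈ Finset.range (k+1), c i j * x0 ^ i) fun y => ?_
  rw [hc x0 y, Finset.sum_comm]
  refine Finset.sum_congr rfl fun j _ => ?_
  rw [Finset.sum_mul]
  try exact Finset.sum_congr rfl fun i _ => by ring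

lemma isPk_cont {k : ℕ} {f : ℝ → ℝ} (h : IsPk k f) : Continuous f := by
  obtain ⟨p, _, hp⟩ := h
  have hf : f = fun x => p.eval x := funext hp
  rw [hf]
  exact p.continuous

lemma rep_contDiff {k : ℕ} {v : ℝ → ℝ → ℝ} (hv : QkRep k v) (n : ℕ∞) :
    ContDiff ℝ n (fun p : ℝ × ℝ => v p.1 p.2) := by
  obtain ⟨c, hc⟩ := hv
  have : (fun p : ℝ × ℝ => v p.1 p.2) = fun p : ℝ × ℝ =>
      ∑ i ∈ Finset.range (k+1), ∑ j ∈ Finset.range (k+1), c i j * p.1 ^ i * p.2 ^ j :=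
    funext fun p => hc p.1 p.2
  rw [this]
  refine ContDiff.sum fun i _ => ContDiff.sum fun j _ => ?_
  exact ((contDiff_const.mul (contDiff_fst.pow i)).mul (contDiff_snd.pow j))

lemma isQk_zero (k : ℕ) : IsQk k (fun _ _ => 0) := rep_isQk (rep_zero k)

lemma isQk_add {k : ℕ} {v w : ℝ → ℝ → ℝ} (hv : IsQk k v) (hw : IsQk k w) :
    IsQk k (fun x y => v x y + w x y) := rep_isQk (rep_add (isQk_rep hv) (isQk_rep hw))

lemma isQk_pd1 {k : ℕ} {v : ℝ → ℝ → ℝ} (hv : IsQk k v) : IsQk k (pd1 v) :=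
  rep_isQk (rep_pd1 (isQk_rep hv))

lemma isQk_pd2 {k : ℕ} {v : ℝ → ℝ → ℝ} (hv : IsQk k v) : IsQk k (pd2 v) :=
  rep_isQk (rep_pd2 (isQk_rep hv))

lemma isQk_lapl {k : ℕ} {v : ℝ → ℝ → ℝ} (hv : IsQk k v) : IsQk k (lapl v) :=
  isQk_add (isQk_pd1 (isQk_pd1 hv)) (isQk_pd2 (isQk_pd2 hv))

lemma pd2_zero : pd2 (fun _ _ => (0:ℝ)) = fun _ _ => 0 := by
  funext x y; simp [pd2]

lemma pd1_zero : pd1 (fun _ _ => (0:ℝ)) = fun _ _ => 0 := by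
  funext x y; simp [pd1]

end WGaux
namespace WGaux

open MeasureTheory intervalIntegral

abbrev unc (f : ℝ → ℝ → ℝ) : ℝ × ℝ → ℝ := fun p => f p.1 p.2

lemma hasDerivAt_sec1 {F : ℝ → ℝ → ℝ} (hF : Differentiable ℝ (unc F)) (x y : ℝ) :
    HasDerivAt (fun t => F t y) (pd1 F x y) x := by
  have h : DifferentiableAt ℝ (fun t : ℝ => F t y) x :=
    by have := (hF (x, y)).comp x ((differentiableAt_fun_id : DifferentiableAt ℝ (fun t : ℝ => t) x).prodMk (differentiableAt_const y)); exact this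
  exact h.hasDerivAt

lemma hasDerivAt_sec2 {F : ℝ → ℝ → ℝ} (hF : Differentiable ℝ (unc F)) (x y : ℝ) :
    HasDerivAt (fun t => F x t) (pd2 F x y) y := by
  have h : DifferentiableAt ℝ (fun t : ℝ => F x t) y :=
    by have := (hF (x, y)).comp y ((differentiableAt_const x).prodMk differentiableAt_fun_id); exact this
  exact h.hasDerivAt

lemma pd1_eq_fderiv {F : ℝ → ℝ → ℝ} (hF : Differentiable ℝ (unc F)) :
    unc (pd1 F) = fun p => fderiv ℝ (unc F) p (1, 0) := by
  funext p
  have h1 : HasDerivAt (fun t => F t p.2) (fderiv ℝ (unc F) p ((1 : ℝ), (0 : ℝ))) p.1 := by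
    have hg : HasDerivAt (fun t : ℝ => ((t, p.2) : ℝ × ℝ)) ((1 : ℝ), (0 : ℝ)) p.1 :=
      (hasDerivAt_id p.1).prodMk (hasDerivAt_const p.1 p.2)
    have := ((hF (p.1, p.2)).hasFDerivAt.comp_hasDerivAt p.1 hg)
    exact this
  exact h1.deriv

lemma pd2_eq_fderiv {F : ℝ → ℝ → ℝ} (hF : Differentiable ℝ (unc F)) :
    unc (pd2 F) = fun p => fderiv ℝ (unc F) p (0, 1) := by
  funext p
  have h1 : HasDerivAt (fun t => F p.1 t) (fderiv ℝ (unc F) p ((0 : ℝ), (1 : ℝ))) p.2 := by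
    have hg : HasDerivAt (fun t : ℝ => ((p.1, t) : ℝ × ℝ)) ((0 : ℝ), (1 : ℝ)) p.2 :=
      (hasDerivAt_const p.2 p.1).prodMk (hasDerivAt_id p.2)
    have := ((hF (p.1, p.2)).hasFDerivAt.comp_hasDerivAt p.2 hg)
    exact this
  exact h1.deriv

lemma contDiff_pd1 {F : ℝ → ℝ → ℝ} {n : ℕ∞} (hF : ContDiff ℝ (n+1) (unc F)) :
    ContDiff ℝ n (unc (pd1 F)) := by
  rw [pd1_eq_fderiv (hF.differentiable (by simp))]
  exact (hF.fderiv_right le_rfl).clm_apply contDiff_const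

lemma contDiff_pd2 {F : ℝ → ℝ → ℝ} {n : ℕ∞} (hF : ContDiff ℝ (n+1) (unc F)) :
    ContDiff ℝ n (unc (pd2 F)) := by
  rw [pd2_eq_fderiv (hF.differentiable (by simp))]
  exact (hF.fderiv_right le_rfl).clm_apply contDiff_const

structure D1 (F : ℝ → ℝ → ℝ) : Prop where
  c : Continuous (unc F)
  c1 : Continuous (unc (pd1 F))
  c2 : Continuous (unc (pd2 F))
  hd1 : ∀ x y : ℝ, HasDerivAt (fun t => F t y) (pd1 F x y) x
  hd2 : ∀ x y : ℝ, HasDerivAt (fun t => F x t) (pd2 F x y) y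

lemma contDiff_D1 {F : ℝ → ℝ → ℝ} (hF : ContDiff ℝ 1 (unc F)) : D1 F := by
  have hd := hF.differentiable one_ne_zero
  refine ⟨hF.continuous, ?_, ?_, hasDerivAt_sec1 hd, hasDerivAt_sec2 hd⟩
  · rw [pd1_eq_fderiv hd]
    exact (contDiff_one_iff_fderiv.1 hF).2.clm_apply continuous_const
  · rw [pd2_eq_fderiv hd]
    exact (contDiff_one_iff_fderiv.1 hF).2.clm_apply continuous_const

lemma isQk_D1 {k : ℕ} {v : ℝ → ℝ → ℝ} (hv : IsQk k v) : D1 v :=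
  contDiff_D1 (rep_contDiff (isQk_rep hv) 1)

lemma isQk_cont {k : ℕ} {v : ℝ → ℝ → ℝ} (hv : IsQk k v) : Continuous (unc v) :=
  (rep_contDiff (isQk_rep hv) 0).continuous

lemma cont_sec1 {f : ℝ → ℝ → ℝ} (hf : Continuous (unc f)) (y0 : ℝ) :
    Continuous (fun x => f x y0) := hf.comp (continuous_id.prodMk continuous_const)

lemma cont_sec2 {f : ℝ → ℝ → ℝ} (hf : Continuous (unc f)) (x0 : ℝ) :
    Continuous (fun y => f x0 y) := hf.comp (continuous_const.prodMk continuous_id)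

lemma cont_param {f : ℝ → ℝ → ℝ} (hf : Continuous (unc f)) (c d : ℝ) :
    Continuous fun x => ∫ y in c..d, f x y :=
  continuous_parametric_intervalIntegral_of_continuous' (μ := volume) hf c d

lemma cont_param' {f : ℝ → ℝ → ℝ} (hf : Continuous (unc f)) (a b : ℝ) :
    Continuous fun y => ∫ x in a..b, f x y :=
  cont_param (f := fun y x => f x y) (hf.comp continuous_swap) a b

end WGaux
namespace WGaux

open MeasureTheory intervalIntegral

lemma dint_congr {f g : ℝ → ℝ → ℝ} {a b c d : ℝ} (h : ∀ x y, f x y = g x y) :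
    (∫ x in a..b, ∫ y in c..d, f x y) = ∫ x in a..b, ∫ y in c..d, g x y :=
  intervalIntegral.integral_congr fun x _ => intervalIntegral.integral_congr fun y _ => h x y

lemma dint_add {f g : ℝ → ℝ → ℝ} (hf : Continuous (unc f)) (hg : Continuous (unc g))
    (a b c d : ℝ) :
    (∫ x in a..b, ∫ y in c..d, (f x y + g x y))
      = (∫ x in a..b, ∫ y in c..d, f x y) + ∫ x in a..b, ∫ y in c..d, g x y := by
  have hinner : ∀ x : ℝ, (∫ y in c..d, (f x y + g x y))
      = (∫ y in c..d, f x y) + ∫ y in c..d, g x y := fun x =>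
    intervalIntegral.integral_add ((cont_sec2 hf x).intervalIntegrable c d)
      ((cont_sec2 hg x).intervalIntegrable c d)
  rw [intervalIntegral.integral_congr (fun x _ => hinner x)]
  exact intervalIntegral.integral_add ((cont_param hf c d).intervalIntegrable a b)
    ((cont_param hg c d).intervalIntegrable a b)

lemma dint_sub {f g : ℝ → ℝ → ℝ} (hf : Continuous (unc f)) (hg : Continuous (unc g))
    (a b c d : ℝ) :
    (∫ x in a..b, ∫ y in c..d, (f x y - g x y))
      = (∫ x in a..b, ∫ y in c..d, f x y) - ∫ x in a..b, ∫ y in c..d, g x y := by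
  have hinner : ∀ x : ℝ, (∫ y in c..d, (f x y - g x y))
      = (∫ y in c..d, f x y) - ∫ y in c..d, g x y := fun x =>
    intervalIntegral.integral_sub ((cont_sec2 hf x).intervalIntegrable c d)
      ((cont_sec2 hg x).intervalIntegrable c d)
  rw [intervalIntegral.integral_congr (fun x _ => hinner x)]
  exact intervalIntegral.integral_sub ((cont_param hf c d).intervalIntegrable a b)
    ((cont_param hg c d).intervalIntegrable a b)

lemma dint_const_mul {f : ℝ → ℝ → ℝ} (r : ℝ) (a b c d : ℝ) :
    (∫ x in a..b, ∫ y in c..d, r * f x y)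
      = r * ∫ x in a..b, ∫ y in c..d, f x y := by
  have hinner : ∀ x : ℝ, (∫ y in c..d, r * f x y) = r * ∫ y in c..d, f x y := fun x =>
    intervalIntegral.integral_const_mul r _
  rw [intervalIntegral.integral_congr (fun x _ => hinner x)]
  exact intervalIntegral.integral_const_mul r _

lemma ipT_comm (a b c d : ℝ) (f g : ℝ → ℝ → ℝ) : ipT a b c d f g = ipT a b c d g f := by
  unfold ipT
  exact dint_congr fun x y => mul_comm _ _

lemma ipT_sub_left {f g h : ℝ → ℝ → ℝ} (hf : Continuous (unc f)) (hg : Continuous (unc g))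
    (hh : Continuous (unc h)) (a b c d : ℝ) :
    ipT a b c d (fun x y => f x y - g x y) h = ipT a b c d f h - ipT a b c d g h := by
  unfold ipT
  rw [dint_congr (g := fun x y => f x y * h x y - g x y * h x y) (fun x y => by ring)]
  exact dint_sub (hf.mul hh) (hg.mul hh) a b c d

lemma ipT_smul_sub_left {A B C : ℝ → ℝ → ℝ} (r : ℝ) (hA : Continuous (unc A))
    (hB : Continuous (unc B)) (hC : Continuous (unc C)) (a b c d : ℝ) :
    ipT a b c d (fun x y => r * A x y - B x y) C
      = r * ipT a b c d A C - ipT a b c d B C := by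
  unfold ipT
  rw [dint_congr (g := fun x y => r * (A x y * C x y) - B x y * C x y) (fun x y => by ring)]
  rw [dint_sub (by exact (continuous_const.mul (hA.mul hC))) (hB.mul hC) a b c d]
  rw [dint_const_mul]

lemma swap2 {f : ℝ → ℝ → ℝ} (hf : Continuous (unc f)) {a b c d : ℝ}
    (hab : a ≤ b) (hcd : c ≤ d) :
    (∫ x in a..b, ∫ y in c..d, f x y) = ∫ y in c..d, ∫ x in a..b, f x y := by
  rw [intervalIntegral.integral_of_le hab, intervalIntegral.integral_of_le hcd]
  simp_rw [intervalIntegral.integral_of_le hcd, intervalIntegral.integral_of_le hab]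
  have hint : Integrable (Function.uncurry f)
      ((volume.restrict (Set.Ioc a b)).prod (volume.restrict (Set.Ioc c d))) := by
    rw [Measure.prod_restrict]
    have hco : IntegrableOn (Function.uncurry f) (Set.Icc a b ×ˢ Set.Icc c d)
        (volume.prod volume) := by
      rw [← Measure.volume_eq_prod]
      exact hf.continuousOn.integrableOn_compact (isCompact_Icc.prod isCompact_Icc)
    exact hco.mono_set (Set.prod_mono Set.Ioc_subset_Icc_self Set.Ioc_subset_Icc_self)
  exact MeasureTheory.integral_integral_swap hint

lemma ibp1d {f g f' g' : ℝ → ℝ} (hf : ∀ t, HasDerivAt f (f' t) t)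
    (hg : ∀ t, HasDerivAt g (g' t) t) (hcf' : Continuous f') (hcg' : Continuous g')
    (hcf : Continuous f) (hcg : Continuous g) (a b : ℝ) :
    ∫ t in a..b, f' t * g t = f b * g b - f a * g a - ∫ t in a..b, f t * g' t := by
  have h := intervalIntegral.integral_deriv_mul_eq_sub (fun x _ => hf x) (fun x _ => hg x)
    (hcf'.intervalIntegrable a b) (hcg'.intervalIntegrable a b)
  rw [intervalIntegral.integral_add ((hcf'.fun_mul hcg).intervalIntegrable a b)
    ((hcf.fun_mul hcg').intervalIntegrable a b)] at h
  linarith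

lemma ibp2 {F G : ℝ → ℝ → ℝ} (hF : D1 F) (hG : D1 G) (a b c d : ℝ) :
    (∫ x in a..b, ∫ y in c..d, pd2 F x y * G x y)
      = (∫ x in a..b, (F x d * G x d - F x c * G x c))
        - ∫ x in a..b, ∫ y in c..d, F x y * pd2 G x y := by
  have hinner : ∀ x, (∫ y in c..d, pd2 F x y * G x y)
      = (F x d * G x d - F x c * G x c) - ∫ y in c..d, F x y * pd2 G x y := fun x =>
    ibp1d (fun t => hF.hd2 x t) (fun t => hG.hd2 x t) (cont_sec2 hF.c2 x)
      (cont_sec2 hG.c2 x) (cont_sec2 hF.c x) (cont_sec2 hG.c x) c d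
  rw [intervalIntegral.integral_congr (fun x _ => hinner x)]
  refine intervalIntegral.integral_sub ?_ ?_
  · exact (((cont_sec1 hF.c d).mul (cont_sec1 hG.c d)).sub
      ((cont_sec1 hF.c c).mul (cont_sec1 hG.c c))).intervalIntegrable a b
  · exact (cont_param (hF.c.mul hG.c2) c d).intervalIntegrable a b

lemma ibp1 {F G : ℝ → ℝ → ℝ} (hF : D1 F) (hG : D1 G) {a b c d : ℝ}
    (hab : a ≤ b) (hcd : c ≤ d) :
    (∫ x in a..b, ∫ y in c..d, pd1 F x y * G x y)
      = (∫ y in c..d, (F b y * G b y - F a y * G a y))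
        - ∫ x in a..b, ∫ y in c..d, F x y * pd1 G x y := by
  rw [swap2 (hF.c1.mul hG.c) hab hcd, swap2 (hF.c.mul hG.c1) hab hcd]
  have hinner : ∀ y, (∫ x in a..b, pd1 F x y * G x y)
      = (F b y * G b y - F a y * G a y) - ∫ x in a..b, F x y * pd1 G x y := fun y =>
    ibp1d (fun t => hF.hd1 t y) (fun t => hG.hd1 t y) (cont_sec1 hF.c1 y)
      (cont_sec1 hG.c1 y) (cont_sec1 hF.c y) (cont_sec1 hG.c y) a b
  rw [intervalIntegral.integral_congr (fun y _ => hinner y)]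
  refine intervalIntegral.integral_sub ?_ ?_
  · exact (((cont_sec2 hF.c b).mul (cont_sec2 hG.c b)).sub
      ((cont_sec2 hF.c a).mul (cont_sec2 hG.c a))).intervalIntegrable c d
  · exact (cont_param' (hF.c.mul hG.c1) a b).intervalIntegrable c d

lemma green2 {w φ : ℝ → ℝ → ℝ} (hw : D1 w) (hw1 : D1 (pd1 w)) (hw2 : D1 (pd2 w))
    (hφ : D1 φ) (hφ1 : D1 (pd1 φ)) (hφ2 : D1 (pd2 φ)) {a b c d : ℝ}
    (hab : a ≤ b) (hcd : c ≤ d) :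
    (∫ x in a..b, ∫ y in c..d, lapl w x y * φ x y)
      = (∫ x in a..b, ∫ y in c..d, w x y * lapl φ x y)
        + ((∫ y in c..d, (pd1 w b y * φ b y - pd1 w a y * φ a y))
          + (∫ x in a..b, (pd2 w x d * φ x d - pd2 w x c * φ x c)))
        - ((∫ y in c..d, (w b y * pd1 φ b y - w a y * pd1 φ a y))
          + (∫ x in a..b, (w x d * pd2 φ x d - w x c * pd2 φ x c))) := by
  have h11 := ibp1 hw1 hφ hab hcd
  have h12 := ibp1 hw hφ1 hab hcd
  have h21 := ibp2 hw2 hφ a b c d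
  have h22 := ibp2 hw hφ2 a b c d
  have hsplitL : (∫ x in a..b, ∫ y in c..d, lapl w x y * φ x y)
      = (∫ x in a..b, ∫ y in c..d, pd1 (pd1 w) x y * φ x y)
        + ∫ x in a..b, ∫ y in c..d, pd2 (pd2 w) x y * φ x y := by
    rw [← dint_add (hw1.c1.mul hφ.c) (hw2.c2.mul hφ.c)]
    exact dint_congr fun x y => by simp [lapl]; ring
  have hsplitR : (∫ x in a..b, ∫ y in c..d, w x y * lapl φ x y)
      = (∫ x in a..b, ∫ y in c..d, w x y * pd1 (pd1 φ) x y)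
        + ∫ x in a..b, ∫ y in c..d, w x y * pd2 (pd2 φ) x y := by
    rw [← dint_add (hw.c.mul hφ1.c1) (hw.c.mul hφ2.c2)]
    exact dint_congr fun x y => by simp [lapl]; ring
  rw [hsplitL, hsplitR, h11, h21, h12, h22]
  ring

end WGaux
namespace WGaux

lemma meshPt_mono {N q : ℕ} (hq : N = 4*q) (hq1 : 1 ≤ q) {lam : ℝ} (h0 : 0 ≤ lam)
    (h1 : lam ≤ 1/4) (i : ℕ) : meshPt N lam i ≤ meshPt N lam (i+1) := by
  have hN4 : N / 4 = q := by omega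
  have hNpos : (0:ℝ) < N := by
    have : 0 < N := by omega
    exact_mod_cast this
  have hNr : (N:ℝ) = 4*(q:ℝ) := by rw [hq]; push_cast; ring
  have hqr : (0:ℝ) < q := by
    have : 0 < q := hq1
    exact_mod_cast this
  have hstep1 : 0 ≤ 4 * lam / N := by positivity
  have hstep2 : 0 ≤ 2 * (1 - 2*lam) / N := by
    apply div_nonneg _ hNpos.le
    linarith
  unfold meshPt
  rw [hN4]
  by_cases hA : i + 1 ≤ q
  · rw [if_pos hA, if_pos (by omega : i ≤ q)]
    have hcast : (i:ℝ) ≤ ((i+1:ℕ):ℝ) := by push_cast; linarith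
    exact mul_le_mul_of_nonneg_right hcast hstep1
  · by_cases hB : i ≤ q
    · have hiq : i = q := by omega
      subst hiq
      rw [if_pos (le_refl i), if_neg hA, if_pos (by omega : i + 1 ≤ 3*i)]
      have hqN : (i:ℝ) * (4*lam/N) = lam := by
        rw [hNr]; field_simp
      rw [hqN]
      push_cast
      have h2 : ((i:ℝ) + 1 - i) = 1 := by ring
      rw [h2, one_mul]
      linarith
    · by_cases hC : i + 1 ≤ 3*q
      · rw [if_neg (by omega : ¬ (i + 1 ≤ q)), if_neg hB, if_pos hC,
          if_pos (by omega : i ≤ 3*q)]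
        push_cast
        have hmul := mul_le_mul_of_nonneg_right
          (show (i:ℝ) - q ≤ (i:ℝ) + 1 - q by linarith) hstep2
        linarith
      · by_cases hD : i ≤ 3*q
        · have hiq : i = 3*q := by omega
          subst hiq
          rw [if_neg (by omega : ¬ (3*q ≤ q)), if_pos (le_refl (3*q)),
            if_neg (by omega : ¬ (3*q + 1 ≤ q)), if_neg (by omega : ¬ (3*q + 1 ≤ 3*q))]
          have hL : lam + (((3*q:ℕ):ℝ) - (q:ℕ)) * (2*(1-2*lam)/N) = 1 - lam := by
            rw [hNr]; push_cast; field_simp; ring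
          rw [hL]
          push_cast
          have h2 : ((3*(q:ℝ)) + 1 - 3*q) = 1 := by ring
          rw [h2, one_mul]
          linarith
        · rw [if_neg (by omega : ¬ (i ≤ q)), if_neg hD,
            if_neg (by omega : ¬ (i + 1 ≤ q)), if_neg (by omega : ¬ (i + 1 ≤ 3*q))]
          push_cast
          have hmul := mul_le_mul_of_nonneg_right
            (show (i:ℝ) - (3*q:ℝ) ≤ (i:ℝ) + 1 - (3*q:ℝ) by linarith) hstep1
          linarith

end WGaux
namespace WGaux

open MeasureTheory intervalIntegral

lemma int_sub1 {F G : ℝ → ℝ} (hF : Continuous F) (hG : Continuous G) (a b : ℝ) :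
    (∫ t in a..b, (F t - G t)) = (∫ t in a..b, F t) - ∫ t in a..b, G t :=
  intervalIntegral.integral_sub (hF.intervalIntegrable a b) (hG.intervalIntegrable a b)

lemma int_add1 {F G : ℝ → ℝ} (hF : Continuous F) (hG : Continuous G) (a b : ℝ) :
    (∫ t in a..b, (F t + G t)) = (∫ t in a..b, F t) + ∫ t in a..b, G t :=
  intervalIntegral.integral_add (hF.intervalIntegrable a b) (hG.intervalIntegrable a b)

/-- `∫ F (-G) = - ∫ F G` -/
lemma int_mulneg {F G : ℝ → ℝ} (a b : ℝ) :
    (∫ t in a..b, F t * (-(G t))) = -∫ t in a..b, F t * G t := by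
  rw [← intervalIntegral.integral_neg]
  exact intervalIntegral.integral_congr fun t _ => by ring

lemma int_negmul {F G : ℝ → ℝ} (a b : ℝ) :
    (∫ t in a..b, (-(F t)) * G t) = -∫ t in a..b, F t * G t := by
  rw [← intervalIntegral.integral_neg]
  exact intervalIntegral.integral_congr fun t _ => by ring

lemma int_comm1 {F G : ℝ → ℝ} (a b : ℝ) :
    (∫ t in a..b, F t * G t) = ∫ t in a..b, G t * F t :=
  intervalIntegral.integral_congr fun t _ => by ring

/-- `∫ (A-B)(C-D) = ∫AC - ∫AD - ∫BC + ∫BD` -/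
lemma int_pat1 {A B C D : ℝ → ℝ} (hA : Continuous A) (hB : Continuous B)
    (hC : Continuous C) (hD : Continuous D) (a b : ℝ) :
    (∫ t in a..b, (A t - B t) * (C t - D t))
      = (∫ t in a..b, A t * C t) - (∫ t in a..b, A t * D t)
        - (∫ t in a..b, B t * C t) + ∫ t in a..b, B t * D t := by
  rw [intervalIntegral.integral_congr
    (g := fun t => (A t * C t - A t * D t) - (B t * C t - B t * D t)) (fun t _ => by ring)]
  rw [int_sub1 ((hA.fun_mul hC).fun_sub (hA.fun_mul hD)) ((hB.fun_mul hC).fun_sub (hB.fun_mul hD)),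
    int_sub1 (hA.fun_mul hC) (hA.fun_mul hD), int_sub1 (hB.fun_mul hC) (hB.fun_mul hD)]
  ring

/-- `∫ (A-B)(-(C-D)) = -∫AC + ∫AD + ∫BC - ∫BD` -/
lemma int_pat2 {A B C D : ℝ → ℝ} (hA : Continuous A) (hB : Continuous B)
    (hC : Continuous C) (hD : Continuous D) (a b : ℝ) :
    (∫ t in a..b, (A t - B t) * (-(C t - D t)))
      = -(∫ t in a..b, A t * C t) + (∫ t in a..b, A t * D t)
        + (∫ t in a..b, B t * C t) - ∫ t in a..b, B t * D t := by
  rw [intervalIntegral.integral_congr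
    (g := fun t => -((A t - B t) * (C t - D t))) (fun t _ => by ring),
    intervalIntegral.integral_neg, int_pat1 hA hB hC hD]
  ring

/-- `∫ (-(A-B))(C-D) = -∫AC + ∫AD + ∫BC - ∫BD` -/
lemma int_pat3 {A B C D : ℝ → ℝ} (hA : Continuous A) (hB : Continuous B)
    (hC : Continuous C) (hD : Continuous D) (a b : ℝ) :
    (∫ t in a..b, (-(A t - B t)) * (C t - D t))
      = -(∫ t in a..b, A t * C t) + (∫ t in a..b, A t * D t)
        + (∫ t in a..b, B t * C t) - ∫ t in a..b, B t * D t := by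
  rw [intervalIntegral.integral_congr
    (g := fun t => -((A t - B t) * (C t - D t))) (fun t _ => by ring),
    intervalIntegral.integral_neg, int_pat1 hA hB hC hD]
  ring

/-- Swap a projection for the projected function inside an edge integral. -/
lemma edge_repl_pos {k : ℕ} {a b : ℝ} {f g q : ℝ → ℝ} (h : IsProjE k a b f g)
    (hq : IsPk k q) (hf : Continuous f) :
    (∫ x in a..b, g x * q x) = ∫ x in a..b, f x * q x := by
  have h0 := h.2 q hq
  have hg : Continuous g := isPk_cont h.1
  have hqc : Continuous q := isPk_cont hq
  rw [intervalIntegral.integral_congr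
    (g := fun x => f x * q x - g x * q x) (fun x _ => by ring)] at h0
  rw [int_sub1 (hf.fun_mul hqc) (hg.fun_mul hqc)] at h0
  linarith

lemma edge_repl_neg {k : ℕ} {a b : ℝ} {f g q : ℝ → ℝ} (h : IsProjE k a b f g)
    (hq : IsPk k q) (hf : Continuous f) :
    (∫ x in a..b, g x * (-(q x))) = -∫ x in a..b, f x * q x := by
  rw [int_mulneg, edge_repl_pos h hq hf]

lemma edge_repl_negleft {k : ℕ} {a b : ℝ} {f g q : ℝ → ℝ} (h : IsProjE k a b f g)
    (hq : IsPk k q) (hf : Continuous f) :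
    (∫ x in a..b, (-(g x)) * q x) = -∫ x in a..b, f x * q x := by
  rw [int_negmul, edge_repl_pos h hq hf]

lemma edge_repl_posleft {k : ℕ} {a b : ℝ} {f g q : ℝ → ℝ} (h : IsProjE k a b f g)
    (hq : IsPk k q) (hf : Continuous f) :
    (∫ x in a..b, g x * q x) = ∫ x in a..b, f x * q x := edge_repl_pos h hq hf

/-- Swap an area projection inside `ipT` (left slot smooth, right slot test). -/
lemma projT_swap {k : ℕ} {a b c d : ℝ} {f g q : ℝ → ℝ → ℝ} (h : IsProjT k a b c d f g)
    (hq : IsQk k q) (hf : Continuous (unc f)) :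
    ipT a b c d g q = ipT a b c d f q := by
  have h0 := h.2 q hq
  rw [ipT_sub_left hf (isQk_cont h.1) (isQk_cont hq)] at h0
  linarith

lemma pd1_sub {F G : ℝ → ℝ → ℝ} (hF : D1 F) (hG : D1 G) (x y : ℝ) :
    pd1 (fun a b => F a b - G a b) x y = pd1 F x y - pd1 G x y :=
  ((hF.hd1 x y).sub (hG.hd1 x y)).deriv

lemma pd2_sub {F G : ℝ → ℝ → ℝ} (hF : D1 F) (hG : D1 G) (x y : ℝ) :
    pd2 (fun a b => F a b - G a b) x y = pd2 F x y - pd2 G x y :=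
  ((hF.hd2 x y).sub (hG.hd2 x y)).deriv

end WGaux
namespace WGaux

open MeasureTheory intervalIntegral

lemma ipT_zero_right (a b c d : ℝ) (f : ℝ → ℝ → ℝ) :
    ipT a b c d f (fun _ _ => 0) = 0 := by
  simp [ipT]

lemma elemA {k : ℕ} {a b c d : ℝ} (hab : a ≤ b) (hcd : c ≤ d)
    {u : ℝ → ℝ → ℝ} (hD1u : D1 u) (hD1p1u : D1 (pd1 u)) (hD1p2u : D1 (pd2 u))
    (hcL : Continuous (unc (lapl u)))
    {v00 : ℝ → ℝ → ℝ} (hproj0 : IsProjT k a b c d u v00)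
    {bB bT bL bR gB gT gL gR : ℝ → ℝ}
    (hbB : IsProjE k a b (fun x => u x c) bB) (hbT : IsProjE k a b (fun x => u x d) bT)
    (hbL : IsProjE k c d (fun y => u a y) bL) (hbR : IsProjE k c d (fun y => u b y) bR)
    (hgB : IsProjE k a b (fun x => pd2 u x c) gB) (hgT : IsProjE k a b (fun x => pd2 u x d) gT)
    (hgL : IsProjE k c d (fun y => pd1 u a y) gL) (hgR : IsProjE k c d (fun y => pd1 u b y) gR)
    {Pij : ℝ → ℝ → ℝ} (hPij : IsProjT k a b c d (lapl u) Pij)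
    {D : ℝ → ℝ → ℝ} {φ : ℝ → ℝ → ℝ} (hφ : IsQk k φ)
    (hDdef : ipT a b c d D φ =
        ipT a b c d v00 (lapl φ)
        - ((∫ x in a..b, bB x * (-(pd2 φ x c))) + (∫ x in a..b, bT x * pd2 φ x d)
          + (∫ y in c..d, bL y * (-(pd1 φ a y))) + (∫ y in c..d, bR y * pd1 φ b y))
        + ((∫ x in a..b, (-(gB x)) * φ x c) + (∫ x in a..b, gT x * φ x d)
          + (∫ y in c..d, (-(gL y)) * φ a y) + (∫ y in c..d, gR y * φ b y))) :
    ipT a b c d D φ = ipT a b c d Pij φ := by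
  have hD1φ : D1 φ := isQk_D1 hφ
  have hD1φ1 : D1 (pd1 φ) := isQk_D1 (isQk_pd1 hφ)
  have hD1φ2 : D1 (pd2 φ) := isQk_D1 (isQk_pd2 hφ)
  have hrep := isQk_rep hφ
  have hvol : ipT a b c d v00 (lapl φ) = ipT a b c d u (lapl φ) :=
    projT_swap hproj0 (isQk_lapl hφ) hD1u.c
  have e1 : (∫ x in a..b, bB x * (-(pd2 φ x c))) = -∫ x in a..b, u x c * pd2 φ x c :=
    edge_repl_neg hbB (rep_trace1 (rep_pd2 hrep) c) (cont_sec1 hD1u.c c)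
  have e2 : (∫ x in a..b, bT x * pd2 φ x d) = ∫ x in a..b, u x d * pd2 φ x d :=
    edge_repl_pos hbT (rep_trace1 (rep_pd2 hrep) d) (cont_sec1 hD1u.c d)
  have e3 : (∫ y in c..d, bL y * (-(pd1 φ a y))) = -∫ y in c..d, u a y * pd1 φ a y :=
    edge_repl_neg hbL (rep_trace2 (rep_pd1 hrep) a) (cont_sec2 hD1u.c a)
  have e4 : (∫ y in c..d, bR y * pd1 φ b y) = ∫ y in c..d, u b y * pd1 φ b y :=
    edge_repl_pos hbR (rep_trace2 (rep_pd1 hrep) b) (cont_sec2 hD1u.c b)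
  have f1 : (∫ x in a..b, (-(gB x)) * φ x c) = -∫ x in a..b, pd2 u x c * φ x c :=
    edge_repl_negleft hgB (rep_trace1 hrep c) (cont_sec1 hD1u.c2 c)
  have f2 : (∫ x in a..b, gT x * φ x d) = ∫ x in a..b, pd2 u x d * φ x d :=
    edge_repl_posleft hgT (rep_trace1 hrep d) (cont_sec1 hD1u.c2 d)
  have f3 : (∫ y in c..d, (-(gL y)) * φ a y) = -∫ y in c..d, pd1 u a y * φ a y :=
    edge_repl_negleft hgL (rep_trace2 hrep a) (cont_sec2 hD1u.c1 a)
  have f4 : (∫ y in c..d, gR y * φ b y) = ∫ y in c..d, pd1 u b y * φ b y :=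
    edge_repl_posleft hgR (rep_trace2 hrep b) (cont_sec2 hD1u.c1 b)
  have hPsw : ipT a b c d Pij φ = ipT a b c d (lapl u) φ := projT_swap hPij hφ hcL
  have hg := green2 hD1u hD1p1u hD1p2u hD1φ hD1φ1 hD1φ2 hab hcd
  have s1 : (∫ y in c..d, (pd1 u b y * φ b y - pd1 u a y * φ a y))
      = (∫ y in c..d, pd1 u b y * φ b y) - ∫ y in c..d, pd1 u a y * φ a y :=
    int_sub1 ((cont_sec2 hD1u.c1 b).mul (cont_sec2 hD1φ.c b))
      ((cont_sec2 hD1u.c1 a).mul (cont_sec2 hD1φ.c a)) c d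
  have s2 : (∫ x in a..b, (pd2 u x d * φ x d - pd2 u x c * φ x c))
      = (∫ x in a..b, pd2 u x d * φ x d) - ∫ x in a..b, pd2 u x c * φ x c :=
    int_sub1 ((cont_sec1 hD1u.c2 d).mul (cont_sec1 hD1φ.c d))
      ((cont_sec1 hD1u.c2 c).mul (cont_sec1 hD1φ.c c)) a b
  have s3 : (∫ y in c..d, (u b y * pd1 φ b y - u a y * pd1 φ a y))
      = (∫ y in c..d, u b y * pd1 φ b y) - ∫ y in c..d, u a y * pd1 φ a y :=
    int_sub1 ((cont_sec2 hD1u.c b).mul (cont_sec2 hD1φ.c1 b))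
      ((cont_sec2 hD1u.c a).mul (cont_sec2 hD1φ.c1 a)) c d
  have s4 : (∫ x in a..b, (u x d * pd2 φ x d - u x c * pd2 φ x c))
      = (∫ x in a..b, u x d * pd2 φ x d) - ∫ x in a..b, u x c * pd2 φ x c :=
    int_sub1 ((cont_sec1 hD1u.c d).mul (cont_sec1 hD1φ.c2 d))
      ((cont_sec1 hD1u.c c).mul (cont_sec1 hD1φ.c2 c)) a b
  rw [hDdef, hvol, e1, e2, e3, e4, f1, f2, f3, f4, hPsw]
  simp only [ipT]
  rw [hg, s1, s2, s3, s4]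
  ring

lemma elemB1 {k : ℕ} {a b c d : ℝ} (hab : a ≤ b) (hcd : c ≤ d)
    {u : ℝ → ℝ → ℝ} (hD1u : D1 u)
    {v00 : ℝ → ℝ → ℝ} (hproj0 : IsProjT k a b c d u v00)
    {bL bR : ℝ → ℝ}
    (hbL : IsProjE k c d (fun y => u a y) bL) (hbR : IsProjE k c d (fun y => u b y) bR)
    {P1ij : ℝ → ℝ → ℝ} (hP1 : IsProjT k a b c d (pd1 u) P1ij)
    {G1 : ℝ → ℝ → ℝ} {q : ℝ → ℝ → ℝ} (hq : IsQk k q)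
    (hGdef : ipT a b c d G1 q =
       -(ipT a b c d v00 (fun x y => pd1 q x y))
         + ((∫ y in c..d, bL y * (-(q a y))) + (∫ y in c..d, bR y * q b y))) :
    ipT a b c d G1 q = ipT a b c d P1ij q := by
  have hD1q := isQk_D1 hq
  have hvol : ipT a b c d v00 (fun x y => pd1 q x y)
      = ipT a b c d u (fun x y => pd1 q x y) :=
    projT_swap hproj0 (isQk_pd1 hq) hD1u.c
  have e3 : (∫ y in c..d, bL y * (-(q a y))) = -∫ y in c..d, u a y * q a y :=
    edge_repl_neg hbL (rep_trace2 (isQk_rep hq) a) (cont_sec2 hD1u.c a)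
  have e4 : (∫ y in c..d, bR y * q b y) = ∫ y in c..d, u b y * q b y :=
    edge_repl_pos hbR (rep_trace2 (isQk_rep hq) b) (cont_sec2 hD1u.c b)
  have hP1sw : ipT a b c d P1ij q = ipT a b c d (pd1 u) q := projT_swap hP1 hq hD1u.c1
  have hibp := ibp1 hD1u hD1q hab hcd
  have s : (∫ y in c..d, (u b y * q b y - u a y * q a y))
      = (∫ y in c..d, u b y * q b y) - ∫ y in c..d, u a y * q a y :=
    int_sub1 ((cont_sec2 hD1u.c b).mul (cont_sec2 hD1q.c b))
      ((cont_sec2 hD1u.c a).mul (cont_sec2 hD1q.c a)) c d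
  rw [hGdef, hvol, e3, e4, hP1sw]
  simp only [ipT]
  rw [hibp, s]
  ring

lemma elemB2 {k : ℕ} {a b c d : ℝ} (hab : a ≤ b) (hcd : c ≤ d)
    {u : ℝ → ℝ → ℝ} (hD1u : D1 u)
    {v00 : ℝ → ℝ → ℝ} (hproj0 : IsProjT k a b c d u v00)
    {bB bT : ℝ → ℝ}
    (hbB : IsProjE k a b (fun x => u x c) bB) (hbT : IsProjE k a b (fun x => u x d) bT)
    {P2ij : ℝ → ℝ → ℝ} (hP2 : IsProjT k a b c d (pd2 u) P2ij)
    {G2 : ℝ → ℝ → ℝ} {q : ℝ → ℝ → ℝ} (hq : IsQk k q)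
    (hGdef : ipT a b c d G2 q =
       -(ipT a b c d v00 (fun x y => pd2 q x y))
         + ((∫ x in a..b, bB x * (-(q x c))) + (∫ x in a..b, bT x * q x d))) :
    ipT a b c d G2 q = ipT a b c d P2ij q := by
  have hD1q := isQk_D1 hq
  have hvol : ipT a b c d v00 (fun x y => pd2 q x y)
      = ipT a b c d u (fun x y => pd2 q x y) :=
    projT_swap hproj0 (isQk_pd2 hq) hD1u.c
  have e1 : (∫ x in a..b, bB x * (-(q x c))) = -∫ x in a..b, u x c * q x c :=
    edge_repl_neg hbB (rep_trace1 (isQk_rep hq) c) (cont_sec1 hD1u.c c)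
  have e2 : (∫ x in a..b, bT x * q x d) = ∫ x in a..b, u x d * q x d :=
    edge_repl_pos hbT (rep_trace1 (isQk_rep hq) d) (cont_sec1 hD1u.c d)
  have hP2sw : ipT a b c d P2ij q = ipT a b c d (pd2 u) q := projT_swap hP2 hq hD1u.c2
  have hibp := ibp2 hD1u hD1q a b c d
  have s : (∫ x in a..b, (u x d * q x d - u x c * q x c))
      = (∫ x in a..b, u x d * q x d) - ∫ x in a..b, u x c * q x c :=
    int_sub1 ((cont_sec1 hD1u.c d).mul (cont_sec1 hD1q.c d))
      ((cont_sec1 hD1u.c c).mul (cont_sec1 hD1q.c c)) a b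
  rw [hGdef, hvol, e1, e2, hP2sw]
  simp only [ipT]
  rw [hibp, s]
  ring

end WGaux
namespace WGaux

open MeasureTheory intervalIntegral

lemma elemClap {k : ℕ} {a b c d : ℝ} (hab : a ≤ b) (hcd : c ≤ d)
    {u : ℝ → ℝ → ℝ}
    (hD1w : D1 (lapl u)) (hD1w1 : D1 (pd1 (lapl u))) (hD1w2 : D1 (pd2 (lapl u)))
    {Pij : ℝ → ℝ → ℝ} (hPij : IsProjT k a b c d (lapl u) Pij)
    {v00 : ℝ → ℝ → ℝ} (hq0 : IsQk k v00)
    {vbB vbT vbL vbR vg2B vg2T vg1L vg1R : ℝ → ℝ}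
    (hkB : IsPk k vbB) (hkT : IsPk k vbT) (hkL : IsPk k vbL) (hkR : IsPk k vbR)
    (hk2B : IsPk k vg2B) (hk2T : IsPk k vg2T) (hk1L : IsPk k vg1L) (hk1R : IsPk k vg1R)
    {Dv : ℝ → ℝ → ℝ}
    (hDvP : ipT a b c d Dv Pij = ipT a b c d v00 (lapl Pij)
        - ((∫ x in a..b, vbB x * (-(pd2 Pij x c))) + (∫ x in a..b, vbT x * pd2 Pij x d)
          + (∫ y in c..d, vbL y * (-(pd1 Pij a y))) + (∫ y in c..d, vbR y * pd1 Pij b y))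
        + ((∫ x in a..b, (-(vg2B x)) * Pij x c) + (∫ x in a..b, vg2T x * Pij x d)
          + (∫ y in c..d, (-(vg1L y)) * Pij a y) + (∫ y in c..d, vg1R y * Pij b y))) :
    ipT a b c d Dv Pij - (∫ x in a..b, ∫ y in c..d, lapl (lapl u) x y * v00 x y)
      = ((∫ x in a..b, (lapl u x c - Pij x c) * (-(pd2 v00 x c - vg2B x)))
          + (∫ x in a..b, (lapl u x d - Pij x d) * (pd2 v00 x d - vg2T x))
          + (∫ y in c..d, (lapl u a y - Pij a y) * (-(pd1 v00 a y - vg1L y)))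
          + (∫ y in c..d, (lapl u b y - Pij b y) * (pd1 v00 b y - vg1R y)))
        - ((∫ x in a..b, (-(pd2 (fun s t => lapl u s t - Pij s t) x c)) * (v00 x c - vbB x))
          + (∫ x in a..b, (pd2 (fun s t => lapl u s t - Pij s t) x d) * (v00 x d - vbT x))
          + (∫ y in c..d, (-(pd1 (fun s t => lapl u s t - Pij s t) a y)) * (v00 a y - vbL y))
          + (∫ y in c..d, (pd1 (fun s t => lapl u s t - Pij s t) b y) * (v00 b y - vbR y)))
        + (-(∫ x in a..b, lapl u x c * vg2B x) + (∫ x in a..b, lapl u x d * vg2T x)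
          - (∫ y in c..d, lapl u a y * vg1L y) + (∫ y in c..d, lapl u b y * vg1R y))
        - (-(∫ x in a..b, pd2 (lapl u) x c * vbB x) + (∫ x in a..b, pd2 (lapl u) x d * vbT x)
          - (∫ y in c..d, pd1 (lapl u) a y * vbL y)
          + (∫ y in c..d, pd1 (lapl u) b y * vbR y)) := by
  have hD1v := isQk_D1 hq0
  have hD1v1 := isQk_D1 (isQk_pd1 hq0)
  have hD1v2 := isQk_D1 (isQk_pd2 hq0)
  have hD1P := isQk_D1 hPij.1
  have hD1P1 := isQk_D1 (isQk_pd1 hPij.1)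
  have hD1P2 := isQk_D1 (isQk_pd2 hPij.1)
  -- edge conversions for hDvP
  have d1 : (∫ x in a..b, vbB x * (-(pd2 Pij x c))) = -∫ x in a..b, pd2 Pij x c * vbB x := by
    rw [int_mulneg, int_comm1]
  have d2 : (∫ x in a..b, vbT x * pd2 Pij x d) = ∫ x in a..b, pd2 Pij x d * vbT x := by
    rw [int_comm1]
  have d3 : (∫ y in c..d, vbL y * (-(pd1 Pij a y))) = -∫ y in c..d, pd1 Pij a y * vbL y := by
    rw [int_mulneg, int_comm1]
  have d4 : (∫ y in c..d, vbR y * pd1 Pij b y) = ∫ y in c..d, pd1 Pij b y * vbR y := by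
    rw [int_comm1]
  have e1 : (∫ x in a..b, (-(vg2B x)) * Pij x c) = -∫ x in a..b, Pij x c * vg2B x := by
    rw [int_negmul, int_comm1]
  have e2 : (∫ x in a..b, vg2T x * Pij x d) = ∫ x in a..b, Pij x d * vg2T x := by
    rw [int_comm1]
  have e3 : (∫ y in c..d, (-(vg1L y)) * Pij a y) = -∫ y in c..d, Pij a y * vg1L y := by
    rw [int_negmul, int_comm1]
  have e4 : (∫ y in c..d, vg1R y * Pij b y) = ∫ y in c..d, Pij b y * vg1R y := by
    rw [int_comm1]
  -- volume term of hDvP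
  have hcomm : ipT a b c d v00 (lapl Pij)
      = ∫ x in a..b, ∫ y in c..d, lapl Pij x y * v00 x y := by
    simp only [ipT]
    exact dint_congr fun x y => mul_comm _ _
  -- Green identities
  have g1 := green2 hD1w hD1w1 hD1w2 hD1v hD1v1 hD1v2 hab hcd
  have g2 := green2 hD1P hD1P1 hD1P2 hD1v hD1v1 hD1v2 hab hcd
  have korth : (∫ x in a..b, ∫ y in c..d, lapl u x y * lapl v00 x y)
      = ∫ x in a..b, ∫ y in c..d, Pij x y * lapl v00 x y := by
    have h := projT_swap hPij (isQk_lapl hq0) hD1w.c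
    simp only [ipT] at h
    exact h.symm
  -- bracket splits
  have sw1 : (∫ y in c..d, (pd1 (lapl u) b y * v00 b y - pd1 (lapl u) a y * v00 a y))
      = (∫ y in c..d, pd1 (lapl u) b y * v00 b y) - ∫ y in c..d, pd1 (lapl u) a y * v00 a y :=
    int_sub1 ((cont_sec2 hD1w.c1 b).mul (cont_sec2 hD1v.c b))
      ((cont_sec2 hD1w.c1 a).mul (cont_sec2 hD1v.c a)) c d
  have sw2 : (∫ x in a..b, (pd2 (lapl u) x d * v00 x d - pd2 (lapl u) x c * v00 x c))
      = (∫ x in a..b, pd2 (lapl u) x d * v00 x d) - ∫ x in a..b, pd2 (lapl u) x c * v00 x c :=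
    int_sub1 ((cont_sec1 hD1w.c2 d).mul (cont_sec1 hD1v.c d))
      ((cont_sec1 hD1w.c2 c).mul (cont_sec1 hD1v.c c)) a b
  have sw3 : (∫ y in c..d, (lapl u b y * pd1 v00 b y - lapl u a y * pd1 v00 a y))
      = (∫ y in c..d, lapl u b y * pd1 v00 b y) - ∫ y in c..d, lapl u a y * pd1 v00 a y :=
    int_sub1 ((cont_sec2 hD1w.c b).mul (cont_sec2 hD1v.c1 b))
      ((cont_sec2 hD1w.c a).mul (cont_sec2 hD1v.c1 a)) c d
  have sw4 : (∫ x in a..b, (lapl u x d * pd2 v00 x d - lapl u x c * pd2 v00 x c))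
      = (∫ x in a..b, lapl u x d * pd2 v00 x d) - ∫ x in a..b, lapl u x c * pd2 v00 x c :=
    int_sub1 ((cont_sec1 hD1w.c d).mul (cont_sec1 hD1v.c2 d))
      ((cont_sec1 hD1w.c c).mul (cont_sec1 hD1v.c2 c)) a b
  have sp1 : (∫ y in c..d, (pd1 Pij b y * v00 b y - pd1 Pij a y * v00 a y))
      = (∫ y in c..d, pd1 Pij b y * v00 b y) - ∫ y in c..d, pd1 Pij a y * v00 a y :=
    int_sub1 ((cont_sec2 hD1P.c1 b).mul (cont_sec2 hD1v.c b))
      ((cont_sec2 hD1P.c1 a).mul (cont_sec2 hD1v.c a)) c d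
  have sp2 : (∫ x in a..b, (pd2 Pij x d * v00 x d - pd2 Pij x c * v00 x c))
      = (∫ x in a..b, pd2 Pij x d * v00 x d) - ∫ x in a..b, pd2 Pij x c * v00 x c :=
    int_sub1 ((cont_sec1 hD1P.c2 d).mul (cont_sec1 hD1v.c d))
      ((cont_sec1 hD1P.c2 c).mul (cont_sec1 hD1v.c c)) a b
  have sp3 : (∫ y in c..d, (Pij b y * pd1 v00 b y - Pij a y * pd1 v00 a y))
      = (∫ y in c..d, Pij b y * pd1 v00 b y) - ∫ y in c..d, Pij a y * pd1 v00 a y :=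
    int_sub1 ((cont_sec2 hD1P.c b).mul (cont_sec2 hD1v.c1 b))
      ((cont_sec2 hD1P.c a).mul (cont_sec2 hD1v.c1 a)) c d
  have sp4 : (∫ x in a..b, (Pij x d * pd2 v00 x d - Pij x c * pd2 v00 x c))
      = (∫ x in a..b, Pij x d * pd2 v00 x d) - ∫ x in a..b, Pij x c * pd2 v00 x c :=
    int_sub1 ((cont_sec1 hD1P.c d).mul (cont_sec1 hD1v.c2 d))
      ((cont_sec1 hD1P.c c).mul (cont_sec1 hD1v.c2 c)) a b
  -- l1 patterns
  have l1a : (∫ x in a..b, (lapl u x c - Pij x c) * (-(pd2 v00 x c - vg2B x)))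
      = -(∫ x in a..b, lapl u x c * pd2 v00 x c) + (∫ x in a..b, lapl u x c * vg2B x)
        + (∫ x in a..b, Pij x c * pd2 v00 x c) - ∫ x in a..b, Pij x c * vg2B x :=
    int_pat2 (cont_sec1 hD1w.c c) (cont_sec1 hD1P.c c) (cont_sec1 hD1v.c2 c)
      (isPk_cont hk2B) a b
  have l1b : (∫ x in a..b, (lapl u x d - Pij x d) * (pd2 v00 x d - vg2T x))
      = (∫ x in a..b, lapl u x d * pd2 v00 x d) - (∫ x in a..b, lapl u x d * vg2T x)
        - (∫ x in a..b, Pij x d * pd2 v00 x d) + ∫ x in a..b, Pij x d * vg2T x :=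
    int_pat1 (cont_sec1 hD1w.c d) (cont_sec1 hD1P.c d) (cont_sec1 hD1v.c2 d)
      (isPk_cont hk2T) a b
  have l1c : (∫ y in c..d, (lapl u a y - Pij a y) * (-(pd1 v00 a y - vg1L y)))
      = -(∫ y in c..d, lapl u a y * pd1 v00 a y) + (∫ y in c..d, lapl u a y * vg1L y)
        + (∫ y in c..d, Pij a y * pd1 v00 a y) - ∫ y in c..d, Pij a y * vg1L y :=
    int_pat2 (cont_sec2 hD1w.c a) (cont_sec2 hD1P.c a) (cont_sec2 hD1v.c1 a)
      (isPk_cont hk1L) c d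
  have l1d : (∫ y in c..d, (lapl u b y - Pij b y) * (pd1 v00 b y - vg1R y))
      = (∫ y in c..d, lapl u b y * pd1 v00 b y) - (∫ y in c..d, lapl u b y * vg1R y)
        - (∫ y in c..d, Pij b y * pd1 v00 b y) + ∫ y in c..d, Pij b y * vg1R y :=
    int_pat1 (cont_sec2 hD1w.c b) (cont_sec2 hD1P.c b) (cont_sec2 hD1v.c1 b)
      (isPk_cont hk1R) c d
  -- l2 patterns
  have l2a : (∫ x in a..b, (-(pd2 (fun s t => lapl u s t - Pij s t) x c)) * (v00 x c - vbB x))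
      = -(∫ x in a..b, pd2 (lapl u) x c * v00 x c) + (∫ x in a..b, pd2 (lapl u) x c * vbB x)
        + (∫ x in a..b, pd2 Pij x c * v00 x c) - ∫ x in a..b, pd2 Pij x c * vbB x := by
    rw [intervalIntegral.integral_congr
      (g := fun x => (-(pd2 (lapl u) x c - pd2 Pij x c)) * (v00 x c - vbB x))
      (fun x _ => by rw [pd2_sub hD1w hD1P])]
    exact int_pat3 (cont_sec1 hD1w.c2 c) (cont_sec1 hD1P.c2 c) (cont_sec1 hD1v.c c)
      (isPk_cont hkB) a b
  have l2b : (∫ x in a..b, (pd2 (fun s t => lapl u s t - Pij s t) x d) * (v00 x d - vbT x))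
      = (∫ x in a..b, pd2 (lapl u) x d * v00 x d) - (∫ x in a..b, pd2 (lapl u) x d * vbT x)
        - (∫ x in a..b, pd2 Pij x d * v00 x d) + ∫ x in a..b, pd2 Pij x d * vbT x := by
    rw [intervalIntegral.integral_congr
      (g := fun x => (pd2 (lapl u) x d - pd2 Pij x d) * (v00 x d - vbT x))
      (fun x _ => by rw [pd2_sub hD1w hD1P])]
    exact int_pat1 (cont_sec1 hD1w.c2 d) (cont_sec1 hD1P.c2 d) (cont_sec1 hD1v.c d)
      (isPk_cont hkT) a b
  have l2c : (∫ y in c..d, (-(pd1 (fun s t => lapl u s t - Pij s t) a y)) * (v00 a y - vbL y))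
      = -(∫ y in c..d, pd1 (lapl u) a y * v00 a y) + (∫ y in c..d, pd1 (lapl u) a y * vbL y)
        + (∫ y in c..d, pd1 Pij a y * v00 a y) - ∫ y in c..d, pd1 Pij a y * vbL y := by
    rw [intervalIntegral.integral_congr
      (g := fun y => (-(pd1 (lapl u) a y - pd1 Pij a y)) * (v00 a y - vbL y))
      (fun y _ => by rw [pd1_sub hD1w hD1P])]
    exact int_pat3 (cont_sec2 hD1w.c1 a) (cont_sec2 hD1P.c1 a) (cont_sec2 hD1v.c a)
      (isPk_cont hkL) c d
  have l2d : (∫ y in c..d, (pd1 (fun s t => lapl u s t - Pij s t) b y) * (v00 b y - vbR y))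
      = (∫ y in c..d, pd1 (lapl u) b y * v00 b y) - (∫ y in c..d, pd1 (lapl u) b y * vbR y)
        - (∫ y in c..d, pd1 Pij b y * v00 b y) + ∫ y in c..d, pd1 Pij b y * vbR y := by
    rw [intervalIntegral.integral_congr
      (g := fun y => (pd1 (lapl u) b y - pd1 Pij b y) * (v00 b y - vbR y))
      (fun y _ => by rw [pd1_sub hD1w hD1P])]
    exact int_pat1 (cont_sec2 hD1w.c1 b) (cont_sec2 hD1P.c1 b) (cont_sec2 hD1v.c b)
      (isPk_cont hkR) c d
  rw [hDvP, hcomm, d1, d2, d3, d4, e1, e2, e3, e4, g1, g2, korth,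
    sw1, sw2, sw3, sw4, sp1, sp2, sp3, sp4, l1a, l1b, l1c, l1d, l2a, l2b, l2c, l2d]
  ring

end WGaux
namespace WGaux

open MeasureTheory intervalIntegral

lemma elemCgrad {k : ℕ} {a b c d : ℝ} (hab : a ≤ b) (hcd : c ≤ d)
    {u : ℝ → ℝ → ℝ} (hD1u : D1 u) (hD1p1u : D1 (pd1 u)) (hD1p2u : D1 (pd2 u))
    {P1ij P2ij : ℝ → ℝ → ℝ}
    (hP1 : IsProjT k a b c d (pd1 u) P1ij) (hP2 : IsProjT k a b c d (pd2 u) P2ij)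
    {v00 : ℝ → ℝ → ℝ} (hq0 : IsQk k v00)
    {vbB vbT vbL vbR : ℝ → ℝ}
    (hkB : IsPk k vbB) (hkT : IsPk k vbT) (hkL : IsPk k vbL) (hkR : IsPk k vbR)
    {G1v G2v : ℝ → ℝ → ℝ}
    (hGvP : ipT a b c d G1v P1ij + ipT a b c d G2v P2ij =
        -(ipT a b c d v00 (fun x y => pd1 P1ij x y + pd2 P2ij x y))
          + ((∫ x in a..b, vbB x * (-(P2ij x c))) + (∫ x in a..b, vbT x * P2ij x d)
            + (∫ y in c..d, vbL y * (-(P1ij a y))) + (∫ y in c..d, vbR y * P1ij b y))) :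
    ipT a b c d G1v P1ij + ipT a b c d G2v P2ij
      + (∫ x in a..b, ∫ y in c..d, lapl u x y * v00 x y)
    = ((∫ x in a..b, (-(pd2 u x c - P2ij x c)) * (v00 x c - vbB x))
        + (∫ x in a..b, (pd2 u x d - P2ij x d) * (v00 x d - vbT x))
        + (∫ y in c..d, (-(pd1 u a y - P1ij a y)) * (v00 a y - vbL y))
        + (∫ y in c..d, (pd1 u b y - P1ij b y) * (v00 b y - vbR y)))
      + (-(∫ x in a..b, pd2 u x c * vbB x) + (∫ x in a..b, pd2 u x d * vbT x)
        - (∫ y in c..d, pd1 u a y * vbL y) + (∫ y in c..d, pd1 u b y * vbR y)) := by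
  have hD1v := isQk_D1 hq0
  have hD1P1 := isQk_D1 hP1.1
  have hD1P2 := isQk_D1 hP2.1
  have hvolsplit : (∫ x in a..b, ∫ y in c..d, lapl u x y * v00 x y)
      = (∫ x in a..b, ∫ y in c..d, pd1 (pd1 u) x y * v00 x y)
        + ∫ x in a..b, ∫ y in c..d, pd2 (pd2 u) x y * v00 x y := by
    rw [← dint_add (hD1p1u.c1.mul hD1v.c) (hD1p2u.c2.mul hD1v.c)]
    exact dint_congr fun x y => by simp only [lapl]; ring
  have i1 := ibp1 hD1p1u hD1v hab hcd
  have i2 := ibp2 hD1p2u hD1v a b c d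
  have iP1 := ibp1 hD1P1 hD1v hab hcd
  have iP2 := ibp2 hD1P2 hD1v a b c d
  have orth1 : (∫ x in a..b, ∫ y in c..d, pd1 u x y * pd1 v00 x y)
      = ∫ x in a..b, ∫ y in c..d, P1ij x y * pd1 v00 x y := by
    have h := projT_swap hP1 (isQk_pd1 hq0) hD1u.c1
    simp only [ipT] at h
    exact h.symm
  have orth2 : (∫ x in a..b, ∫ y in c..d, pd2 u x y * pd2 v00 x y)
      = ∫ x in a..b, ∫ y in c..d, P2ij x y * pd2 v00 x y := by
    have h := projT_swap hP2 (isQk_pd2 hq0) hD1u.c2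
    simp only [ipT] at h
    exact h.symm
  have hdist : ipT a b c d v00 (fun x y => pd1 P1ij x y + pd2 P2ij x y)
      = (∫ x in a..b, ∫ y in c..d, pd1 P1ij x y * v00 x y)
        + ∫ x in a..b, ∫ y in c..d, pd2 P2ij x y * v00 x y := by
    simp only [ipT]
    rw [← dint_add (hD1P1.c1.mul hD1v.c) (hD1P2.c2.mul hD1v.c)]
    exact dint_congr fun x y => by ring
  have m1 : (∫ x in a..b, vbB x * (-(P2ij x c))) = -∫ x in a..b, P2ij x c * vbB x := by
    rw [int_mulneg, int_comm1]
  have m2 : (∫ x in a..b, vbT x * P2ij x d) = ∫ x in a..b, P2ij x d * vbT x := by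
    rw [int_comm1]
  have m3 : (∫ y in c..d, vbL y * (-(P1ij a y))) = -∫ y in c..d, P1ij a y * vbL y := by
    rw [int_mulneg, int_comm1]
  have m4 : (∫ y in c..d, vbR y * P1ij b y) = ∫ y in c..d, P1ij b y * vbR y := by
    rw [int_comm1]
  have su1 : (∫ y in c..d, (pd1 u b y * v00 b y - pd1 u a y * v00 a y))
      = (∫ y in c..d, pd1 u b y * v00 b y) - ∫ y in c..d, pd1 u a y * v00 a y :=
    int_sub1 ((cont_sec2 hD1u.c1 b).mul (cont_sec2 hD1v.c b))
      ((cont_sec2 hD1u.c1 a).mul (cont_sec2 hD1v.c a)) c d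
  have su2 : (∫ x in a..b, (pd2 u x d * v00 x d - pd2 u x c * v00 x c))
      = (∫ x in a..b, pd2 u x d * v00 x d) - ∫ x in a..b, pd2 u x c * v00 x c :=
    int_sub1 ((cont_sec1 hD1u.c2 d).mul (cont_sec1 hD1v.c d))
      ((cont_sec1 hD1u.c2 c).mul (cont_sec1 hD1v.c c)) a b
  have sQ1 : (∫ y in c..d, (P1ij b y * v00 b y - P1ij a y * v00 a y))
      = (∫ y in c..d, P1ij b y * v00 b y) - ∫ y in c..d, P1ij a y * v00 a y :=
    int_sub1 ((cont_sec2 hD1P1.c b).mul (cont_sec2 hD1v.c b))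
      ((cont_sec2 hD1P1.c a).mul (cont_sec2 hD1v.c a)) c d
  have sQ2 : (∫ x in a..b, (P2ij x d * v00 x d - P2ij x c * v00 x c))
      = (∫ x in a..b, P2ij x d * v00 x d) - ∫ x in a..b, P2ij x c * v00 x c :=
    int_sub1 ((cont_sec1 hD1P2.c d).mul (cont_sec1 hD1v.c d))
      ((cont_sec1 hD1P2.c c).mul (cont_sec1 hD1v.c c)) a b
  have t1 : (∫ x in a..b, (-(pd2 u x c - P2ij x c)) * (v00 x c - vbB x))
      = -(∫ x in a..b, pd2 u x c * v00 x c) + (∫ x in a..b, pd2 u x c * vbB x)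
        + (∫ x in a..b, P2ij x c * v00 x c) - ∫ x in a..b, P2ij x c * vbB x :=
    int_pat3 (cont_sec1 hD1u.c2 c) (cont_sec1 hD1P2.c c) (cont_sec1 hD1v.c c)
      (isPk_cont hkB) a b
  have t2 : (∫ x in a..b, (pd2 u x d - P2ij x d) * (v00 x d - vbT x))
      = (∫ x in a..b, pd2 u x d * v00 x d) - (∫ x in a..b, pd2 u x d * vbT x)
        - (∫ x in a..b, P2ij x d * v00 x d) + ∫ x in a..b, P2ij x d * vbT x :=
    int_pat1 (cont_sec1 hD1u.c2 d) (cont_sec1 hD1P2.c d) (cont_sec1 hD1v.c d)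
      (isPk_cont hkT) a b
  have t3 : (∫ y in c..d, (-(pd1 u a y - P1ij a y)) * (v00 a y - vbL y))
      = -(∫ y in c..d, pd1 u a y * v00 a y) + (∫ y in c..d, pd1 u a y * vbL y)
        + (∫ y in c..d, P1ij a y * v00 a y) - ∫ y in c..d, P1ij a y * vbL y :=
    int_pat3 (cont_sec2 hD1u.c1 a) (cont_sec2 hD1P1.c a) (cont_sec2 hD1v.c a)
      (isPk_cont hkL) c d
  have t4 : (∫ y in c..d, (pd1 u b y - P1ij b y) * (v00 b y - vbR y))
      = (∫ y in c..d, pd1 u b y * v00 b y) - (∫ y in c..d, pd1 u b y * vbR y)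
        - (∫ y in c..d, P1ij b y * v00 b y) + ∫ y in c..d, P1ij b y * vbR y :=
    int_pat1 (cont_sec2 hD1u.c1 b) (cont_sec2 hD1P1.c b) (cont_sec2 hD1v.c b)
      (isPk_cont hkR) c d
  rw [hGvP, hdist, m1, m2, m3, m4, hvolsplit, i1, i2, iP1, iP2, orth1, orth2,
    su1, su2, sQ1, sQ2, t1, t2, t3, t4]
  ring

end WGaux
namespace WGaux

open MeasureTheory intervalIntegral

/-- telescope atoms -/
def tAH (X : ℕ → ℝ) (u : ℝ → ℝ → ℝ) (v : WGFun) (i j : ℕ) : ℝ :=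
  ∫ x in X i..X (i+1), lapl u x (X j) * v.vgH2 i j x
def tAV (X : ℕ → ℝ) (u : ℝ → ℝ → ℝ) (v : WGFun) (i j : ℕ) : ℝ :=
  ∫ y in X j..X (j+1), lapl u (X i) y * v.vgV1 i j y
def tBH (X : ℕ → ℝ) (u : ℝ → ℝ → ℝ) (v : WGFun) (i j : ℕ) : ℝ :=
  ∫ x in X i..X (i+1), pd2 (lapl u) x (X j) * v.vbH i j x
def tBV (X : ℕ → ℝ) (u : ℝ → ℝ → ℝ) (v : WGFun) (i j : ℕ) : ℝ :=
  ∫ y in X j..X (j+1), pd1 (lapl u) (X i) y * v.vbV i j y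
def tWH (X : ℕ → ℝ) (u : ℝ → ℝ → ℝ) (v : WGFun) (i j : ℕ) : ℝ :=
  ∫ x in X i..X (i+1), pd2 u x (X j) * v.vbH i j x
def tWV (X : ℕ → ℝ) (u : ℝ → ℝ → ℝ) (v : WGFun) (i j : ℕ) : ℝ :=
  ∫ y in X j..X (j+1), pd1 u (X i) y * v.vbV i j y

lemma telesumH {N : ℕ} (A : ℕ → ℕ → ℝ) (h0 : ∀ i, i < N → A i 0 = 0)
    (hNz : ∀ i, i < N → A i N = 0) :
    (∑ i ∈ Finset.range N, ∑ j ∈ Finset.range N, (A i (j+1) - A i j)) = 0 := by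
  refine Finset.sum_eq_zero fun i hi => ?_
  rw [Finset.sum_range_sub (f := fun j => A i j), h0 i (Finset.mem_range.1 hi),
    hNz i (Finset.mem_range.1 hi)]
  ring

lemma telesumV {N : ℕ} (A : ℕ → ℕ → ℝ) (h0 : ∀ j, j < N → A 0 j = 0)
    (hNz : ∀ j, j < N → A N j = 0) :
    (∑ i ∈ Finset.range N, ∑ j ∈ Finset.range N, (A (i+1) j - A i j)) = 0 := by
  rw [Finset.sum_comm]
  refine Finset.sum_eq_zero fun j hj => ?_
  rw [Finset.sum_range_sub (f := fun i => A i j), h0 j (Finset.mem_range.1 hj),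
    hNz j (Finset.mem_range.1 hj)]
  ring

lemma sum2_split3 {N : ℕ} (A B C : ℕ → ℕ → ℝ) :
    (∑ i ∈ Finset.range N, ∑ j ∈ Finset.range N, (A i j - B i j + C i j))
    = (∑ i ∈ Finset.range N, ∑ j ∈ Finset.range N, A i j)
      - (∑ i ∈ Finset.range N, ∑ j ∈ Finset.range N, B i j)
      + ∑ i ∈ Finset.range N, ∑ j ∈ Finset.range N, C i j := by
  calc (∑ i ∈ Finset.range N, ∑ j ∈ Finset.range N, (A i j - B i j + C i j))
      = ∑ i ∈ Finset.range N, ((∑ j ∈ Finset.range N, A i j)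
          - (∑ j ∈ Finset.range N, B i j) + ∑ j ∈ Finset.range N, C i j) :=
        Finset.sum_congr rfl fun i _ => by
          rw [Finset.sum_add_distrib, Finset.sum_sub_distrib]
    _ = _ := by rw [Finset.sum_add_distrib, Finset.sum_sub_distrib]

lemma sum2_split2 {N : ℕ} (A B : ℕ → ℕ → ℝ) :
    (∑ i ∈ Finset.range N, ∑ j ∈ Finset.range N, (A i j + B i j))
    = (∑ i ∈ Finset.range N, ∑ j ∈ Finset.range N, A i j)
      + ∑ i ∈ Finset.range N, ∑ j ∈ Finset.range N, B i j := by
  calc (∑ i ∈ Finset.range N, ∑ j ∈ Finset.range N, (A i j + B i j))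
      = ∑ i ∈ Finset.range N, ((∑ j ∈ Finset.range N, A i j)
          + ∑ j ∈ Finset.range N, B i j) :=
        Finset.sum_congr rfl fun i _ => Finset.sum_add_distrib
    _ = _ := Finset.sum_add_distrib

lemma sum2_mul {N : ℕ} (r : ℝ) (A : ℕ → ℕ → ℝ) :
    (∑ i ∈ Finset.range N, ∑ j ∈ Finset.range N, r * A i j)
    = r * ∑ i ∈ Finset.range N, ∑ j ∈ Finset.range N, A i j := by
  simp only [← Finset.mul_sum]

lemma int_pat6 {A B C D V : ℝ → ℝ} (hA : Continuous A) (hB : Continuous B)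
    (hC : Continuous C) (hD : Continuous D) (hV : Continuous V) (a b : ℝ) :
    (∫ t in a..b, ((A t - B t) - (C t - D t)) * V t)
      = (∫ t in a..b, (A t - C t) * V t) - ∫ t in a..b, (B t - D t) * V t := by
  rw [intervalIntegral.integral_congr
    (g := fun t => (A t - C t) * V t - (B t - D t) * V t) (fun t _ => by ring),
    int_sub1 ((hA.fun_sub hC).fun_mul hV) ((hB.fun_sub hD).fun_mul hV)]

lemma int_pat7 {A B C D V A' B' C' D' V' : ℝ → ℝ} (hA : Continuous A) (hB : Continuous B)
    (hC : Continuous C) (hD : Continuous D) (hV : Continuous V) (hA' : Continuous A')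
    (hB' : Continuous B') (hC' : Continuous C') (hD' : Continuous D') (hV' : Continuous V')
    (a b : ℝ) :
    (∫ t in a..b, (((A t - B t) - (C t - D t)) * V t
        + ((A' t - B' t) - (C' t - D' t)) * V' t))
      = (∫ t in a..b, ((A t - C t) * V t + (A' t - C' t) * V' t))
        - ∫ t in a..b, ((B t - D t) * V t + (B' t - D' t) * V' t) := by
  rw [intervalIntegral.integral_congr
    (g := fun t => ((A t - C t) * V t + (A' t - C' t) * V' t)
      - ((B t - D t) * V t + (B' t - D' t) * V' t)) (fun t _ => by ring),
    int_sub1 (((hA.fun_sub hC).fun_mul hV).fun_add ((hA'.fun_sub hC').fun_mul hV'))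
      (((hB.fun_sub hD).fun_mul hV).fun_add ((hB'.fun_sub hD').fun_mul hV'))]

end WGaux
namespace WGaux

open MeasureTheory intervalIntegral

def dH (A : ℕ → ℕ → ℝ) (i j : ℕ) : ℝ := A i (j+1) - A i j
def dV (A : ℕ → ℕ → ℝ) (i j : ℕ) : ℝ := A (i+1) j - A i j

lemma telesumH' {N : ℕ} (A : ℕ → ℕ → ℝ) (h0 : ∀ i, i < N → A i 0 = 0)
    (hNz : ∀ i, i < N → A i N = 0) :
    (∑ i ∈ Finset.range N, ∑ j ∈ Finset.range N, dH A i j) = 0 :=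
  telesumH A h0 hNz

lemma telesumV' {N : ℕ} (A : ℕ → ℕ → ℝ) (h0 : ∀ j, j < N → A 0 j = 0)
    (hNz : ∀ j, j < N → A N j = 0) :
    (∑ i ∈ Finset.range N, ∑ j ∈ Finset.range N, dV A i j) = 0 :=
  telesumV A h0 hNz

lemma int_zero_of_zero {F G : ℝ → ℝ} (h : ∀ x, G x = 0) (a b : ℝ) :
    (∫ x in a..b, F x * G x) = 0 := by
  rw [intervalIntegral.integral_congr (g := fun _ => (0:ℝ)) (fun x _ => by rw [h x, mul_zero])]
  simp

def l1S (X : ℕ → ℝ) (ε : ℝ) (u : ℝ → ℝ → ℝ) (P : ℕ → ℕ → ℝ → ℝ → ℝ) (v : WGFun)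
    (i j : ℕ) : ℝ :=
  ε ^ 2 *
    ((∫ x in (X i)..(X (i+1)),
        (lapl u x (X j) - P i j x (X j)) * (-(pd2 (v.v0 i j) x (X j) - v.vgH2 i j x)))
      + (∫ x in (X i)..(X (i+1)),
        (lapl u x (X (j+1)) - P i j x (X (j+1)))
          * (pd2 (v.v0 i j) x (X (j+1)) - v.vgH2 i (j+1) x))
      + (∫ y in (X j)..(X (j+1)),
        (lapl u (X i) y - P i j (X i) y) * (-(pd1 (v.v0 i j) (X i) y - v.vgV1 i j y)))
      + (∫ y in (X j)..(X (j+1)),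
        (lapl u (X (i+1)) y - P i j (X (i+1)) y)
          * (pd1 (v.v0 i j) (X (i+1)) y - v.vgV1 (i+1) j y)))

def l2S (X : ℕ → ℝ) (ε : ℝ) (u : ℝ → ℝ → ℝ) (P : ℕ → ℕ → ℝ → ℝ → ℝ) (v : WGFun)
    (i j : ℕ) : ℝ :=
  ε ^ 2 *
    ((∫ x in (X i)..(X (i+1)),
        (-(pd2 (fun a b => lapl u a b - P i j a b) x (X j)))
          * (v.v0 i j x (X j) - v.vbH i j x))
      + (∫ x in (X i)..(X (i+1)),
        (pd2 (fun a b => lapl u a b - P i j a b) x (X (j+1)))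
          * (v.v0 i j x (X (j+1)) - v.vbH i (j+1) x))
      + (∫ y in (X j)..(X (j+1)),
        (-(pd1 (fun a b => lapl u a b - P i j a b) (X i) y))
          * (v.v0 i j (X i) y - v.vbV i j y))
      + (∫ y in (X j)..(X (j+1)),
        (pd1 (fun a b => lapl u a b - P i j a b) (X (i+1)) y)
          * (v.v0 i j (X (i+1)) y - v.vbV (i+1) j y)))

def l3S (X : ℕ → ℝ) (u : ℝ → ℝ → ℝ) (P1 P2 : ℕ → ℕ → ℝ → ℝ → ℝ) (v : WGFun)
    (i j : ℕ) : ℝ :=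
  ((∫ x in (X i)..(X (i+1)),
      (-(pd2 u x (X j) - P2 i j x (X j))) * (v.v0 i j x (X j) - v.vbH i j x))
    + (∫ x in (X i)..(X (i+1)),
      (pd2 u x (X (j+1)) - P2 i j x (X (j+1))) * (v.v0 i j x (X (j+1)) - v.vbH i (j+1) x))
    + (∫ y in (X j)..(X (j+1)),
      (-(pd1 u (X i) y - P1 i j (X i) y)) * (v.v0 i j (X i) y - v.vbV i j y))
    + (∫ y in (X j)..(X (j+1)),
      (pd1 u (X (i+1)) y - P1 i j (X (i+1)) y) * (v.v0 i j (X (i+1)) y - v.vbV (i+1) j y)))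

def mpS (X : ℕ → ℝ) (ε : ℝ) (u : ℝ → ℝ → ℝ) (P P1 P2 : ℕ → ℕ → ℝ → ℝ → ℝ) (v : WGFun)
    (i j : ℕ) : ℝ :=
  l1S X ε u P v i j - l2S X ε u P v i j + l3S X u P1 P2 v i j

def tpS (X : ℕ → ℝ) (ε : ℝ) (u : ℝ → ℝ → ℝ) (v : WGFun) (i j : ℕ) : ℝ :=
  (ε ^ 2 * (dH (tAH X u v) i j + dV (tAV X u v) i j)
    - ε ^ 2 * (dH (tBH X u v) i j + dV (tBV X u v) i j))
    + (dH (tWH X u v) i j + dV (tWV X u v) i j)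

lemma lForm1_eq (N : ℕ) (X : ℕ → ℝ) (ε : ℝ) (u : ℝ → ℝ → ℝ)
    (P : ℕ → ℕ → ℝ → ℝ → ℝ) (v : WGFun) :
    lForm1 N X ε u P v = ∑ i ∈ Finset.range N, ∑ j ∈ Finset.range N, l1S X ε u P v i j := rfl

lemma lForm2_eq (N : ℕ) (X : ℕ → ℝ) (ε : ℝ) (u : ℝ → ℝ → ℝ)
    (P : ℕ → ℕ → ℝ → ℝ → ℝ) (v : WGFun) :
    lForm2 N X ε u P v = ∑ i ∈ Finset.range N, ∑ j ∈ Finset.range N, l2S X ε u P v i j := rfl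

lemma lForm3_eq (N : ℕ) (X : ℕ → ℝ) (u : ℝ → ℝ → ℝ)
    (P1 P2 : ℕ → ℕ → ℝ → ℝ → ℝ) (v : WGFun) :
    lForm3 N X u P1 P2 v = ∑ i ∈ Finset.range N, ∑ j ∈ Finset.range N, l3S X u P1 P2 v i j := rfl

end WGaux
open WGaux in
/-- the error equation (5.1):
`a(e_N, v) = l₁(u,v) − l₂(u,v) + l₃(u,v) + s(Q_N u, v)` for all `v ∈ V_N⁰`,
where `e_N = Q_N u − u_N` and `u_N ∈ V_N⁰` is the WG solution of the scheme. -/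
theorem statement14 (k : ℕ) (hk : 3 ≤ k) (N : ℕ) (hN : 4 ≤ N) (hN4 : 4 ∣ N)
    (ε : ℝ) (hε0 : 0 < ε) (hε1 : ε < 1) (hlam : shLam k N ε ≤ 1 / 4)
    (X : ℕ → ℝ) (hX : X = shPt k N ε)
    (h H : ℝ) (hh : h = shH k N ε) (hH : H = shHc k N ε)
    -- the exact solution u
    (u : ℝ → ℝ → ℝ) (hu : ContDiff ℝ 4 (fun p : ℝ × ℝ => u p.1 p.2))
    (hub : ∀ t ∈ Set.Icc (0:ℝ) 1, u t 0 = 0 ∧ u t 1 = 0 ∧ u 0 t = 0 ∧ u 1 t = 0)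
    (hun : ∀ t ∈ Set.Icc (0:ℝ) 1,
      pd2 u t 0 = 0 ∧ pd2 u t 1 = 0 ∧ pd1 u 0 t = 0 ∧ pd1 u 1 t = 0)
    -- the WG solution u_N with its discrete weak Laplacian and gradient
    (uN : WGFun) (huN : MemVN0 k N uN)
    (DuN GuN1 GuN2 : ℕ → ℕ → ℝ → ℝ → ℝ)
    (hDuN : IsWeakLap k N X uN DuN)
    (hGuN : IsWeakGrad k N X uN GuN1 GuN2)
    -- the WG scheme: a(u_N, w) = (f, w₀) for all w ∈ V_N⁰, with f = ε²Δ²u − Δu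
    (hscheme : ∀ w : WGFun, MemVN0 k N w →
      ∀ Dw Gw1 Gw2 : ℕ → ℕ → ℝ → ℝ → ℝ,
        IsWeakLap k N X w Dw → IsWeakGrad k N X w Gw1 Gw2 →
        aForm N X ε h H uN w DuN Dw GuN1 GuN2 Gw1 Gw2 =
          ∑ i ∈ Finset.range N, ∑ j ∈ Finset.range N,
            ipT (X i) (X (i+1)) (X j) (X (j+1))
              (fun x y => ε ^ 2 * lapl (lapl u) x y - lapl u x y) (w.v0 i j))
    -- the projection Q_N u with its discrete weak Laplacian and gradient
    (Qu : WGFun) (hQu : IsQNProj k N X u Qu)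
    (DQ GQ1 GQ2 : ℕ → ℕ → ℝ → ℝ → ℝ)
    (hDQ : IsWeakLap k N X Qu DQ)
    (hGQ : IsWeakGrad k N X Qu GQ1 GQ2)
    -- the elementwise projections Q₀(Δu) and 𝐐_N(∇u)
    (P P1 P2 : ℕ → ℕ → ℝ → ℝ → ℝ)
    (hP : ∀ i < N, ∀ j < N,
      IsProjT k (X i) (X (i+1)) (X j) (X (j+1)) (lapl u) (P i j))
    (hP12 : ∀ i < N, ∀ j < N,
      IsProjT k (X i) (X (i+1)) (X j) (X (j+1)) (pd1 u) (P1 i j) ∧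
      IsProjT k (X i) (X (i+1)) (X j) (X (j+1)) (pd2 u) (P2 i j)) :
    -- conclusion: the error equation holds for every v ∈ V_N⁰
    ∀ v : WGFun, MemVN0 k N v →
      ∀ Dv Gv1 Gv2 : ℕ → ℕ → ℝ → ℝ → ℝ,
        IsWeakLap k N X v Dv → IsWeakGrad k N X v Gv1 Gv2 →
        aForm N X ε h H (Qu.sub uN) v
            (fun i j x y => DQ i j x y - DuN i j x y) Dv
            (fun i j x y => GQ1 i j x y - GuN1 i j x y)
            (fun i j x y => GQ2 i j x y - GuN2 i j x y) Gv1 Gv2 =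
          lForm1 N X ε u P v - lForm2 N X ε u P v + lForm3 N X u P1 P2 v
            + stab N X ε h H Qu v := by

  intro v hv Dv Gv1 Gv2 hDv hGv
  obtain ⟨q, hqN⟩ := hN4
  have hq1 : 1 ≤ q := by omega
  have hlam0 : 0 ≤ shLam k N ε := by
    have hlog : 0 ≤ Real.log N := Real.log_nonneg (by exact_mod_cast (by omega : 1 ≤ N))
    have hk0 : (0:ℝ) ≤ (k:ℝ) + 1 := by positivity
    exact mul_nonneg (mul_nonneg hk0 hε0.le) hlog
  have hmono : ∀ i : ℕ, X i ≤ X (i+1) := by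
    intro i
    rw [hX]
    exact meshPt_mono hqN hq1 hlam0 hlam i
  -- regularity tower for u
  have hu4 : ContDiff ℝ 4 (unc u) := hu
  have hp1u3 : ContDiff ℝ 3 (unc (pd1 u)) := contDiff_pd1 (hu4.of_le (by norm_num))
  have hp2u3 : ContDiff ℝ 3 (unc (pd2 u)) := contDiff_pd2 (hu4.of_le (by norm_num))
  have hp11 : ContDiff ℝ 2 (unc (pd1 (pd1 u))) := contDiff_pd1 (hp1u3.of_le (by norm_num))
  have hp22 : ContDiff ℝ 2 (unc (pd2 (pd2 u))) := contDiff_pd2 (hp2u3.of_le (by norm_num))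
  have hw2 : ContDiff ℝ 2 (unc (lapl u)) := hp11.add hp22
  have hw11 : ContDiff ℝ 1 (unc (pd1 (lapl u))) := contDiff_pd1 (hw2.of_le (by norm_num))
  have hw21 : ContDiff ℝ 1 (unc (pd2 (lapl u))) := contDiff_pd2 (hw2.of_le (by norm_num))
  have D1u : D1 u := contDiff_D1 (hu4.of_le (by norm_num))
  have D1p1u : D1 (pd1 u) := contDiff_D1 (hp1u3.of_le (by norm_num))
  have D1p2u : D1 (pd2 u) := contDiff_D1 (hp2u3.of_le (by norm_num))
  have D1w : D1 (lapl u) := contDiff_D1 (hw2.of_le (by norm_num))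
  have D1w1 : D1 (pd1 (lapl u)) := contDiff_D1 hw11
  have D1w2 : D1 (pd2 (lapl u)) := contDiff_D1 hw21
  have hcLL : Continuous (unc (lapl (lapl u))) := D1w1.c1.add D1w2.c2
  -- the element identity
  have EI : ∀ i, i < N → ∀ j, j < N →
      (ε ^ 2 * ipT (X i) (X (i+1)) (X j) (X (j+1)) (DQ i j) (Dv i j)
        + ipT (X i) (X (i+1)) (X j) (X (j+1)) (GQ1 i j) (Gv1 i j)
        + ipT (X i) (X (i+1)) (X j) (X (j+1)) (GQ2 i j) (Gv2 i j))
      - ipT (X i) (X (i+1)) (X j) (X (j+1))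
          (fun x y => ε ^ 2 * lapl (lapl u) x y - lapl u x y) (v.v0 i j)
      = mpS X ε u P P1 P2 v i j + tpS X ε u v i j := by
    intro i hi j hj
    have hab := hmono i
    have hcd := hmono j
    have hQDv : IsQk k (Dv i j) := (hDv i hi j hj).1
    have hQGv1 : IsQk k (Gv1 i j) := (hGv i hi j hj).1
    have hQGv2 : IsQk k (Gv2 i j) := (hGv i hi j hj).2.1
    have hQv0 : IsQk k (v.v0 i j) := hv.1.1 i hi j hj
    have hPij := hP i hi j hj
    have hP1ij := (hP12 i hi j hj).1
    have hP2ij := (hP12 i hi j hj).2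
    have hvbB : IsPk k (v.vbH i j) := (hv.1.2.1 i hi j (Nat.le_of_lt hj)).1
    have hvbT : IsPk k (v.vbH i (j+1)) := (hv.1.2.1 i hi (j+1) hj).1
    have hvbL : IsPk k (v.vbV i j) := (hv.1.2.2 i (Nat.le_of_lt hi) j hj).1
    have hvbR : IsPk k (v.vbV (i+1) j) := (hv.1.2.2 (i+1) hi j hj).1
    have hvg2B : IsPk k (v.vgH2 i j) := (hv.1.2.1 i hi j (Nat.le_of_lt hj)).2.2
    have hvg2T : IsPk k (v.vgH2 i (j+1)) := (hv.1.2.1 i hi (j+1) hj).2.2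
    have hvg1L : IsPk k (v.vgV1 i j) := (hv.1.2.2 i (Nat.le_of_lt hi) j hj).2.1
    have hvg1R : IsPk k (v.vgV1 (i+1) j) := (hv.1.2.2 (i+1) hi j hj).2.1
    have eA : ipT (X i) (X (i+1)) (X j) (X (j+1)) (DQ i j) (Dv i j)
        = ipT (X i) (X (i+1)) (X j) (X (j+1)) (P i j) (Dv i j) :=
      elemA hab hcd D1u D1p1u D1p2u D1w.c (hQu.1 i hi j hj)
        (hQu.2.1 i hi j (Nat.le_of_lt hj)).1 (hQu.2.1 i hi (j+1) hj).1
        (hQu.2.2 i (Nat.le_of_lt hi) j hj).1 (hQu.2.2 (i+1) hi j hj).1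
        (hQu.2.1 i hi j (Nat.le_of_lt hj)).2.2 (hQu.2.1 i hi (j+1) hj).2.2
        (hQu.2.2 i (Nat.le_of_lt hi) j hj).2.1 (hQu.2.2 (i+1) hi j hj).2.1
        hPij hQDv ((hDQ i hi j hj).2 (Dv i j) hQDv)
    have ecomm := ipT_comm (X i) (X (i+1)) (X j) (X (j+1)) (P i j) (Dv i j)
    have eClap := elemClap hab hcd D1w D1w1 D1w2 hPij hQv0
      hvbB hvbT hvbL hvbR hvg2B hvg2T hvg1L hvg1R
      ((hDv i hi j hj).2 (P i j) hPij.1)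
    have hgq1 := (hGQ i hi j hj).2.2 (Gv1 i j) (fun _ _ => 0) hQGv1 (isQk_zero k)
    simp only [ipT_zero_right, pd2_zero, pd1_zero, neg_zero, mul_zero, zero_mul,
      intervalIntegral.integral_zero, add_zero, zero_add] at hgq1
    have eB1 : ipT (X i) (X (i+1)) (X j) (X (j+1)) (GQ1 i j) (Gv1 i j)
        = ipT (X i) (X (i+1)) (X j) (X (j+1)) (P1 i j) (Gv1 i j) :=
      elemB1 hab hcd D1u (hQu.1 i hi j hj)
        (hQu.2.2 i (Nat.le_of_lt hi) j hj).1 (hQu.2.2 (i+1) hi j hj).1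
        hP1ij hQGv1 hgq1
    have eB1c := ipT_comm (X i) (X (i+1)) (X j) (X (j+1)) (P1 i j) (Gv1 i j)
    have hgq2 := (hGQ i hi j hj).2.2 (fun _ _ => 0) (Gv2 i j) (isQk_zero k) hQGv2
    simp only [ipT_zero_right, pd2_zero, pd1_zero, neg_zero, mul_zero, zero_mul,
      intervalIntegral.integral_zero, add_zero, zero_add] at hgq2
    have eB2 : ipT (X i) (X (i+1)) (X j) (X (j+1)) (GQ2 i j) (Gv2 i j)
        = ipT (X i) (X (i+1)) (X j) (X (j+1)) (P2 i j) (Gv2 i j) :=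
      elemB2 hab hcd D1u (hQu.1 i hi j hj)
        (hQu.2.1 i hi j (Nat.le_of_lt hj)).1 (hQu.2.1 i hi (j+1) hj).1
        hP2ij hQGv2 hgq2
    have eB2c := ipT_comm (X i) (X (i+1)) (X j) (X (j+1)) (P2 i j) (Gv2 i j)
    have eCgrad := elemCgrad hab hcd D1u D1p1u D1p2u hP1ij hP2ij hQv0
      hvbB hvbT hvbL hvbR
      ((hGv i hi j hj).2.2 (P1 i j) (P2 i j) hP1ij.1 hP2ij.1)
    have ef := ipT_smul_sub_left (ε^2) hcLL D1w.c (isQk_cont hQv0)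
      (X i) (X (i+1)) (X j) (X (j+1))
    have eLL : ipT (X i) (X (i+1)) (X j) (X (j+1)) (lapl (lapl u)) (v.v0 i j)
        = ∫ x in (X i)..(X (i+1)), ∫ y in (X j)..(X (j+1)),
            lapl (lapl u) x y * v.v0 i j x y := rfl
    have eL : ipT (X i) (X (i+1)) (X j) (X (j+1)) (lapl u) (v.v0 i j)
        = ∫ x in (X i)..(X (i+1)), ∫ y in (X j)..(X (j+1)),
            lapl u x y * v.v0 i j x y := rfl
    simp only [mpS, l1S, l2S, l3S, tpS, dH, dV, tAH, tAV, tBH, tBV, tWH, tWV]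
    linear_combination (ε^2) * eA + (ε^2) * ecomm + (ε^2) * eClap + eB1 + eB1c
      + eB2 + eB2c + eCgrad - ef - (ε^2) * eLL + eL
  -- telescoping sums vanish
  have hAH0 : ∀ i, i < N → tAH X u v i 0 = 0 := fun i hi => by
    simp only [tAH]; exact int_zero_of_zero ((hv.2.1 i hi).2.2.1) _ _
  have hAHN : ∀ i, i < N → tAH X u v i N = 0 := fun i hi => by
    simp only [tAH]; exact int_zero_of_zero ((hv.2.1 i hi).2.2.2) _ _
  have hAV0 : ∀ j, j < N → tAV X u v 0 j = 0 := fun j hj => by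
    simp only [tAV]; exact int_zero_of_zero ((hv.2.2 j hj).2.2.1) _ _
  have hAVN : ∀ j, j < N → tAV X u v N j = 0 := fun j hj => by
    simp only [tAV]; exact int_zero_of_zero ((hv.2.2 j hj).2.2.2) _ _
  have hBH0 : ∀ i, i < N → tBH X u v i 0 = 0 := fun i hi => by
    simp only [tBH]; exact int_zero_of_zero ((hv.2.1 i hi).1) _ _
  have hBHN : ∀ i, i < N → tBH X u v i N = 0 := fun i hi => by
    simp only [tBH]; exact int_zero_of_zero ((hv.2.1 i hi).2.1) _ _
  have hBV0 : ∀ j, j < N → tBV X u v 0 j = 0 := fun j hj => by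
    simp only [tBV]; exact int_zero_of_zero ((hv.2.2 j hj).1) _ _
  have hBVN : ∀ j, j < N → tBV X u v N j = 0 := fun j hj => by
    simp only [tBV]; exact int_zero_of_zero ((hv.2.2 j hj).2.1) _ _
  have hWH0 : ∀ i, i < N → tWH X u v i 0 = 0 := fun i hi => by
    simp only [tWH]; exact int_zero_of_zero ((hv.2.1 i hi).1) _ _
  have hWHN : ∀ i, i < N → tWH X u v i N = 0 := fun i hi => by
    simp only [tWH]; exact int_zero_of_zero ((hv.2.1 i hi).2.1) _ _
  have hWV0 : ∀ j, j < N → tWV X u v 0 j = 0 := fun j hj => by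
    simp only [tWV]; exact int_zero_of_zero ((hv.2.2 j hj).1) _ _
  have hWVN : ∀ j, j < N → tWV X u v N j = 0 := fun j hj => by
    simp only [tWV]; exact int_zero_of_zero ((hv.2.2 j hj).2.1) _ _
  have t1 : (∑ i ∈ Finset.range N, ∑ j ∈ Finset.range N, dH (tAH X u v) i j) = 0 :=
    telesumH' _ hAH0 hAHN
  have t2 : (∑ i ∈ Finset.range N, ∑ j ∈ Finset.range N, dV (tAV X u v) i j) = 0 :=
    telesumV' _ hAV0 hAVN
  have t3 : (∑ i ∈ Finset.range N, ∑ j ∈ Finset.range N, dH (tBH X u v) i j) = 0 :=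
    telesumH' _ hBH0 hBHN
  have t4 : (∑ i ∈ Finset.range N, ∑ j ∈ Finset.range N, dV (tBV X u v) i j) = 0 :=
    telesumV' _ hBV0 hBVN
  have t5 : (∑ i ∈ Finset.range N, ∑ j ∈ Finset.range N, dH (tWH X u v) i j) = 0 :=
    telesumH' _ hWH0 hWHN
  have t6 : (∑ i ∈ Finset.range N, ∑ j ∈ Finset.range N, dV (tWV X u v) i j) = 0 :=
    telesumV' _ hWV0 hWVN
  have htp : (∑ i ∈ Finset.range N, ∑ j ∈ Finset.range N, tpS X ε u v i j) = 0 := by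
    have hc : (∑ i ∈ Finset.range N, ∑ j ∈ Finset.range N, tpS X ε u v i j)
        = ∑ i ∈ Finset.range N, ∑ j ∈ Finset.range N,
          (ε ^ 2 * dH (tAH X u v) i j + ε ^ 2 * dV (tAV X u v) i j
            - ε ^ 2 * dH (tBH X u v) i j - ε ^ 2 * dV (tBV X u v) i j
            + dH (tWH X u v) i j + dV (tWV X u v) i j) :=
      Finset.sum_congr rfl fun i _ => Finset.sum_congr rfl fun j _ => by
        simp only [tpS]; ring
    rw [hc]
    simp only [Finset.sum_add_distrib, Finset.sum_sub_distrib, ← Finset.mul_sum]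
    rw [t1, t2, t3, t4, t5, t6]
    ring
  have hmp : (∑ i ∈ Finset.range N, ∑ j ∈ Finset.range N, mpS X ε u P P1 P2 v i j)
      = lForm1 N X ε u P v - lForm2 N X ε u P v + lForm3 N X u P1 P2 v := by
    have hc : (∑ i ∈ Finset.range N, ∑ j ∈ Finset.range N, mpS X ε u P P1 P2 v i j)
        = ∑ i ∈ Finset.range N, ∑ j ∈ Finset.range N,
          (l1S X ε u P v i j - l2S X ε u P v i j + l3S X u P1 P2 v i j) :=
      Finset.sum_congr rfl fun i _ => Finset.sum_congr rfl fun j _ => by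
        simp only [mpS]
    rw [hc, sum2_split3 (l1S X ε u P v) (l2S X ε u P v) (l3S X u P1 P2 v),
      ← lForm1_eq, ← lForm2_eq, ← lForm3_eq]
  -- summed identity
  have hsum : (∑ i ∈ Finset.range N, ∑ j ∈ Finset.range N,
        (ε ^ 2 * ipT (X i) (X (i+1)) (X j) (X (j+1)) (DQ i j) (Dv i j)
          + ipT (X i) (X (i+1)) (X j) (X (j+1)) (GQ1 i j) (Gv1 i j)
          + ipT (X i) (X (i+1)) (X j) (X (j+1)) (GQ2 i j) (Gv2 i j)))
      - (∑ i ∈ Finset.range N, ∑ j ∈ Finset.range N,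
          ipT (X i) (X (i+1)) (X j) (X (j+1))
            (fun x y => ε ^ 2 * lapl (lapl u) x y - lapl u x y) (v.v0 i j))
      = lForm1 N X ε u P v - lForm2 N X ε u P v + lForm3 N X u P1 P2 v := by
    rw [← Finset.sum_sub_distrib]
    have hc2 : (∑ i ∈ Finset.range N,
          ((∑ j ∈ Finset.range N,
            (ε ^ 2 * ipT (X i) (X (i+1)) (X j) (X (j+1)) (DQ i j) (Dv i j)
              + ipT (X i) (X (i+1)) (X j) (X (j+1)) (GQ1 i j) (Gv1 i j)
              + ipT (X i) (X (i+1)) (X j) (X (j+1)) (GQ2 i j) (Gv2 i j)))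
          - ∑ j ∈ Finset.range N,
              ipT (X i) (X (i+1)) (X j) (X (j+1))
                (fun x y => ε ^ 2 * lapl (lapl u) x y - lapl u x y) (v.v0 i j)))
        = ∑ i ∈ Finset.range N, ∑ j ∈ Finset.range N,
            (mpS X ε u P P1 P2 v i j + tpS X ε u v i j) := by
      refine Finset.sum_congr rfl fun i hi => ?_
      rw [← Finset.sum_sub_distrib]
      exact Finset.sum_congr rfl fun j hj =>
        EI i (Finset.mem_range.1 hi) j (Finset.mem_range.1 hj)
    rw [hc2, sum2_split2 (mpS X ε u P P1 P2 v) (tpS X ε u v), hmp, htp]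
    ring
  -- stabilizer linearity
  have stabsub : stab N X ε h H (Qu.sub uN) v
      = stab N X ε h H Qu v - stab N X ε h H uN v := by
    unfold stab
    rw [← Finset.sum_sub_distrib]
    refine Finset.sum_congr rfl fun i hi => ?_
    rw [← Finset.sum_sub_distrib]
    refine Finset.sum_congr rfl fun j hj => ?_
    have hi' := Finset.mem_range.1 hi
    have hj' := Finset.mem_range.1 hj
    have D1Q0 : D1 (Qu.v0 i j) := isQk_D1 (hQu.1 i hi' j hj').1
    have D1N0 : D1 (uN.v0 i j) := isQk_D1 (huN.1.1 i hi' j hj')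
    have D1v0 : D1 (v.v0 i j) := isQk_D1 (hv.1.1 i hi' j hj')
    -- 1D continuity of all edge data
    have cQbB := isPk_cont (hQu.2.1 i hi' j (Nat.le_of_lt hj')).1.1
    have cQbT := isPk_cont (hQu.2.1 i hi' (j+1) hj').1.1
    have cQbL := isPk_cont (hQu.2.2 i (Nat.le_of_lt hi') j hj').1.1
    have cQbR := isPk_cont (hQu.2.2 (i+1) hi' j hj').1.1
    have cQg1B := isPk_cont (hQu.2.1 i hi' j (Nat.le_of_lt hj')).2.1.1
    have cQg1T := isPk_cont (hQu.2.1 i hi' (j+1) hj').2.1.1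
    have cQg2B := isPk_cont (hQu.2.1 i hi' j (Nat.le_of_lt hj')).2.2.1
    have cQg2T := isPk_cont (hQu.2.1 i hi' (j+1) hj').2.2.1
    have cQg1L := isPk_cont (hQu.2.2 i (Nat.le_of_lt hi') j hj').2.1.1
    have cQg1R := isPk_cont (hQu.2.2 (i+1) hi' j hj').2.1.1
    have cQg2L := isPk_cont (hQu.2.2 i (Nat.le_of_lt hi') j hj').2.2.1
    have cQg2R := isPk_cont (hQu.2.2 (i+1) hi' j hj').2.2.1
    have cNbB := isPk_cont (huN.1.2.1 i hi' j (Nat.le_of_lt hj')).1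
    have cNbT := isPk_cont (huN.1.2.1 i hi' (j+1) hj').1
    have cNbL := isPk_cont (huN.1.2.2 i (Nat.le_of_lt hi') j hj').1
    have cNbR := isPk_cont (huN.1.2.2 (i+1) hi' j hj').1
    have cNg1B := isPk_cont (huN.1.2.1 i hi' j (Nat.le_of_lt hj')).2.1
    have cNg1T := isPk_cont (huN.1.2.1 i hi' (j+1) hj').2.1
    have cNg2B := isPk_cont (huN.1.2.1 i hi' j (Nat.le_of_lt hj')).2.2
    have cNg2T := isPk_cont (huN.1.2.1 i hi' (j+1) hj').2.2
    have cNg1L := isPk_cont (huN.1.2.2 i (Nat.le_of_lt hi') j hj').2.1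
    have cNg1R := isPk_cont (huN.1.2.2 (i+1) hi' j hj').2.1
    have cNg2L := isPk_cont (huN.1.2.2 i (Nat.le_of_lt hi') j hj').2.2
    have cNg2R := isPk_cont (huN.1.2.2 (i+1) hi' j hj').2.2
    have cvbB := isPk_cont (hv.1.2.1 i hi' j (Nat.le_of_lt hj')).1
    have cvbT := isPk_cont (hv.1.2.1 i hi' (j+1) hj').1
    have cvbL := isPk_cont (hv.1.2.2 i (Nat.le_of_lt hi') j hj').1
    have cvbR := isPk_cont (hv.1.2.2 (i+1) hi' j hj').1
    have cvg1B := isPk_cont (hv.1.2.1 i hi' j (Nat.le_of_lt hj')).2.1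
    have cvg1T := isPk_cont (hv.1.2.1 i hi' (j+1) hj').2.1
    have cvg2B := isPk_cont (hv.1.2.1 i hi' j (Nat.le_of_lt hj')).2.2
    have cvg2T := isPk_cont (hv.1.2.1 i hi' (j+1) hj').2.2
    have cvg1L := isPk_cont (hv.1.2.2 i (Nat.le_of_lt hi') j hj').2.1
    have cvg1R := isPk_cont (hv.1.2.2 (i+1) hi' j hj').2.1
    have cvg2L := isPk_cont (hv.1.2.2 i (Nat.le_of_lt hi') j hj').2.2
    have cvg2R := isPk_cont (hv.1.2.2 (i+1) hi' j hj').2.2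
    have hsP : sPair X (Qu.sub uN) v i j = sPair X Qu v i j - sPair X uN v i j := by
      simp only [sPair, WGFun.sub]
      have p1 := int_pat6 (A := fun x => Qu.v0 i j x (X j)) (B := fun x => uN.v0 i j x (X j))
        (C := fun x => Qu.vbH i j x) (D := fun x => uN.vbH i j x)
        (V := fun x => v.v0 i j x (X j) - v.vbH i j x)
        (cont_sec1 D1Q0.c (X j)) (cont_sec1 D1N0.c (X j)) cQbB cNbB
        ((cont_sec1 D1v0.c (X j)).sub cvbB) (X i) (X (i+1))
      have p2 := int_pat6 (A := fun x => Qu.v0 i j x (X (j+1)))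
        (B := fun x => uN.v0 i j x (X (j+1)))
        (C := fun x => Qu.vbH i (j+1) x) (D := fun x => uN.vbH i (j+1) x)
        (V := fun x => v.v0 i j x (X (j+1)) - v.vbH i (j+1) x)
        (cont_sec1 D1Q0.c (X (j+1))) (cont_sec1 D1N0.c (X (j+1))) cQbT cNbT
        ((cont_sec1 D1v0.c (X (j+1))).sub cvbT) (X i) (X (i+1))
      have p3 := int_pat6 (A := fun y => Qu.v0 i j (X i) y) (B := fun y => uN.v0 i j (X i) y)
        (C := fun y => Qu.vbV i j y) (D := fun y => uN.vbV i j y)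
        (V := fun y => v.v0 i j (X i) y - v.vbV i j y)
        (cont_sec2 D1Q0.c (X i)) (cont_sec2 D1N0.c (X i)) cQbL cNbL
        ((cont_sec2 D1v0.c (X i)).sub cvbL) (X j) (X (j+1))
      have p4 := int_pat6 (A := fun y => Qu.v0 i j (X (i+1)) y)
        (B := fun y => uN.v0 i j (X (i+1)) y)
        (C := fun y => Qu.vbV (i+1) j y) (D := fun y => uN.vbV (i+1) j y)
        (V := fun y => v.v0 i j (X (i+1)) y - v.vbV (i+1) j y)
        (cont_sec2 D1Q0.c (X (i+1))) (cont_sec2 D1N0.c (X (i+1))) cQbR cNbR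
        ((cont_sec2 D1v0.c (X (i+1))).sub cvbR) (X j) (X (j+1))
      rw [p1, p2, p3, p4]
      ring
    have hsG : sPairG X (Qu.sub uN) v i j = sPairG X Qu v i j - sPairG X uN v i j := by
      simp only [sPairG, WGFun.sub]
      have q1 : (∫ x in (X i)..(X (i+1)),
          ((pd1 (fun x y => Qu.v0 i j x y - uN.v0 i j x y) x (X j)
              - (Qu.vgH1 i j x - uN.vgH1 i j x))
              * (pd1 (v.v0 i j) x (X j) - v.vgH1 i j x)
            + (pd2 (fun x y => Qu.v0 i j x y - uN.v0 i j x y) x (X j)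
              - (Qu.vgH2 i j x - uN.vgH2 i j x))
              * (pd2 (v.v0 i j) x (X j) - v.vgH2 i j x)))
          = (∫ x in (X i)..(X (i+1)),
            ((pd1 (Qu.v0 i j) x (X j) - Qu.vgH1 i j x)
                * (pd1 (v.v0 i j) x (X j) - v.vgH1 i j x)
              + (pd2 (Qu.v0 i j) x (X j) - Qu.vgH2 i j x)
                * (pd2 (v.v0 i j) x (X j) - v.vgH2 i j x)))
            - ∫ x in (X i)..(X (i+1)),
              ((pd1 (uN.v0 i j) x (X j) - uN.vgH1 i j x)
                  * (pd1 (v.v0 i j) x (X j) - v.vgH1 i j x)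
                + (pd2 (uN.v0 i j) x (X j) - uN.vgH2 i j x)
                  * (pd2 (v.v0 i j) x (X j) - v.vgH2 i j x)) := by
        rw [intervalIntegral.integral_congr (g := fun x =>
          (((pd1 (Qu.v0 i j) x (X j) - pd1 (uN.v0 i j) x (X j))
              - (Qu.vgH1 i j x - uN.vgH1 i j x))
              * (pd1 (v.v0 i j) x (X j) - v.vgH1 i j x)
            + ((pd2 (Qu.v0 i j) x (X j) - pd2 (uN.v0 i j) x (X j))
              - (Qu.vgH2 i j x - uN.vgH2 i j x))
              * (pd2 (v.v0 i j) x (X j) - v.vgH2 i j x)))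
          (fun x _ => by rw [pd1_sub D1Q0 D1N0, pd2_sub D1Q0 D1N0])]
        exact int_pat7 (cont_sec1 D1Q0.c1 (X j)) (cont_sec1 D1N0.c1 (X j)) cQg1B cNg1B
          ((cont_sec1 D1v0.c1 (X j)).sub cvg1B)
          (cont_sec1 D1Q0.c2 (X j)) (cont_sec1 D1N0.c2 (X j)) cQg2B cNg2B
          ((cont_sec1 D1v0.c2 (X j)).sub cvg2B) (X i) (X (i+1))
      have q2 : (∫ x in (X i)..(X (i+1)),
          ((pd1 (fun x y => Qu.v0 i j x y - uN.v0 i j x y) x (X (j+1))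
              - (Qu.vgH1 i (j+1) x - uN.vgH1 i (j+1) x))
              * (pd1 (v.v0 i j) x (X (j+1)) - v.vgH1 i (j+1) x)
            + (pd2 (fun x y => Qu.v0 i j x y - uN.v0 i j x y) x (X (j+1))
              - (Qu.vgH2 i (j+1) x - uN.vgH2 i (j+1) x))
              * (pd2 (v.v0 i j) x (X (j+1)) - v.vgH2 i (j+1) x)))
          = (∫ x in (X i)..(X (i+1)),
            ((pd1 (Qu.v0 i j) x (X (j+1)) - Qu.vgH1 i (j+1) x)
                * (pd1 (v.v0 i j) x (X (j+1)) - v.vgH1 i (j+1) x)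
              + (pd2 (Qu.v0 i j) x (X (j+1)) - Qu.vgH2 i (j+1) x)
                * (pd2 (v.v0 i j) x (X (j+1)) - v.vgH2 i (j+1) x)))
            - ∫ x in (X i)..(X (i+1)),
              ((pd1 (uN.v0 i j) x (X (j+1)) - uN.vgH1 i (j+1) x)
                  * (pd1 (v.v0 i j) x (X (j+1)) - v.vgH1 i (j+1) x)
                + (pd2 (uN.v0 i j) x (X (j+1)) - uN.vgH2 i (j+1) x)
                  * (pd2 (v.v0 i j) x (X (j+1)) - v.vgH2 i (j+1) x)) := by
        rw [intervalIntegral.integral_congr (g := fun x =>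
          (((pd1 (Qu.v0 i j) x (X (j+1)) - pd1 (uN.v0 i j) x (X (j+1)))
              - (Qu.vgH1 i (j+1) x - uN.vgH1 i (j+1) x))
              * (pd1 (v.v0 i j) x (X (j+1)) - v.vgH1 i (j+1) x)
            + ((pd2 (Qu.v0 i j) x (X (j+1)) - pd2 (uN.v0 i j) x (X (j+1)))
              - (Qu.vgH2 i (j+1) x - uN.vgH2 i (j+1) x))
              * (pd2 (v.v0 i j) x (X (j+1)) - v.vgH2 i (j+1) x)))
          (fun x _ => by rw [pd1_sub D1Q0 D1N0, pd2_sub D1Q0 D1N0])]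
        exact int_pat7 (cont_sec1 D1Q0.c1 (X (j+1))) (cont_sec1 D1N0.c1 (X (j+1)))
          cQg1T cNg1T ((cont_sec1 D1v0.c1 (X (j+1))).sub cvg1T)
          (cont_sec1 D1Q0.c2 (X (j+1))) (cont_sec1 D1N0.c2 (X (j+1))) cQg2T cNg2T
          ((cont_sec1 D1v0.c2 (X (j+1))).sub cvg2T) (X i) (X (i+1))
      have q3 : (∫ y in (X j)..(X (j+1)),
          ((pd1 (fun x y => Qu.v0 i j x y - uN.v0 i j x y) (X i) y
              - (Qu.vgV1 i j y - uN.vgV1 i j y))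
              * (pd1 (v.v0 i j) (X i) y - v.vgV1 i j y)
            + (pd2 (fun x y => Qu.v0 i j x y - uN.v0 i j x y) (X i) y
              - (Qu.vgV2 i j y - uN.vgV2 i j y))
              * (pd2 (v.v0 i j) (X i) y - v.vgV2 i j y)))
          = (∫ y in (X j)..(X (j+1)),
            ((pd1 (Qu.v0 i j) (X i) y - Qu.vgV1 i j y)
                * (pd1 (v.v0 i j) (X i) y - v.vgV1 i j y)
              + (pd2 (Qu.v0 i j) (X i) y - Qu.vgV2 i j y)
                * (pd2 (v.v0 i j) (X i) y - v.vgV2 i j y)))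
            - ∫ y in (X j)..(X (j+1)),
              ((pd1 (uN.v0 i j) (X i) y - uN.vgV1 i j y)
                  * (pd1 (v.v0 i j) (X i) y - v.vgV1 i j y)
                + (pd2 (uN.v0 i j) (X i) y - uN.vgV2 i j y)
                  * (pd2 (v.v0 i j) (X i) y - v.vgV2 i j y)) := by
        rw [intervalIntegral.integral_congr (g := fun y =>
          (((pd1 (Qu.v0 i j) (X i) y - pd1 (uN.v0 i j) (X i) y)
              - (Qu.vgV1 i j y - uN.vgV1 i j y))
              * (pd1 (v.v0 i j) (X i) y - v.vgV1 i j y)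
            + ((pd2 (Qu.v0 i j) (X i) y - pd2 (uN.v0 i j) (X i) y)
              - (Qu.vgV2 i j y - uN.vgV2 i j y))
              * (pd2 (v.v0 i j) (X i) y - v.vgV2 i j y)))
          (fun y _ => by rw [pd1_sub D1Q0 D1N0, pd2_sub D1Q0 D1N0])]
        exact int_pat7 (cont_sec2 D1Q0.c1 (X i)) (cont_sec2 D1N0.c1 (X i)) cQg1L cNg1L
          ((cont_sec2 D1v0.c1 (X i)).sub cvg1L)
          (cont_sec2 D1Q0.c2 (X i)) (cont_sec2 D1N0.c2 (X i)) cQg2L cNg2L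
          ((cont_sec2 D1v0.c2 (X i)).sub cvg2L) (X j) (X (j+1))
      have q4 : (∫ y in (X j)..(X (j+1)),
          ((pd1 (fun x y => Qu.v0 i j x y - uN.v0 i j x y) (X (i+1)) y
              - (Qu.vgV1 (i+1) j y - uN.vgV1 (i+1) j y))
              * (pd1 (v.v0 i j) (X (i+1)) y - v.vgV1 (i+1) j y)
            + (pd2 (fun x y => Qu.v0 i j x y - uN.v0 i j x y) (X (i+1)) y
              - (Qu.vgV2 (i+1) j y - uN.vgV2 (i+1) j y))
              * (pd2 (v.v0 i j) (X (i+1)) y - v.vgV2 (i+1) j y)))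
          = (∫ y in (X j)..(X (j+1)),
            ((pd1 (Qu.v0 i j) (X (i+1)) y - Qu.vgV1 (i+1) j y)
                * (pd1 (v.v0 i j) (X (i+1)) y - v.vgV1 (i+1) j y)
              + (pd2 (Qu.v0 i j) (X (i+1)) y - Qu.vgV2 (i+1) j y)
                * (pd2 (v.v0 i j) (X (i+1)) y - v.vgV2 (i+1) j y)))
            - ∫ y in (X j)..(X (j+1)),
              ((pd1 (uN.v0 i j) (X (i+1)) y - uN.vgV1 (i+1) j y)
                  * (pd1 (v.v0 i j) (X (i+1)) y - v.vgV1 (i+1) j y)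
                + (pd2 (uN.v0 i j) (X (i+1)) y - uN.vgV2 (i+1) j y)
                  * (pd2 (v.v0 i j) (X (i+1)) y - v.vgV2 (i+1) j y)) := by
        rw [intervalIntegral.integral_congr (g := fun y =>
          (((pd1 (Qu.v0 i j) (X (i+1)) y - pd1 (uN.v0 i j) (X (i+1)) y)
              - (Qu.vgV1 (i+1) j y - uN.vgV1 (i+1) j y))
              * (pd1 (v.v0 i j) (X (i+1)) y - v.vgV1 (i+1) j y)
            + ((pd2 (Qu.v0 i j) (X (i+1)) y - pd2 (uN.v0 i j) (X (i+1)) y)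
              - (Qu.vgV2 (i+1) j y - uN.vgV2 (i+1) j y))
              * (pd2 (v.v0 i j) (X (i+1)) y - v.vgV2 (i+1) j y)))
          (fun y _ => by rw [pd1_sub D1Q0 D1N0, pd2_sub D1Q0 D1N0])]
        exact int_pat7 (cont_sec2 D1Q0.c1 (X (i+1))) (cont_sec2 D1N0.c1 (X (i+1)))
          cQg1R cNg1R ((cont_sec2 D1v0.c1 (X (i+1))).sub cvg1R)
          (cont_sec2 D1Q0.c2 (X (i+1))) (cont_sec2 D1N0.c2 (X (i+1))) cQg2R cNg2R
          ((cont_sec2 D1v0.c2 (X (i+1))).sub cvg2R) (X j) (X (j+1))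
      rw [q1, q2, q3, q4]
      ring
    rw [hsP, hsG]
    ring
  -- volume-part linearity
  have hvols : (∑ i ∈ Finset.range N, ∑ j ∈ Finset.range N,
        (ε ^ 2 * ipT (X i) (X (i+1)) (X j) (X (j+1))
            (fun x y => DQ i j x y - DuN i j x y) (Dv i j)
          + ipT (X i) (X (i+1)) (X j) (X (j+1))
            (fun x y => GQ1 i j x y - GuN1 i j x y) (Gv1 i j)
          + ipT (X i) (X (i+1)) (X j) (X (j+1))
            (fun x y => GQ2 i j x y - GuN2 i j x y) (Gv2 i j)))
      = (∑ i ∈ Finset.range N, ∑ j ∈ Finset.range N,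
          (ε ^ 2 * ipT (X i) (X (i+1)) (X j) (X (j+1)) (DQ i j) (Dv i j)
            + ipT (X i) (X (i+1)) (X j) (X (j+1)) (GQ1 i j) (Gv1 i j)
            + ipT (X i) (X (i+1)) (X j) (X (j+1)) (GQ2 i j) (Gv2 i j)))
        - ∑ i ∈ Finset.range N, ∑ j ∈ Finset.range N,
            (ε ^ 2 * ipT (X i) (X (i+1)) (X j) (X (j+1)) (DuN i j) (Dv i j)
              + ipT (X i) (X (i+1)) (X j) (X (j+1)) (GuN1 i j) (Gv1 i j)
              + ipT (X i) (X (i+1)) (X j) (X (j+1)) (GuN2 i j) (Gv2 i j)) := by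
    rw [← Finset.sum_sub_distrib]
    refine Finset.sum_congr rfl fun i hi => ?_
    rw [← Finset.sum_sub_distrib]
    refine Finset.sum_congr rfl fun j hj => ?_
    have hi' := Finset.mem_range.1 hi
    have hj' := Finset.mem_range.1 hj
    rw [ipT_sub_left (isQk_cont (hDQ i hi' j hj').1) (isQk_cont (hDuN i hi' j hj').1)
        (isQk_cont (hDv i hi' j hj').1),
      ipT_sub_left (isQk_cont (hGQ i hi' j hj').1) (isQk_cont (hGuN i hi' j hj').1)
        (isQk_cont (hGv i hi' j hj').1),
      ipT_sub_left (isQk_cont (hGQ i hi' j hj').2.1) (isQk_cont (hGuN i hi' j hj').2.1)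
        (isQk_cont (hGv i hi' j hj').2.1)]
    ring
  have hsch := hscheme v hv Dv Gv1 Gv2 hDv hGv
  simp only [aForm] at hsch ⊢
  rw [stabsub]
  linear_combination hvols - hsch + hsum
end
end

section
/- Let u have continuous partial derivatives up to order 2 on T and let v = (v₀, v_b, 𝐯_g) be a triple with v₀ ∈ Q_k(T), v_b ∈ L²(∂T) and 𝐯_g ∈ L²(∂T)². Then (Δ_w(Q_N u), Δ_w v)_T = (Δu, Δv₀)_T + ⟨v₀ − v_b, ∇(Q₀Δu)·𝐧⟩_{∂T} − ⟨(∇v₀ − 𝐯_g)·𝐧, Q₀Δu⟩_{∂T}. -/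
open MeasureTheory Real

noncomputable section

/-- `f` belongs to `L²` of the edge parametrized by `[a,b]`. -/
def L2Edge (a b : ℝ) (f : ℝ → ℝ) : Prop :=
  IntervalIntegrable f MeasureTheory.volume a b ∧
    IntervalIntegrable (fun x => (f x) ^ 2) MeasureTheory.volume a b


/-! ### Auxiliary machinery -/

section Aux
open Finset intervalIntegral

/-- polynomial in sum-of-monomials form -/
def SS (k : ℕ) (c : ℕ → ℕ → ℝ) (x y : ℝ) : ℝ :=
  ∑ i ∈ range (k+1), ∑ j ∈ range (k+1), c i j * x^i * y^j

def Van (k : ℕ) (c : ℕ → ℕ → ℝ) : Prop := ∀ i j, (k+1 ≤ i ∨ k+1 ≤ j) → c i j = 0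

def dx (c : ℕ → ℕ → ℝ) : ℕ → ℕ → ℝ := fun i j => ((i:ℝ)+1) * c (i+1) j

def cswap (c : ℕ → ℕ → ℝ) : ℕ → ℕ → ℝ := fun i j => c j i

lemma SS_swap (k : ℕ) (c : ℕ → ℕ → ℝ) (x y : ℝ) : SS k c x y = SS k (cswap c) y x := by
  unfold SS cswap
  rw [Finset.sum_comm]
  exact Finset.sum_congr rfl fun j _ => Finset.sum_congr rfl fun i _ => by ring

lemma Van.dx {k : ℕ} {c : ℕ → ℕ → ℝ} (hc : Van k c) : Van k (dx c) := by
  intro i j h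
  unfold _root_.dx
  rcases h with h | h
  · rw [hc (i+1) j (Or.inl (by omega)), mul_zero]
  · rw [hc (i+1) j (Or.inr h), mul_zero]

lemma Van.cswap {k : ℕ} {c : ℕ → ℕ → ℝ} (hc : Van k c) : Van k (cswap c) := by
  intro i j h
  exact hc j i h.symm

lemma hasDerivAt_SS (k : ℕ) (c : ℕ → ℕ → ℝ) (hc : Van k c) (x y : ℝ) :
    HasDerivAt (fun t => SS k c t y) (SS k (dx c) x y) x := by
  have h1 : ∀ t : ℝ, SS k c t y = ∑ i ∈ range (k+1), (∑ j ∈ range (k+1), c i j * y^j) * t^i := by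
    intro t
    unfold SS
    exact Finset.sum_congr rfl fun i _ => by
      rw [Finset.sum_mul]; exact Finset.sum_congr rfl fun j _ => by ring
  have h2 : HasDerivAt (fun t => ∑ i ∈ range (k+1), (∑ j ∈ range (k+1), c i j * y^j) * t^i)
      (∑ i ∈ range (k+1), (∑ j ∈ range (k+1), c i j * y^j) * ((i:ℝ) * x^(i-1))) x := by
    apply HasDerivAt.fun_sum
    intro i _
    exact (hasDerivAt_pow i x).const_mul _
  have h3 : (∑ i ∈ range (k+1), (∑ j ∈ range (k+1), c i j * y^j) * ((i:ℝ) * x^(i-1)))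
      = SS k (dx c) x y := by
    unfold SS dx
    rw [Finset.sum_range_succ' (fun i => (∑ j ∈ range (k+1), c i j * y^j) * ((i:ℝ) * x^(i-1)))]
    rw [Finset.sum_range_succ (fun i => ∑ j ∈ range (k+1), ((i:ℝ)+1) * c (i+1) j * x^i * y^j)]
    have hz2 : (∑ j ∈ range (k+1), ((k:ℝ)+1) * c (k+1) j * x^k * y^j) = 0 := by
      apply Finset.sum_eq_zero; intro j _
      rw [hc (k+1) j (Or.inl le_rfl)]; ring
    rw [hz2, add_zero]
    push_cast
    rw [show (∑ j ∈ range (k+1), c 0 j * y ^ j) * (0 * x ^ 0) = 0 by ring, add_zero]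
    apply Finset.sum_congr rfl
    intro i _
    rw [Finset.sum_mul]
    exact Finset.sum_congr rfl fun j _ => by ring
  rw [show (fun t => SS k c t y)
      = (fun t => ∑ i ∈ range (k+1), (∑ j ∈ range (k+1), c i j * y^j) * t^i) from funext h1]
  rw [← h3]
  exact h2

def QRep (k : ℕ) (v : ℝ → ℝ → ℝ) (c : ℕ → ℕ → ℝ) : Prop :=
  Van k c ∧ ∀ x y, v x y = SS k c x y

def dy (c : ℕ → ℕ → ℝ) : ℕ → ℕ → ℝ := cswap (dx (cswap c))

lemma Van.dy {k : ℕ} {c : ℕ → ℕ → ℝ} (hc : Van k c) : Van k (dy c) :=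
  hc.cswap.dx.cswap

lemma QRep.pd1 {k : ℕ} {v : ℝ → ℝ → ℝ} {c : ℕ → ℕ → ℝ} (h : QRep k v c) :
    QRep k (_root_.pd1 v) (dx c) := by
  refine ⟨h.1.dx, fun x y => ?_⟩
  unfold _root_.pd1
  rw [show (fun t => v t y) = (fun t => SS k c t y) from funext fun t => h.2 t y]
  exact (hasDerivAt_SS k c h.1 x y).deriv

lemma QRep.pd2 {k : ℕ} {v : ℝ → ℝ → ℝ} {c : ℕ → ℕ → ℝ} (h : QRep k v c) :
    QRep k (_root_.pd2 v) (dy c) := by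
  refine ⟨h.1.dy, fun x y => ?_⟩
  unfold _root_.pd2
  rw [show (fun t => v x t) = (fun t => SS k (cswap c) t x) from
    funext fun t => (h.2 x t).trans (SS_swap k c x t)]
  rw [show SS k (dy c) x y = SS k (dx (cswap c)) y x from SS_swap k _ x y]
  exact (hasDerivAt_SS k (cswap c) h.1.cswap y x).deriv

def cadd (c d : ℕ → ℕ → ℝ) : ℕ → ℕ → ℝ := fun i j => c i j + d i j

lemma QRep.add {k : ℕ} {v w : ℝ → ℝ → ℝ} {c d : ℕ → ℕ → ℝ}
    (hv : QRep k v c) (hw : QRep k w d) :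
    QRep k (fun x y => v x y + w x y) (cadd c d) := by
  refine ⟨fun i j h => by unfold cadd; rw [hv.1 i j h, hw.1 i j h, add_zero], fun x y => ?_⟩
  simp only []
  rw [hv.2, hw.2]
  unfold SS cadd
  rw [← Finset.sum_add_distrib]
  exact Finset.sum_congr rfl fun i _ => by
    rw [← Finset.sum_add_distrib]; exact Finset.sum_congr rfl fun j _ => by ring

lemma QRep.lapl {k : ℕ} {v : ℝ → ℝ → ℝ} {c : ℕ → ℕ → ℝ} (h : QRep k v c) :
    QRep k (_root_.lapl v) (cadd (dx (dx c)) (dy (dy c))) := by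
  have := h.pd1.pd1.add h.pd2.pd2
  exact this

lemma contDiff_SS (k : ℕ) (c : ℕ → ℕ → ℝ) (n : WithTop ℕ∞) :
    ContDiff ℝ n (fun p : ℝ × ℝ => SS k c p.1 p.2) := by
  unfold SS
  apply ContDiff.sum; intro i _
  apply ContDiff.sum; intro j _
  exact ((contDiff_const.mul (contDiff_fst.pow i)).mul (contDiff_snd.pow j))

lemma QRep.contDiff {k : ℕ} {v : ℝ → ℝ → ℝ} {c : ℕ → ℕ → ℝ} (h : QRep k v c)
    (n : WithTop ℕ∞) :
    ContDiff ℝ n (fun p : ℝ × ℝ => v p.1 p.2) := by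
  rw [show (fun p : ℝ × ℝ => v p.1 p.2) = (fun p : ℝ × ℝ => SS k c p.1 p.2) from
    funext fun p => h.2 p.1 p.2]
  exact contDiff_SS k c n

lemma QRep.isPk_x {k : ℕ} {v : ℝ → ℝ → ℝ} {c : ℕ → ℕ → ℝ} (h : QRep k v c) (b : ℝ) :
    IsPk k (fun x => v x b) := by
  refine ⟨∑ i ∈ range (k+1), Polynomial.C (∑ j ∈ range (k+1), c i j * b^j) * Polynomial.X^i,
    ?_, fun x => ?_⟩
  · apply Polynomial.natDegree_sum_le_of_forall_le
    intro i hi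
    exact le_trans (Polynomial.natDegree_C_mul_le _ _)
      (le_trans (Polynomial.natDegree_X_pow_le i)
        (by simpa using Nat.lt_succ_iff.mp (Finset.mem_range.mp hi)))
  · show v x b = _
    rw [h.2]
    unfold SS
    rw [Polynomial.eval_finset_sum]
    apply Finset.sum_congr rfl
    intro i _
    rw [Polynomial.eval_mul, Polynomial.eval_C, Polynomial.eval_pow, Polynomial.eval_X,
      Finset.sum_mul]
    exact Finset.sum_congr rfl fun j _ => by ring

lemma QRep.isPk_y {k : ℕ} {v : ℝ → ℝ → ℝ} {c : ℕ → ℕ → ℝ} (h : QRep k v c) (a : ℝ) :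
    IsPk k (fun y => v a y) := by
  have h' : QRep k (fun y x => v x y) (cswap c) :=
    ⟨h.1.cswap, fun y x => (h.2 x y).trans (SS_swap k c x y)⟩
  exact h'.isPk_x a

def ee (q : ℕ × ℕ) : Fin 2 →₀ ℕ := Finsupp.single 0 q.1 + Finsupp.single 1 q.2

lemma ee_apply0 (q : ℕ × ℕ) : ee q 0 = q.1 := by
  simp [ee, Finsupp.add_apply, Finsupp.single_apply]

lemma ee_apply1 (q : ℕ × ℕ) : ee q 1 = q.2 := by
  simp [ee, Finsupp.add_apply, Finsupp.single_apply]

lemma ee_eq (m : Fin 2 →₀ ℕ) : ee (m 0, m 1) = m := by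
  ext a
  fin_cases a
  · exact ee_apply0 _
  · exact ee_apply1 _

lemma degreeOf_monomial_le {R : Type*} [CommSemiring R] (l : Fin 2) (s : Fin 2 →₀ ℕ) (a : R) :
    MvPolynomial.degreeOf l (MvPolynomial.monomial s a) ≤ s l := by
  classical
  rw [MvPolynomial.degreeOf_eq_sup]
  apply Finset.sup_le
  intro m hm
  rw [MvPolynomial.support_monomial] at hm
  by_cases h : a = 0
  · simp [h] at hm
  · simp [h] at hm; rw [hm]

lemma eval_mono (q : ℕ × ℕ) (a x y : ℝ) :
    MvPolynomial.eval ![x, y] (MvPolynomial.monomial (ee q) a) = a * x ^ q.1 * y ^ q.2 := by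
  rw [MvPolynomial.eval_monomial, ee]
  rw [Finsupp.prod_add_index' (fun n => pow_zero _) (fun n e1 e2 => pow_add _ e1 e2)]
  simp [Finsupp.prod_single_index, mul_assoc]

lemma isQk_of_qrep {k : ℕ} {v : ℝ → ℝ → ℝ} {c : ℕ → ℕ → ℝ} (h : QRep k v c) : IsQk k v := by
  refine ⟨∑ i ∈ range (k+1), ∑ j ∈ range (k+1),
    MvPolynomial.monomial (ee (i, j)) (c i j), ?_, fun x y => ?_⟩
  · intro l
    refine le_trans (MvPolynomial.degreeOf_sum_le _ _ _) ?_
    rw [Finset.sup_le_iff]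
    intro i hi
    refine le_trans (MvPolynomial.degreeOf_sum_le _ _ _) ?_
    rw [Finset.sup_le_iff]
    intro j hj
    refine le_trans (degreeOf_monomial_le _ _ _) ?_
    have hik : i ≤ k := Nat.lt_succ_iff.mp (Finset.mem_range.mp hi)
    have hjk : j ≤ k := Nat.lt_succ_iff.mp (Finset.mem_range.mp hj)
    fin_cases l
    · show ee (i, j) 0 ≤ k
      rw [ee_apply0]; exact hik
    · show ee (i, j) 1 ≤ k
      rw [ee_apply1]; exact hjk
  · rw [h.2, map_sum]
    unfold SS
    apply Finset.sum_congr rfl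
    intro i _
    rw [map_sum]
    exact Finset.sum_congr rfl fun j _ => (eval_mono (i, j) (c i j) x y).symm

lemma qrep_of_isQk {k : ℕ} {v : ℝ → ℝ → ℝ} (h : IsQk k v) : ∃ c, QRep k v c := by
  classical
  obtain ⟨p, hdeg, hev⟩ := h
  set c : ℕ → ℕ → ℝ := fun i j => p.coeff (ee (i, j)) with hc
  have key : ∀ (m : Fin 2 →₀ ℕ), m ∈ p.support → m 0 ≤ k ∧ m 1 ≤ k := by
    intro m hm
    exact ⟨le_trans (MvPolynomial.monomial_le_degreeOf 0 hm) (hdeg 0),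
      le_trans (MvPolynomial.monomial_le_degreeOf 1 hm) (hdeg 1)⟩
  have hvan : Van k c := by
    intro i j hij
    rw [hc]
    by_contra hne
    have hmem : ee (i, j) ∈ p.support := MvPolynomial.mem_support_iff.mpr hne
    have := key _ hmem
    rw [ee_apply0, ee_apply1] at this
    omega
  refine ⟨c, hvan, fun x y => ?_⟩
  rw [hev x y, MvPolynomial.eval_eq']
  have hrw : (∑ m ∈ p.support, p.coeff m * ∏ i, (![x, y] i) ^ m i)
      = ∑ m ∈ p.support, p.coeff m * x ^ m 0 * y ^ m 1 := by
    apply Finset.sum_congr rfl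
    intro m _
    rw [Fin.prod_univ_two]
    simp [mul_assoc]
  rw [hrw]
  set F : ℕ × ℕ → ℝ := fun q => p.coeff (ee q) * x ^ q.1 * y ^ q.2 with hF
  set A : Finset (ℕ × ℕ) := (range (k+1)) ×ˢ (range (k+1)) with hA
  set B : Finset (ℕ × ℕ) := p.support.image (fun m => (m 0, m 1)) with hB
  have h1 : (∑ m ∈ p.support, p.coeff m * x ^ m 0 * y ^ m 1) = ∑ q ∈ B, F q := by
    rw [hB]
    rw [Finset.sum_image]
    · apply Finset.sum_congr rfl
      intro m _
      rw [hF]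
      simp only []
      rw [ee_eq]
    · intro m1 h1 m2 h2 heq
      have := congrArg ee heq
      rwa [ee_eq, ee_eq] at this
  have hBA : B ⊆ A := by
    intro q hq
    rw [hB] at hq
    obtain ⟨m, hm, rfl⟩ := Finset.mem_image.mp hq
    have := key m hm
    rw [hA, Finset.mem_product, Finset.mem_range, Finset.mem_range]
    omega
  have h2 : (∑ q ∈ B, F q) = ∑ q ∈ A, F q := by
    apply Finset.sum_subset hBA
    intro q hqA hqB
    rw [hF]
    simp only []
    have : p.coeff (ee q) = 0 := by
      by_contra hne
      have hmem : ee q ∈ p.support := MvPolynomial.mem_support_iff.mpr hne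
      apply hqB
      rw [hB]
      apply Finset.mem_image.mpr
      exact ⟨ee q, hmem, by rw [ee_apply0, ee_apply1]⟩
    rw [this]; ring
  rw [h1, h2, hA, Finset.sum_product]
  unfold SS
  apply Finset.sum_congr rfl
  intro i _
  apply Finset.sum_congr rfl
  intro j _
  rw [hF, hc]


lemma green1D {F G : ℝ → ℝ} (hF : ContDiff ℝ 2 F) (hG : ContDiff ℝ 2 G) (a b : ℝ) :
    ∫ t in a..b, (F t * deriv (deriv G) t - deriv (deriv F) t * G t)
      = (F b * deriv G b - deriv F b * G b) - (F a * deriv G a - deriv F a * G a) := by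
  have hF1 : Differentiable ℝ F := hF.differentiable (by norm_num)
  have hG1 : Differentiable ℝ G := hG.differentiable (by norm_num)
  have hF' : ContDiff ℝ 1 (deriv F) :=
    (contDiff_succ_iff_deriv.mp (show ContDiff ℝ (1 + 1) F by norm_num; exact hF)).2.2
  have hG' : ContDiff ℝ 1 (deriv G) :=
    (contDiff_succ_iff_deriv.mp (show ContDiff ℝ (1 + 1) G by norm_num; exact hG)).2.2
  have hF'd : Differentiable ℝ (deriv F) := hF'.differentiable one_ne_zero
  have hG'd : Differentiable ℝ (deriv G) := hG'.differentiable one_ne_zero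
  have hcF'' : Continuous (deriv (deriv F)) := hF'.continuous_deriv le_rfl
  have hcG'' : Continuous (deriv (deriv G)) := hG'.continuous_deriv le_rfl
  apply intervalIntegral.integral_eq_sub_of_hasDerivAt
  · intro t _
    have h1 : HasDerivAt (fun s => F s * deriv G s)
        (F t * deriv (deriv G) t + deriv F t * deriv G t) t := by
      have := ((hF1 t).hasDerivAt.fun_mul (hG'd t).hasDerivAt)
      rw [add_comm]; exact this
    have h2 : HasDerivAt (fun s => deriv F s * G s)
        (deriv (deriv F) t * G t + deriv F t * deriv G t) t := by
      have := ((hF'd t).hasDerivAt.fun_mul (hG1 t).hasDerivAt)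
      convert this using 1 <;> ring
    have := h1.fun_sub h2
    convert this using 1 <;> ring
  · apply Continuous.intervalIntegrable
    exact ((hF.continuous.mul hcG'').sub (hcF''.mul hG.continuous))

lemma fubini_swap {x0 x1 y0 y1 : ℝ} (hx : x0 ≤ x1) (hy : y0 ≤ y1) (H : ℝ → ℝ → ℝ)
    (hH : Continuous (fun p : ℝ × ℝ => H p.1 p.2)) :
    ∫ x in x0..x1, ∫ y in y0..y1, H x y = ∫ y in y0..y1, ∫ x in x0..x1, H x y := by
  have hint : MeasureTheory.Integrable (Function.uncurry H)
      ((volume.restrict (Set.Ioc x0 x1)).prod (volume.restrict (Set.Ioc y0 y1))) := by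
    rw [MeasureTheory.Measure.prod_restrict]
    exact ((hH.continuousOn.integrableOn_compact (isCompact_Icc.prod isCompact_Icc))).mono_set
      (Set.prod_mono Set.Ioc_subset_Icc_self Set.Ioc_subset_Icc_self)
  have := MeasureTheory.integral_integral_swap hint
  rw [intervalIntegral.integral_of_le hx, intervalIntegral.integral_of_le hy]
  simp_rw [intervalIntegral.integral_of_le hy, intervalIntegral.integral_of_le hx]
  exact this

lemma contX {A : ℝ → ℝ → ℝ} (hA : Continuous (fun p : ℝ × ℝ => A p.1 p.2)) (b : ℝ) :
    Continuous (fun x => A x b) := hA.comp (continuous_id.prodMk continuous_const)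

lemma contY {A : ℝ → ℝ → ℝ} (hA : Continuous (fun p : ℝ × ℝ => A p.1 p.2)) (a : ℝ) :
    Continuous (fun y => A a y) := hA.comp (continuous_const.prodMk continuous_id)

lemma hasDerivAt_sec1 {w : ℝ → ℝ → ℝ}
    (hw : Differentiable ℝ (fun p : ℝ × ℝ => w p.1 p.2)) (x y : ℝ) :
    HasDerivAt (fun t => w t y) (fderiv ℝ (fun p : ℝ × ℝ => w p.1 p.2) (x, y) (1, 0)) x := by
  have h := (hw (x, y)).hasFDerivAt
  have hline : HasDerivAt (fun t : ℝ => ((t, y) : ℝ × ℝ)) ((1 : ℝ), (0 : ℝ)) x :=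
    (hasDerivAt_id x).prodMk (hasDerivAt_const x y)
  exact h.comp_hasDerivAt x hline

lemma hasDerivAt_sec2 {w : ℝ → ℝ → ℝ}
    (hw : Differentiable ℝ (fun p : ℝ × ℝ => w p.1 p.2)) (x y : ℝ) :
    HasDerivAt (fun t => w x t) (fderiv ℝ (fun p : ℝ × ℝ => w p.1 p.2) (x, y) (0, 1)) y := by
  have h := (hw (x, y)).hasFDerivAt
  have hline : HasDerivAt (fun t : ℝ => ((x, t) : ℝ × ℝ)) ((0 : ℝ), (1 : ℝ)) y :=
    (hasDerivAt_const y x).prodMk (hasDerivAt_id y)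
  exact h.comp_hasDerivAt y hline

lemma pd1_eq {w : ℝ → ℝ → ℝ} (hw : Differentiable ℝ (fun p : ℝ × ℝ => w p.1 p.2)) (x y : ℝ) :
    pd1 w x y = fderiv ℝ (fun p : ℝ × ℝ => w p.1 p.2) (x, y) (1, 0) :=
  (hasDerivAt_sec1 hw x y).deriv

lemma pd2_eq {w : ℝ → ℝ → ℝ} (hw : Differentiable ℝ (fun p : ℝ × ℝ => w p.1 p.2)) (x y : ℝ) :
    pd2 w x y = fderiv ℝ (fun p : ℝ × ℝ => w p.1 p.2) (x, y) (0, 1) :=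
  (hasDerivAt_sec2 hw x y).deriv

lemma contDiff_pd1 {w : ℝ → ℝ → ℝ} {n : ℕ}
    (hw : ContDiff ℝ (n + 1) (fun p : ℝ × ℝ => w p.1 p.2)) :
    ContDiff ℝ n (fun p : ℝ × ℝ => pd1 w p.1 p.2) := by
  have hdiff : Differentiable ℝ (fun p : ℝ × ℝ => w p.1 p.2) :=
    hw.differentiable (by simp : ((n:WithTop ℕ∞) + 1) ≠ 0)
  have hG : ContDiff ℝ n (fun p : ℝ × ℝ => fderiv ℝ (fun q : ℝ × ℝ => w q.1 q.2) p ((1 : ℝ), (0 : ℝ))) := by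
    exact (hw.fderiv_right (by exact_mod_cast le_rfl)).clm_apply contDiff_const
  have : (fun p : ℝ × ℝ => pd1 w p.1 p.2)
      = fun p : ℝ × ℝ => fderiv ℝ (fun q : ℝ × ℝ => w q.1 q.2) p ((1 : ℝ), (0 : ℝ)) :=
    funext fun p => pd1_eq hdiff p.1 p.2
  rw [this]
  exact hG

lemma contDiff_pd2 {w : ℝ → ℝ → ℝ} {n : ℕ}
    (hw : ContDiff ℝ (n + 1) (fun p : ℝ × ℝ => w p.1 p.2)) :
    ContDiff ℝ n (fun p : ℝ × ℝ => pd2 w p.1 p.2) := by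
  have hdiff : Differentiable ℝ (fun p : ℝ × ℝ => w p.1 p.2) :=
    hw.differentiable (by simp : ((n:WithTop ℕ∞) + 1) ≠ 0)
  have hG : ContDiff ℝ n (fun p : ℝ × ℝ => fderiv ℝ (fun q : ℝ × ℝ => w q.1 q.2) p ((0 : ℝ), (1 : ℝ))) := by
    exact (hw.fderiv_right (by exact_mod_cast le_rfl)).clm_apply contDiff_const
  have : (fun p : ℝ × ℝ => pd2 w p.1 p.2)
      = fun p : ℝ × ℝ => fderiv ℝ (fun q : ℝ × ℝ => w q.1 q.2) p ((0 : ℝ), (1 : ℝ)) :=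
    funext fun p => pd2_eq hdiff p.1 p.2
  rw [this]
  exact hG

lemma iint_sub {a b c d : ℝ} {A B : ℝ → ℝ → ℝ}
    (hA : Continuous (fun p : ℝ × ℝ => A p.1 p.2)) (hB : Continuous (fun p : ℝ × ℝ => B p.1 p.2)) :
    ∫ s in a..b, ∫ t in c..d, (A s t - B s t)
      = (∫ s in a..b, ∫ t in c..d, A s t) - ∫ s in a..b, ∫ t in c..d, B s t := by
  have inner : ∀ s, (∫ t in c..d, (A s t - B s t))
      = (∫ t in c..d, A s t) - ∫ t in c..d, B s t := fun s =>
    intervalIntegral.integral_sub ((contY hA s).intervalIntegrable _ _)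
      ((contY hB s).intervalIntegrable _ _)
  simp_rw [inner]
  exact intervalIntegral.integral_sub
    ((intervalIntegral.continuous_parametric_intervalIntegral_of_continuous' hA c d).intervalIntegrable _ _)
    ((intervalIntegral.continuous_parametric_intervalIntegral_of_continuous' hB c d).intervalIntegrable _ _)

lemma iint_add {a b c d : ℝ} {A B : ℝ → ℝ → ℝ}
    (hA : Continuous (fun p : ℝ × ℝ => A p.1 p.2)) (hB : Continuous (fun p : ℝ × ℝ => B p.1 p.2)) :
    ∫ s in a..b, ∫ t in c..d, (A s t + B s t)
      = (∫ s in a..b, ∫ t in c..d, A s t) + ∫ s in a..b, ∫ t in c..d, B s t := by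
  have inner : ∀ s, (∫ t in c..d, (A s t + B s t))
      = (∫ t in c..d, A s t) + ∫ t in c..d, B s t := fun s =>
    intervalIntegral.integral_add ((contY hA s).intervalIntegrable _ _)
      ((contY hB s).intervalIntegrable _ _)
  simp_rw [inner]
  exact intervalIntegral.integral_add
    ((intervalIntegral.continuous_parametric_intervalIntegral_of_continuous' hA c d).intervalIntegrable _ _)
    ((intervalIntegral.continuous_parametric_intervalIntegral_of_continuous' hB c d).intervalIntegrable _ _)

lemma greenRect {x0 x1 y0 y1 : ℝ} (hx : x0 ≤ x1) (hy : y0 ≤ y1) (f g : ℝ → ℝ → ℝ)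
    (hf : ContDiff ℝ 2 (fun p : ℝ × ℝ => f p.1 p.2))
    (hg : ContDiff ℝ 2 (fun p : ℝ × ℝ => g p.1 p.2)) :
    (∫ x in x0..x1, ∫ y in y0..y1, f x y * lapl g x y)
      = (∫ x in x0..x1, ∫ y in y0..y1, lapl f x y * g x y)
      + ((∫ x in x0..x1, f x y0 * (-(pd2 g x y0))) + (∫ x in x0..x1, f x y1 * pd2 g x y1)
        + (∫ y in y0..y1, f x0 y * (-(pd1 g x0 y))) + (∫ y in y0..y1, f x1 y * pd1 g x1 y))
      - ((∫ x in x0..x1, (-(pd2 f x y0)) * g x y0) + (∫ x in x0..x1, pd2 f x y1 * g x y1)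
        + (∫ y in y0..y1, (-(pd1 f x0 y)) * g x0 y) + (∫ y in y0..y1, pd1 f x1 y * g x1 y)) := by
  have hf2 : ContDiff ℝ ((1:ℕ)+1) (fun p : ℝ × ℝ => f p.1 p.2) := by exact_mod_cast hf
  have hg2 : ContDiff ℝ ((1:ℕ)+1) (fun p : ℝ × ℝ => g p.1 p.2) := by exact_mod_cast hg
  have cf : Continuous (fun p : ℝ × ℝ => f p.1 p.2) := hf.continuous
  have cg : Continuous (fun p : ℝ × ℝ => g p.1 p.2) := hg.continuous
  have cf1' : ContDiff ℝ (1:ℕ) (fun p : ℝ × ℝ => pd1 f p.1 p.2) := contDiff_pd1 hf2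
  have cf2' : ContDiff ℝ (1:ℕ) (fun p : ℝ × ℝ => pd2 f p.1 p.2) := contDiff_pd2 hf2
  have cg1' : ContDiff ℝ (1:ℕ) (fun p : ℝ × ℝ => pd1 g p.1 p.2) := contDiff_pd1 hg2
  have cg2' : ContDiff ℝ (1:ℕ) (fun p : ℝ × ℝ => pd2 g p.1 p.2) := contDiff_pd2 hg2
  have cf1 : Continuous (fun p : ℝ × ℝ => pd1 f p.1 p.2) := cf1'.continuous
  have cf2 : Continuous (fun p : ℝ × ℝ => pd2 f p.1 p.2) := cf2'.continuous
  have cg1 : Continuous (fun p : ℝ × ℝ => pd1 g p.1 p.2) := cg1'.continuous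
  have cg2 : Continuous (fun p : ℝ × ℝ => pd2 g p.1 p.2) := cg2'.continuous
  have cf11 : Continuous (fun p : ℝ × ℝ => pd1 (pd1 f) p.1 p.2) :=
    (contDiff_pd1 (n := 0) (by exact_mod_cast cf1')).continuous
  have cf22 : Continuous (fun p : ℝ × ℝ => pd2 (pd2 f) p.1 p.2) :=
    (contDiff_pd2 (n := 0) (by exact_mod_cast cf2')).continuous
  have cg11 : Continuous (fun p : ℝ × ℝ => pd1 (pd1 g) p.1 p.2) :=
    (contDiff_pd1 (n := 0) (by exact_mod_cast cg1')).continuous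
  have cg22 : Continuous (fun p : ℝ × ℝ => pd2 (pd2 g) p.1 p.2) :=
    (contDiff_pd2 (n := 0) (by exact_mod_cast cg2')).continuous
  have sec2f : ∀ x, ContDiff ℝ 2 (fun t => f x t) := fun x =>
    hf.comp (contDiff_const.prodMk contDiff_id)
  have sec2g : ∀ x, ContDiff ℝ 2 (fun t => g x t) := fun x =>
    hg.comp (contDiff_const.prodMk contDiff_id)
  have sec1f : ∀ y, ContDiff ℝ 2 (fun t => f t y) := fun y =>
    hf.comp (contDiff_id.prodMk contDiff_const)
  have sec1g : ∀ y, ContDiff ℝ 2 (fun t => g t y) := fun y =>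
    hg.comp (contDiff_id.prodMk contDiff_const)
  -- splits
  have split1 : (∫ x in x0..x1, ∫ y in y0..y1, f x y * lapl g x y)
      = (∫ x in x0..x1, ∫ y in y0..y1, f x y * pd1 (pd1 g) x y)
        + ∫ x in x0..x1, ∫ y in y0..y1, f x y * pd2 (pd2 g) x y := by
    have h : ∀ x y, f x y * lapl g x y
        = f x y * pd1 (pd1 g) x y + f x y * pd2 (pd2 g) x y := by
      intro x y; unfold lapl; ring
    simp_rw [h]
    exact iint_add (cf.mul cg11) (cf.mul cg22)
  have split2 : (∫ x in x0..x1, ∫ y in y0..y1, lapl f x y * g x y)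
      = (∫ x in x0..x1, ∫ y in y0..y1, pd1 (pd1 f) x y * g x y)
        + ∫ x in x0..x1, ∫ y in y0..y1, pd2 (pd2 f) x y * g x y := by
    have h : ∀ x y, lapl f x y * g x y
        = pd1 (pd1 f) x y * g x y + pd2 (pd2 f) x y * g x y := by
      intro x y; unfold lapl; ring
    simp_rw [h]
    exact iint_add (cf11.mul cg) (cf22.mul cg)
  -- Y direction
  have claimY : (∫ x in x0..x1, ∫ y in y0..y1, f x y * pd2 (pd2 g) x y)
      - (∫ x in x0..x1, ∫ y in y0..y1, pd2 (pd2 f) x y * g x y)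
      = ∫ x in x0..x1, ((f x y1 * pd2 g x y1 - pd2 f x y1 * g x y1)
          - (f x y0 * pd2 g x y0 - pd2 f x y0 * g x y0)) := by
    rw [← iint_sub (cf.mul cg22) (cf22.mul cg)]
    apply intervalIntegral.integral_congr
    intro x _
    exact green1D (sec2f x) (sec2g x) y0 y1
  -- X direction
  have claimX : (∫ x in x0..x1, ∫ y in y0..y1, f x y * pd1 (pd1 g) x y)
      - (∫ x in x0..x1, ∫ y in y0..y1, pd1 (pd1 f) x y * g x y)
      = ∫ y in y0..y1, ((f x1 y * pd1 g x1 y - pd1 f x1 y * g x1 y)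
          - (f x0 y * pd1 g x0 y - pd1 f x0 y * g x0 y)) := by
    rw [fubini_swap hx hy _ (cf.mul cg11), fubini_swap hx hy _ (cf11.mul cg)]
    rw [← iint_sub ((cf.mul cg11).comp continuous_swap) ((cf11.mul cg).comp continuous_swap)]
    apply intervalIntegral.integral_congr
    intro y _
    exact green1D (sec1f y) (sec1g y) x0 x1
  -- combine boundary integrals, Y edges
  have i1 : IntervalIntegrable (fun x => f x y0 * (-(pd2 g x y0))) volume x0 x1 :=
    ((contX cf y0).mul ((contX cg2 y0).neg)).intervalIntegrable _ _
  have i2 : IntervalIntegrable (fun x => f x y1 * pd2 g x y1) volume x0 x1 :=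
    ((contX cf y1).mul (contX cg2 y1)).intervalIntegrable _ _
  have i3 : IntervalIntegrable (fun x => (-(pd2 f x y0)) * g x y0) volume x0 x1 :=
    (((contX cf2 y0).neg).mul (contX cg y0)).intervalIntegrable _ _
  have i4 : IntervalIntegrable (fun x => pd2 f x y1 * g x y1) volume x0 x1 :=
    ((contX cf2 y1).mul (contX cg y1)).intervalIntegrable _ _
  have jY : (∫ x in x0..x1, ((f x y1 * pd2 g x y1 - pd2 f x y1 * g x y1)
          - (f x y0 * pd2 g x y0 - pd2 f x y0 * g x y0)))
      = ((∫ x in x0..x1, f x y0 * (-(pd2 g x y0))) + ∫ x in x0..x1, f x y1 * pd2 g x y1)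
        - ((∫ x in x0..x1, (-(pd2 f x y0)) * g x y0) + ∫ x in x0..x1, pd2 f x y1 * g x y1) := by
    rw [← intervalIntegral.integral_add i1 i2, ← intervalIntegral.integral_add i3 i4,
      ← intervalIntegral.integral_sub (i1.add i2) (i3.add i4)]
    apply intervalIntegral.integral_congr
    intro x _
    ring
  have i5 : IntervalIntegrable (fun y => f x0 y * (-(pd1 g x0 y))) volume y0 y1 :=
    ((contY cf x0).mul ((contY cg1 x0).neg)).intervalIntegrable _ _
  have i6 : IntervalIntegrable (fun y => f x1 y * pd1 g x1 y) volume y0 y1 :=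
    ((contY cf x1).mul (contY cg1 x1)).intervalIntegrable _ _
  have i7 : IntervalIntegrable (fun y => (-(pd1 f x0 y)) * g x0 y) volume y0 y1 :=
    (((contY cf1 x0).neg).mul (contY cg x0)).intervalIntegrable _ _
  have i8 : IntervalIntegrable (fun y => pd1 f x1 y * g x1 y) volume y0 y1 :=
    ((contY cf1 x1).mul (contY cg x1)).intervalIntegrable _ _
  have jX : (∫ y in y0..y1, ((f x1 y * pd1 g x1 y - pd1 f x1 y * g x1 y)
          - (f x0 y * pd1 g x0 y - pd1 f x0 y * g x0 y)))
      = ((∫ y in y0..y1, f x0 y * (-(pd1 g x0 y))) + ∫ y in y0..y1, f x1 y * pd1 g x1 y)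
        - ((∫ y in y0..y1, (-(pd1 f x0 y)) * g x0 y) + ∫ y in y0..y1, pd1 f x1 y * g x1 y) := by
    rw [← intervalIntegral.integral_add i5 i6, ← intervalIntegral.integral_add i7 i8,
      ← intervalIntegral.integral_sub (i5.add i6) (i7.add i8)]
    apply intervalIntegral.integral_congr
    intro y _
    ring
  linarith [split1, split2, claimY, claimX, jY, jX]


lemma cont_lapl {w : ℝ → ℝ → ℝ} (hw : ContDiff ℝ 2 (fun p : ℝ × ℝ => w p.1 p.2)) :
    Continuous (fun p : ℝ × ℝ => lapl w p.1 p.2) := by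
  have hw2 : ContDiff ℝ ((1:ℕ)+1) (fun p : ℝ × ℝ => w p.1 p.2) := by exact_mod_cast hw
  have c11 : Continuous (fun p : ℝ × ℝ => pd1 (pd1 w) p.1 p.2) :=
    (contDiff_pd1 (n := 0) (by exact_mod_cast contDiff_pd1 (n := 1) hw2)).continuous
  have c22 : Continuous (fun p : ℝ × ℝ => pd2 (pd2 w) p.1 p.2) :=
    (contDiff_pd2 (n := 0) (by exact_mod_cast contDiff_pd2 (n := 1) hw2)).continuous
  exact c11.add c22

lemma isPk_continuous {k : ℕ} {f : ℝ → ℝ} (h : IsPk k f) : Continuous f := by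
  obtain ⟨p, _, hp⟩ := h
  rw [show f = fun x => p.eval x from funext hp]
  exact p.continuous

lemma iint_symm {a b c d : ℝ} (f g : ℝ → ℝ → ℝ) :
    (∫ s in a..b, ∫ t in c..d, f s t * g s t) = ∫ s in a..b, ∫ t in c..d, g s t * f s t :=
  intervalIntegral.integral_congr fun s _ =>
    intervalIntegral.integral_congr fun t _ => mul_comm _ _

lemma proj_replace {k : ℕ} {x0 x1 y0 y1 : ℝ} {φ P q : ℝ → ℝ → ℝ}
    (hP : IsProjT k x0 x1 y0 y1 φ P)
    (hφ : Continuous (fun p : ℝ × ℝ => φ p.1 p.2))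
    (hPc : Continuous (fun p : ℝ × ℝ => P p.1 p.2))
    (hq : IsQk k q) (hqc : Continuous (fun p : ℝ × ℝ => q p.1 p.2)) :
    (∫ x in x0..x1, ∫ y in y0..y1, φ x y * q x y)
      = ∫ x in x0..x1, ∫ y in y0..y1, P x y * q x y := by
  have h0 := hP.2 q hq
  unfold ipT at h0
  have h1 : ∀ x y : ℝ, (φ x y - P x y) * q x y = φ x y * q x y - P x y * q x y :=
    fun _ _ => sub_mul _ _ _
  simp_rw [h1] at h0
  rw [iint_sub (hφ.mul hqc) (hPc.mul hqc)] at h0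
  linarith

lemma edge_replace {k : ℕ} {a b : ℝ} {f g : ℝ → ℝ} (h : IsProjE k a b f g)
    (hf : Continuous f) {q : ℝ → ℝ} (hq : IsPk k q) (hqc : Continuous q) :
    (∫ x in a..b, f x * q x) = ∫ x in a..b, g x * q x := by
  have h0 := h.2 q hq
  have h1 : ∀ x : ℝ, (f x - g x) * q x = f x * q x - g x * q x := fun _ => sub_mul _ _ _
  simp_rw [h1] at h0
  rw [intervalIntegral.integral_sub (f := fun x => f x * q x) (g := fun x => g x * q x)
    ((hf.mul hqc).intervalIntegrable _ _)
    (((isPk_continuous h.1).mul hqc).intervalIntegrable _ _)] at h0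
  linarith

lemma edge_sub {a b : ℝ} {vb s w : ℝ → ℝ} (hvb : IntervalIntegrable vb MeasureTheory.volume a b)
    (hw : Continuous w) (hs : Continuous s) :
    (∫ x in a..b, (w x - vb x) * s x)
      = (∫ x in a..b, w x * s x) - ∫ x in a..b, vb x * s x := by
  have h1 : ∀ x : ℝ, (w x - vb x) * s x = w x * s x - vb x * s x := fun _ => sub_mul _ _ _
  simp_rw [h1]
  exact intervalIntegral.integral_sub ((hw.mul hs).intervalIntegrable _ _)
    (hvb.mul_continuousOn hs.continuousOn)

end Aux

/-- `(Δ_w(Q_N u), Δ_w v)_T = (Δu, Δv₀)_T + ⟨v₀ − v_b, ∇(Q₀Δu)·𝐧⟩_{∂T}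
− ⟨(∇v₀ − 𝐯_g)·𝐧, Q₀Δu⟩_{∂T}` on the rectangle `T = [x0,x1] × [y0,y1]`.
`DQ` is the discrete weak Laplacian of `Q_N u = (Q₀u, Q_b u, 𝐐_g(∇u))` and `Dv`
that of the triple `v = (v₀, v_b, 𝐯_g)`, both characterized by the defining identity. -/
theorem statement18 (k : ℕ) (hk : 3 ≤ k) (x0 x1 y0 y1 : ℝ) (hx : x0 < x1) (hy : y0 < y1)
    (u : ℝ → ℝ → ℝ) (hu : ContDiff ℝ 2 (fun p : ℝ × ℝ => u p.1 p.2))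
    -- the projections defining Q_N u
    (P0u P0Lu : ℝ → ℝ → ℝ)
    (hP0u : IsProjT k x0 x1 y0 y1 u P0u)
    (hP0Lu : IsProjT k x0 x1 y0 y1 (lapl u) P0Lu)
    (qbB qbT qbL qbR g1B g2B g1T g2T g1L g2L g1R g2R : ℝ → ℝ)
    (hqbB : IsProjE k x0 x1 (fun x => u x y0) qbB)
    (hqbT : IsProjE k x0 x1 (fun x => u x y1) qbT)
    (hqbL : IsProjE k y0 y1 (fun y => u x0 y) qbL)
    (hqbR : IsProjE k y0 y1 (fun y => u x1 y) qbR)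
    (hg1B : IsProjE k x0 x1 (fun x => pd1 u x y0) g1B)
    (hg2B : IsProjE k x0 x1 (fun x => pd2 u x y0) g2B)
    (hg1T : IsProjE k x0 x1 (fun x => pd1 u x y1) g1T)
    (hg2T : IsProjE k x0 x1 (fun x => pd2 u x y1) g2T)
    (hg1L : IsProjE k y0 y1 (fun y => pd1 u x0 y) g1L)
    (hg2L : IsProjE k y0 y1 (fun y => pd2 u x0 y) g2L)
    (hg1R : IsProjE k y0 y1 (fun y => pd1 u x1 y) g1R)
    (hg2R : IsProjE k y0 y1 (fun y => pd2 u x1 y) g2R)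
    -- the triple v = (v₀, v_b, 𝐯_g), with L² data on each edge
    (v0 : ℝ → ℝ → ℝ) (hv0 : IsQk k v0)
    (vbB vbT vbL vbR vg1B vg2B vg1T vg2T vg1L vg2L vg1R vg2R : ℝ → ℝ)
    (hvbB : L2Edge x0 x1 vbB) (hvbT : L2Edge x0 x1 vbT)
    (hvbL : L2Edge y0 y1 vbL) (hvbR : L2Edge y0 y1 vbR)
    (hvg1B : L2Edge x0 x1 vg1B) (hvg2B : L2Edge x0 x1 vg2B)
    (hvg1T : L2Edge x0 x1 vg1T) (hvg2T : L2Edge x0 x1 vg2T)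
    (hvg1L : L2Edge y0 y1 vg1L) (hvg2L : L2Edge y0 y1 vg2L)
    (hvg1R : L2Edge y0 y1 vg1R) (hvg2R : L2Edge y0 y1 vg2R)
    -- the discrete weak Laplacian of Q_N u
    (DQ : ℝ → ℝ → ℝ) (hDQk : IsQk k DQ)
    (hDQ : ∀ φ : ℝ → ℝ → ℝ, IsQk k φ →
      ipT x0 x1 y0 y1 DQ φ =
        ipT x0 x1 y0 y1 P0u (lapl φ)
          - ((∫ x in x0..x1, qbB x * (-(pd2 φ x y0)))
            + (∫ x in x0..x1, qbT x * pd2 φ x y1)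
            + (∫ y in y0..y1, qbL y * (-(pd1 φ x0 y)))
            + (∫ y in y0..y1, qbR y * pd1 φ x1 y))
          + ((∫ x in x0..x1, (-(g2B x)) * φ x y0)
            + (∫ x in x0..x1, g2T x * φ x y1)
            + (∫ y in y0..y1, (-(g1L y)) * φ x0 y)
            + (∫ y in y0..y1, g1R y * φ x1 y)))
    -- the discrete weak Laplacian of v
    (Dv : ℝ → ℝ → ℝ) (hDvk : IsQk k Dv)
    (hDv : ∀ φ : ℝ → ℝ → ℝ, IsQk k φ →
      ipT x0 x1 y0 y1 Dv φ =
        ipT x0 x1 y0 y1 v0 (lapl φ)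
          - ((∫ x in x0..x1, vbB x * (-(pd2 φ x y0)))
            + (∫ x in x0..x1, vbT x * pd2 φ x y1)
            + (∫ y in y0..y1, vbL y * (-(pd1 φ x0 y)))
            + (∫ y in y0..y1, vbR y * pd1 φ x1 y))
          + ((∫ x in x0..x1, (-(vg2B x)) * φ x y0)
            + (∫ x in x0..x1, vg2T x * φ x y1)
            + (∫ y in y0..y1, (-(vg1L y)) * φ x0 y)
            + (∫ y in y0..y1, vg1R y * φ x1 y))) :
    ipT x0 x1 y0 y1 DQ Dv =
      ipT x0 x1 y0 y1 (lapl u) (lapl v0)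
        + ((∫ x in x0..x1, (v0 x y0 - vbB x) * (-(pd2 P0Lu x y0)))
          + (∫ x in x0..x1, (v0 x y1 - vbT x) * pd2 P0Lu x y1)
          + (∫ y in y0..y1, (v0 x0 y - vbL y) * (-(pd1 P0Lu x0 y)))
          + (∫ y in y0..y1, (v0 x1 y - vbR y) * pd1 P0Lu x1 y))
        - ((∫ x in x0..x1, (-(pd2 v0 x y0 - vg2B x)) * P0Lu x y0)
          + (∫ x in x0..x1, (pd2 v0 x y1 - vg2T x) * P0Lu x y1)
          + (∫ y in y0..y1, (-(pd1 v0 x0 y - vg1L y)) * P0Lu x0 y)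
          + (∫ y in y0..y1, (pd1 v0 x1 y - vg1R y) * P0Lu x1 y)) := by
  obtain ⟨ccv0, hcv0⟩ := qrep_of_isQk hv0
  obtain ⟨ccDv, hcDv⟩ := qrep_of_isQk hDvk
  obtain ⟨ccP0u, hcP0u⟩ := qrep_of_isQk hP0u.1
  obtain ⟨ccP, hcP⟩ := qrep_of_isQk hP0Lu.1
  -- continuity facts
  have hu2 : ContDiff ℝ ((1:ℕ)+1) (fun p : ℝ × ℝ => u p.1 p.2) := by exact_mod_cast hu
  have cu : Continuous (fun p : ℝ × ℝ => u p.1 p.2) := hu.continuous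
  have cpd1u : Continuous (fun p : ℝ × ℝ => pd1 u p.1 p.2) :=
    (contDiff_pd1 (n := 1) hu2).continuous
  have cpd2u : Continuous (fun p : ℝ × ℝ => pd2 u p.1 p.2) :=
    (contDiff_pd2 (n := 1) hu2).continuous
  have claplu : Continuous (fun p : ℝ × ℝ => lapl u p.1 p.2) := cont_lapl hu
  have cDvC : ContDiff ℝ 2 (fun p : ℝ × ℝ => Dv p.1 p.2) := hcDv.contDiff 2
  have cDvc : Continuous (fun p : ℝ × ℝ => Dv p.1 p.2) := cDvC.continuous
  have cpd1Dv : Continuous (fun p : ℝ × ℝ => pd1 Dv p.1 p.2) := (hcDv.pd1.contDiff 2).continuous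
  have cpd2Dv : Continuous (fun p : ℝ × ℝ => pd2 Dv p.1 p.2) := (hcDv.pd2.contDiff 2).continuous
  have claplDv : Continuous (fun p : ℝ × ℝ => lapl Dv p.1 p.2) := (hcDv.lapl.contDiff 2).continuous
  have cv0C : ContDiff ℝ 2 (fun p : ℝ × ℝ => v0 p.1 p.2) := hcv0.contDiff 2
  have cv0c : Continuous (fun p : ℝ × ℝ => v0 p.1 p.2) := cv0C.continuous
  have cpd1v0 : Continuous (fun p : ℝ × ℝ => pd1 v0 p.1 p.2) := (hcv0.pd1.contDiff 2).continuous
  have cpd2v0 : Continuous (fun p : ℝ × ℝ => pd2 v0 p.1 p.2) := (hcv0.pd2.contDiff 2).continuous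
  have claplv0 : Continuous (fun p : ℝ × ℝ => lapl v0 p.1 p.2) := (hcv0.lapl.contDiff 2).continuous
  have cPC : ContDiff ℝ 2 (fun p : ℝ × ℝ => P0Lu p.1 p.2) := hcP.contDiff 2
  have cPc : Continuous (fun p : ℝ × ℝ => P0Lu p.1 p.2) := cPC.continuous
  have cpd1P : Continuous (fun p : ℝ × ℝ => pd1 P0Lu p.1 p.2) := (hcP.pd1.contDiff 2).continuous
  have cpd2P : Continuous (fun p : ℝ × ℝ => pd2 P0Lu p.1 p.2) := (hcP.pd2.contDiff 2).continuous
  have cP0uc : Continuous (fun p : ℝ × ℝ => P0u p.1 p.2) := (hcP0u.contDiff 2).continuous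
  -- main equations
  have E1 := hDQ Dv hDvk
  have E2 := hDv P0Lu hP0Lu.1
  unfold ipT at E1 E2 ⊢
  have A1 : (∫ x in x0..x1, ∫ y in y0..y1, P0u x y * lapl Dv x y)
      = ∫ x in x0..x1, ∫ y in y0..y1, u x y * lapl Dv x y :=
    (proj_replace hP0u cu cP0uc (isQk_of_qrep hcDv.lapl) claplDv).symm
  have G1 := greenRect hx.le hy.le u Dv hu cDvC
  have A2 : (∫ x in x0..x1, ∫ y in y0..y1, lapl u x y * Dv x y)
      = ∫ x in x0..x1, ∫ y in y0..y1, P0Lu x y * Dv x y :=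
    proj_replace hP0Lu claplu cPc hDvk cDvc
  have A3 : (∫ x in x0..x1, ∫ y in y0..y1, P0Lu x y * Dv x y)
      = ∫ x in x0..x1, ∫ y in y0..y1, Dv x y * P0Lu x y := iint_symm _ _
  have G2 := greenRect hx.le hy.le v0 P0Lu cv0C cPC
  have A4 : (∫ x in x0..x1, ∫ y in y0..y1, lapl v0 x y * P0Lu x y)
      = ∫ x in x0..x1, ∫ y in y0..y1, P0Lu x y * lapl v0 x y := iint_symm _ _
  have A5 : (∫ x in x0..x1, ∫ y in y0..y1, lapl u x y * lapl v0 x y)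
      = ∫ x in x0..x1, ∫ y in y0..y1, P0Lu x y * lapl v0 x y :=
    proj_replace hP0Lu claplu cPc (isQk_of_qrep hcv0.lapl) claplv0
  -- edge projection replacements
  have EB : (∫ x in x0..x1, qbB x * pd2 Dv x y0) = ∫ x in x0..x1, u x y0 * pd2 Dv x y0 :=
    (edge_replace hqbB (contX cu y0) (hcDv.pd2.isPk_x y0) (contX cpd2Dv y0)).symm
  have ET : (∫ x in x0..x1, qbT x * pd2 Dv x y1) = ∫ x in x0..x1, u x y1 * pd2 Dv x y1 :=
    (edge_replace hqbT (contX cu y1) (hcDv.pd2.isPk_x y1) (contX cpd2Dv y1)).symm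
  have EL : (∫ y in y0..y1, qbL y * pd1 Dv x0 y) = ∫ y in y0..y1, u x0 y * pd1 Dv x0 y :=
    (edge_replace hqbL (contY cu x0) (hcDv.pd1.isPk_y x0) (contY cpd1Dv x0)).symm
  have ER : (∫ y in y0..y1, qbR y * pd1 Dv x1 y) = ∫ y in y0..y1, u x1 y * pd1 Dv x1 y :=
    (edge_replace hqbR (contY cu x1) (hcDv.pd1.isPk_y x1) (contY cpd1Dv x1)).symm
  have GB : (∫ x in x0..x1, g2B x * Dv x y0) = ∫ x in x0..x1, pd2 u x y0 * Dv x y0 :=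
    (edge_replace hg2B (contX cpd2u y0) (hcDv.isPk_x y0) (contX cDvc y0)).symm
  have GT : (∫ x in x0..x1, g2T x * Dv x y1) = ∫ x in x0..x1, pd2 u x y1 * Dv x y1 :=
    (edge_replace hg2T (contX cpd2u y1) (hcDv.isPk_x y1) (contX cDvc y1)).symm
  have GL : (∫ y in y0..y1, g1L y * Dv x0 y) = ∫ y in y0..y1, pd1 u x0 y * Dv x0 y :=
    (edge_replace hg1L (contY cpd1u x0) (hcDv.isPk_y x0) (contY cDvc x0)).symm
  have GR : (∫ y in y0..y1, g1R y * Dv x1 y) = ∫ y in y0..y1, pd1 u x1 y * Dv x1 y :=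
    (edge_replace hg1R (contY cpd1u x1) (hcDv.isPk_y x1) (contY cDvc x1)).symm
  -- splitting of the boundary differences on the v-side
  have S1 : (∫ x in x0..x1, (v0 x y0 - vbB x) * pd2 P0Lu x y0)
      = (∫ x in x0..x1, v0 x y0 * pd2 P0Lu x y0) - ∫ x in x0..x1, vbB x * pd2 P0Lu x y0 :=
    edge_sub hvbB.1 (contX cv0c y0) (contX cpd2P y0)
  have S2 : (∫ x in x0..x1, (v0 x y1 - vbT x) * pd2 P0Lu x y1)
      = (∫ x in x0..x1, v0 x y1 * pd2 P0Lu x y1) - ∫ x in x0..x1, vbT x * pd2 P0Lu x y1 :=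
    edge_sub hvbT.1 (contX cv0c y1) (contX cpd2P y1)
  have S3 : (∫ y in y0..y1, (v0 x0 y - vbL y) * pd1 P0Lu x0 y)
      = (∫ y in y0..y1, v0 x0 y * pd1 P0Lu x0 y) - ∫ y in y0..y1, vbL y * pd1 P0Lu x0 y :=
    edge_sub hvbL.1 (contY cv0c x0) (contY cpd1P x0)
  have S4 : (∫ y in y0..y1, (v0 x1 y - vbR y) * pd1 P0Lu x1 y)
      = (∫ y in y0..y1, v0 x1 y * pd1 P0Lu x1 y) - ∫ y in y0..y1, vbR y * pd1 P0Lu x1 y :=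
    edge_sub hvbR.1 (contY cv0c x1) (contY cpd1P x1)
  have S5 : (∫ x in x0..x1, (pd2 v0 x y0 - vg2B x) * P0Lu x y0)
      = (∫ x in x0..x1, pd2 v0 x y0 * P0Lu x y0) - ∫ x in x0..x1, vg2B x * P0Lu x y0 :=
    edge_sub hvg2B.1 (contX cpd2v0 y0) (contX cPc y0)
  have S6 : (∫ x in x0..x1, (pd2 v0 x y1 - vg2T x) * P0Lu x y1)
      = (∫ x in x0..x1, pd2 v0 x y1 * P0Lu x y1) - ∫ x in x0..x1, vg2T x * P0Lu x y1 :=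
    edge_sub hvg2T.1 (contX cpd2v0 y1) (contX cPc y1)
  have S7 : (∫ y in y0..y1, (pd1 v0 x0 y - vg1L y) * P0Lu x0 y)
      = (∫ y in y0..y1, pd1 v0 x0 y * P0Lu x0 y) - ∫ y in y0..y1, vg1L y * P0Lu x0 y :=
    edge_sub hvg1L.1 (contY cpd1v0 x0) (contY cPc x0)
  have S8 : (∫ y in y0..y1, (pd1 v0 x1 y - vg1R y) * P0Lu x1 y)
      = (∫ y in y0..y1, pd1 v0 x1 y * P0Lu x1 y) - ∫ y in y0..y1, vg1R y * P0Lu x1 y :=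
    edge_sub hvg1R.1 (contY cpd1v0 x1) (contY cPc x1)
  simp only [mul_neg, neg_mul, intervalIntegral.integral_neg] at E1 E2 G1 G2 ⊢
  linarith
end
end
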